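/- arXiv:1807.06327 — 5 statements merged into one kernel-verified Lean document; each statement's English description precedes it below -/
import Mathlib

section
/- Let P be a strongly blocked lattice-free polytope in ℝ^d. Then the integer hull P_I = conv(P ∩ ℤ^d) belongs to L^d, i.e., P_I is an integral lattice-free polytope not properly contained in any integral lattice-free polytope. Furthermore, if P is not integral, then P_I does not belong to M^d, i.e., P_I is properly contained in some lattice-free set. -/
open scoped BigOperators

noncomputable section

/-- A point of `ℝ^d` is integral if all its coordinates are integers. -/
def IsIntegralPoint {d : ℕ} (x : Fin d → ℝ) : Prop := ∀ i, ∃ n : ℤ, x i = (n : ℝ)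

/-- The set `ℤ^d` of integral points of `ℝ^d`. -/
def latticePts (d : ℕ) : Set (Fin d → ℝ) := {x | IsIntegralPoint x}

/-- A set `K ⊆ ℝ^d` is lattice-free if it is closed, convex, `d`-dimensional (nonempty
interior) and its interior contains no integral point. -/
def IsLatticeFree {d : ℕ} (K : Set (Fin d → ℝ)) : Prop :=
  IsClosed K ∧ Convex ℝ K ∧ (interior K).Nonempty ∧ interior K ∩ latticePts d = ∅

/-- A set is maximal lattice-free if it is lattice-free and not properly contained in
another lattice-free set. -/
def IsMaxLatticeFree {d : ℕ} (K : Set (Fin d → ℝ)) : Prop :=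
  IsLatticeFree K ∧ ∀ K' : Set (Fin d → ℝ), IsLatticeFree K' → K ⊆ K' → K = K'

/-- A polytope is the convex hull of a finite set of points. -/
def IsPolytope {d : ℕ} (P : Set (Fin d → ℝ)) : Prop :=
  ∃ V : Finset (Fin d → ℝ), P = convexHull ℝ (V : Set (Fin d → ℝ))

/-- A polyhedron is a finite intersection of closed halfspaces. -/
def IsPolyhedron {d : ℕ} (P : Set (Fin d → ℝ)) : Prop :=
  ∃ (n : ℕ) (c : Fin n → (Fin d → ℝ)) (b : Fin n → ℝ),
    P = {x | ∀ j, ∑ i, c j i * x i ≤ b j}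

/-- The integer hull of a set: the convex hull of its integral points. -/
def intHull {d : ℕ} (K : Set (Fin d → ℝ)) : Set (Fin d → ℝ) :=
  convexHull ℝ (K ∩ latticePts d)

/-- A polytope is integral if it is the convex hull of its integral points. -/
def IsIntegralPolytope {d : ℕ} (P : Set (Fin d → ℝ)) : Prop :=
  IsPolytope P ∧ P = intHull P

/-- A facet of a `d`-dimensional closed convex set in `ℝ^d` : a nonempty exposed face of
dimension `d - 1`. -/
def IsFacet {d : ℕ} (P F : Set (Fin d → ℝ)) : Prop :=
  IsExposed ℝ P F ∧ F.Nonempty ∧ Module.finrank ℝ (vectorSpan ℝ F) + 1 = d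

/-- A facet is blocked if its relative interior contains an integral point. -/
def IsBlocked {d : ℕ} (F : Set (Fin d → ℝ)) : Prop :=
  ∃ x ∈ intrinsicInterior ℝ F, IsIntegralPoint x

/-- A facet `F` of a `d`-dimensional lattice-free polyhedron in `ℝ^d` is strongly blocked
if its integer hull is `(d-1)`-dimensional and the relative interior of the integer hull
contains an integral point. -/
def IsStronglyBlockedFacet {d : ℕ} (P F : Set (Fin d → ℝ)) : Prop :=
  IsFacet P F ∧ Module.finrank ℝ (vectorSpan ℝ (intHull F)) + 1 = d ∧
    ∃ x ∈ intrinsicInterior ℝ (intHull F), IsIntegralPoint x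

/-- A polyhedron is strongly blocked if all its facets are strongly blocked. -/
def IsStronglyBlocked {d : ℕ} (P : Set (Fin d → ℝ)) : Prop :=
  ∀ F, IsFacet P F → IsStronglyBlockedFacet P F

/-- Membership in the family `L^d` of weakly maximal integral lattice-free polytopes:
integral lattice-free polytopes not properly contained in another integral
lattice-free polytope. -/
def MemL {d : ℕ} (P : Set (Fin d → ℝ)) : Prop :=
  IsIntegralPolytope P ∧ IsLatticeFree P ∧
    ∀ Q : Set (Fin d → ℝ), IsIntegralPolytope Q → IsLatticeFree Q → P ⊆ Q → P = Q

/-- Membership in the family `M^d` of strongly maximal integral lattice-free polytopes: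
integral lattice-free polytopes not properly contained in another lattice-free set. -/
def MemM {d : ℕ} (P : Set (Fin d → ℝ)) : Prop :=
  IsIntegralPolytope P ∧ IsLatticeFree P ∧
    ∀ K : Set (Fin d → ℝ), IsLatticeFree K → P ⊆ K → P = K

/-- An affine transformation of `ℝ^d` is unimodular if it maps `ℤ^d` onto `ℤ^d`. -/
def IsUnimodular {d : ℕ} (A : (Fin d → ℝ) ≃ᵃ[ℝ] (Fin d → ℝ)) : Prop :=
  A '' latticePts d = latticePts d

/-- The relation on subsets of `ℝ^d` of coinciding up to an affine unimodular
transformation. -/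
def UnimodEquiv {d : ℕ} (P Q : Set (Fin d → ℝ)) : Prop :=
  ∃ A : (Fin d → ℝ) ≃ᵃ[ℝ] (Fin d → ℝ), IsUnimodular A ∧ Q = A '' P

/-- `κ(a) = 1/a₁ + ⋯ + 1/a_d`. -/
def kappa {d : ℕ} (a : Fin d → ℝ) : ℝ := ∑ i, (a i)⁻¹

/-- The axis-aligned simplex `T(a) = conv {0, a₁ e₁, …, a_d e_d}`. -/
def axisSimplex {d : ℕ} (a : Fin d → ℝ) : Set (Fin d → ℝ) :=
  convexHull ℝ (insert 0 (Set.range fun i => a i • (Pi.single i 1 : Fin d → ℝ)))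

/-- The map `φ` replacing the last component `t` by `t+1, t(t+1)`. -/
def phiMap {d : ℕ} (a : Fin (d + 1) → ℝ) : Fin (d + 2) → ℝ :=
  Fin.snoc (Fin.snoc (Fin.init a) (a (Fin.last d) + 1))
    (a (Fin.last d) * (a (Fin.last d) + 1))

/-- The map `ψ` replacing the last component `t` by
`t+3, t(t+1), (t+1)(t+3), (t+1)(t+3)`. -/
def psiMap {d : ℕ} (a : Fin (d + 1) → ℝ) : Fin (d + 4) → ℝ :=
  Fin.snoc (Fin.snoc (Fin.snoc (Fin.snoc (Fin.init a) (a (Fin.last d) + 3))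
    (a (Fin.last d) * (a (Fin.last d) + 1)))
    ((a (Fin.last d) + 1) * (a (Fin.last d) + 3)))
    ((a (Fin.last d) + 1) * (a (Fin.last d) + 3))

/-- The map `ξ` replacing the last component `t` by `(3/2)t, 3t`. -/
def xiMap {d : ℕ} (a : Fin (d + 1) → ℝ) : Fin (d + 2) → ℝ :=
  Fin.snoc (Fin.snoc (Fin.init a) (3 / 2 * a (Fin.last d))) (3 * a (Fin.last d))

/-- The composition `η = ξ ∘ ψ ∘ φ`. -/
def etaMap {d : ℕ} (a : Fin (d + 1) → ℝ) : Fin (d + 6) → ℝ :=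
  xiMap (psiMap (phiMap a))

/-- The set `A_d` of representations of `1` as a sum of `d` Egyptian fractions,
with components sorted in ascending order. -/
def EgyptSet (d : ℕ) : Set (Fin d → ℕ) :=
  {a | (∀ i, 0 < a i) ∧ Monotone a ∧ ∑ i, ((a i : ℝ))⁻¹ = 1}

end

section SB
open Module Set

variable {d : ℕ}

lemma sb_lattice_finite {K : Set (Fin d → ℝ)} (hK : IsCompact K) : (K ∩ latticePts d).Finite := by
  obtain ⟨r, hr⟩ := (Metric.isBounded_iff_subset_closedBall 0).1 hK.isBounded
  have : (K ∩ latticePts d) ⊆ (fun n : Fin d → ℤ => fun i => (n i : ℝ)) ''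
      {n : Fin d → ℤ | ∀ i, n i ∈ Finset.Icc (-⌈r⌉) ⌈r⌉} := by
    rintro x ⟨hxK, hxL⟩
    choose n hn using hxL
    refine ⟨n, fun i => ?_, by funext i; exact (hn i).symm⟩
    have h1 : ‖x i‖ ≤ r := le_trans (norm_le_pi_norm x i) (by
      simpa [dist_eq_norm] using Metric.mem_closedBall.1 (hr hxK))
    rw [hn i] at h1
    have : |(n i : ℝ)| ≤ (⌈r⌉ : ℝ) := le_trans (by simpa using h1) (Int.le_ceil r)
    rw [← Int.cast_abs, Int.cast_le] at this
    simp [Finset.mem_Icc, abs_le.1 this]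
  refine Set.Finite.subset (Set.Finite.image _ ?_) this
  have : {n : Fin d → ℤ | ∀ i, n i ∈ Finset.Icc (-⌈r⌉) ⌈r⌉} ⊆
      Set.pi Set.univ (fun _ => (Finset.Icc (-⌈r⌉) ⌈r⌉ : Set ℤ)) := by
    intro n hn i _; exact hn i
  exact Set.Finite.subset (Set.Finite.pi (fun i => (Finset.Icc (-⌈r⌉) ⌈r⌉).finite_toSet)) this

lemma sb_vectorSpan_le_ker {S : Set (Fin d → ℝ)} {g : (Fin d → ℝ) →ₗ[ℝ] ℝ} {G : ℝ}
    (h : ∀ x ∈ S, g x = G) : vectorSpan ℝ S ≤ LinearMap.ker g := by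
  rw [vectorSpan_def]
  refine Submodule.span_le.2 ?_
  rintro v ⟨x, hx, y, hy, rfl⟩
  simp [LinearMap.mem_ker, vsub_eq_sub, map_sub, h x hx, h y hy]

lemma sb_finrank_ker {g : (Fin d → ℝ) →ₗ[ℝ] ℝ} (hg : g ≠ 0) :
    finrank ℝ (LinearMap.ker g) + 1 = d := by
  have := Module.Dual.finrank_ker_add_one_of_ne_zero (f := g) hg
  simpa using this

lemma sb_exists_functional {W : Submodule ℝ (Fin d → ℝ)} {v : Fin d → ℝ} (hv : v ∉ W) :
    ∃ h : (Fin d → ℝ) →ₗ[ℝ] ℝ, (∀ w ∈ W, h w = 0) ∧ h v ≠ 0 := by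
  have hq : W.mkQ v ≠ 0 := by
    simpa [Submodule.Quotient.mk_eq_zero] using hv
  have : ¬ ∀ φ : Module.Dual ℝ ((Fin d → ℝ) ⧸ W), φ (W.mkQ v) = 0 := by
    rw [Module.forall_dual_apply_eq_zero_iff]; exact hq
  push_neg at this
  obtain ⟨φ, hφ⟩ := this
  exact ⟨φ.comp W.mkQ, fun w hw => by simp [Submodule.Quotient.mk_eq_zero, hw,
    (Submodule.Quotient.mk_eq_zero W).2 hw], hφ⟩

lemma sb_improve {V : Finset (Fin d → ℝ)} {P : Set (Fin d → ℝ)}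
    (hPV : P = convexHull ℝ (V : Set (Fin d → ℝ)))
    (hfull : affineSpan ℝ P = ⊤) {z : Fin d → ℝ}
    (g : (Fin d → ℝ) →ₗ[ℝ] ℝ) (G : ℝ)
    (hle : ∀ x ∈ P, g x ≤ G) (hatt : ∃ p ∈ P, g p = G) (hz : G < g z)
    (hk : finrank ℝ (vectorSpan ℝ (P ∩ {x | g x = G})) + 1 < d) :
    ∃ (g' : (Fin d → ℝ) →ₗ[ℝ] ℝ) (G' : ℝ),
      (∀ x ∈ P, g' x ≤ G') ∧ (∃ p ∈ P, g' p = G') ∧ G' < g' z ∧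
      finrank ℝ (vectorSpan ℝ (P ∩ {x | g x = G})) <
        finrank ℝ (vectorSpan ℝ (P ∩ {x | g' x = G'})) := by
  classical
  obtain ⟨p, hpP, hpG⟩ := hatt
  set F : Set (Fin d → ℝ) := P ∩ {x | g x = G} with hF
  have hpF : p ∈ F := ⟨hpP, hpG⟩
  set W : Submodule ℝ (Fin d → ℝ) := vectorSpan ℝ F ⊔ (ℝ ∙ (z - p)) with hW
  have hzp : z - p ≠ 0 := by
    intro h
    rw [sub_eq_zero] at h
    rw [h] at hz; rw [hpG] at hz; exact lt_irrefl _ hz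
  have hWrank : finrank ℝ W < d := by
    have h2 := Submodule.finrank_sup_add_finrank_inf_eq (vectorSpan ℝ F) (ℝ ∙ (z - p))
    rw [finrank_span_singleton hzp] at h2
    rw [hW]
    omega
  -- find a vertex outside W
  have hVne : ∃ v ∈ V, v - p ∉ W := by
    by_contra hc
    push_neg at hc
    have hV_le : vectorSpan ℝ (V : Set (Fin d → ℝ)) ≤ W := by
      rw [vectorSpan_def]
      refine Submodule.span_le.2 ?_
      rintro u ⟨x, hx, y, hy, rfl⟩
      show x -ᵥ y ∈ W
      have hxy : x -ᵥ y = (x - p) - (y - p) := by rw [vsub_eq_sub]; abel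
      rw [hxy]
      exact Submodule.sub_mem _ (hc x hx) (hc y hy)
    have htop : vectorSpan ℝ (V : Set (Fin d → ℝ)) = ⊤ := by
      have h2 : affineSpan ℝ (V : Set (Fin d → ℝ)) = ⊤ := by
        rw [← affineSpan_convexHull, ← hPV]; exact hfull
      have h3 := AffineSubspace.direction_eq_top_iff_of_nonempty
        (s := affineSpan ℝ (V : Set (Fin d → ℝ)))
        (((affineSpan ℝ (V : Set (Fin d → ℝ))).nonempty_iff_ne_bot).2 (by rw [h2]; simp))
      rw [direction_affineSpan] at h3
      rw [h3, h2]
    rw [htop, top_le_iff] at hV_le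
    have : finrank ℝ W = d := by rw [hV_le]; simp [finrank_top]
    omega
  obtain ⟨v₀, hv₀V, hv₀W⟩ := hVne
  obtain ⟨h0, hh0W, hh0v₀⟩ := sb_exists_functional hv₀W
  have key : ∀ h : (Fin d → ℝ) →ₗ[ℝ] ℝ, (∀ w ∈ W, h w = 0) → 0 < h (v₀ - p) →
      ∃ (g' : (Fin d → ℝ) →ₗ[ℝ] ℝ) (G' : ℝ),
      (∀ x ∈ P, g' x ≤ G') ∧ (∃ p ∈ P, g' p = G') ∧ G' < g' z ∧
      finrank ℝ (vectorSpan ℝ F) < finrank ℝ (vectorSpan ℝ (P ∩ {x | g' x = G'})) := by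
    intro h hhW hpos
    have hFW : vectorSpan ℝ F ≤ W := le_sup_left
    have hmemF_h : ∀ x ∈ F, h (x - p) = 0 := fun x hx =>
      hhW _ (hFW (vsub_mem_vectorSpan ℝ hx hpF))
    set T : Finset (Fin d → ℝ) := V.filter (fun v => 0 < h (v - p)) with hT
    have hTne : T.Nonempty := ⟨v₀, by rw [hT, Finset.mem_filter]; exact ⟨hv₀V, hpos⟩⟩
    have hTlt : ∀ v ∈ T, g v < G := by
      intro v hv
      rw [hT, Finset.mem_filter] at hv
      have hvP : v ∈ P := by rw [hPV]; exact subset_convexHull ℝ _ hv.1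
      rcases lt_or_eq_of_le (hle v hvP) with h' | h'
      · exact h'
      · exact absurd (hmemF_h v ⟨hvP, h'⟩) (by linarith [hv.2])
    set t : ℝ := T.inf' hTne (fun v => (G - g v) / h (v - p)) with ht
    have htpos : 0 < t := by
      rw [ht]
      refine (Finset.lt_inf'_iff hTne).2 fun v hv => div_pos (sub_pos.2 (hTlt v hv)) ?_
      rw [hT, Finset.mem_filter] at hv; exact hv.2
    set g' : (Fin d → ℝ) →ₗ[ℝ] ℝ := g + t • h with hg'
    set G' : ℝ := G + t * h p with hG'
    -- vertex bound
    have hVbound : ∀ v ∈ V, g' v ≤ G' := by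
      intro v hv
      have hvP : v ∈ P := by rw [hPV]; exact subset_convexHull ℝ _ hv
      rcases le_or_gt (h (v - p)) 0 with hcase | hcase
      · have : g' v = g v + t * (h (v - p)) + t * h p := by
          simp [hg', map_sub]; ring
        rw [this, hG']
        have := hle v hvP
        nlinarith
      · have hvT : v ∈ T := by rw [hT, Finset.mem_filter]; exact ⟨hv, hcase⟩
        have h1 : t ≤ (G - g v) / h (v - p) := Finset.inf'_le _ hvT
        have h2 : t * h (v - p) ≤ G - g v := by
          rw [le_div_iff₀ hcase] at h1; linarith
        have : g' v = g v + t * (h (v - p)) + t * h p := by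
          simp [hg', map_sub]; ring
        rw [this, hG']
        linarith
    have hle' : ∀ x ∈ P, g' x ≤ G' := by
      intro x hx
      rw [hPV] at hx
      have hsub : (V : Set (Fin d → ℝ)) ⊆ {x | g' x ≤ G'} := fun v hv => hVbound v hv
      exact convexHull_min hsub (convex_halfSpace_le (LinearMap.isLinear g') G') hx
    -- attainment at minimizer
    obtain ⟨v₁, hv₁T, hv₁eq⟩ := Finset.exists_mem_eq_inf' hTne (fun v => (G - g v) / h (v - p))
    have hv₁pos : 0 < h (v₁ - p) := by
      rw [hT, Finset.mem_filter] at hv₁T; exact hv₁T.2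
    have hv₁V : v₁ ∈ V := by rw [hT, Finset.mem_filter] at hv₁T; exact hv₁T.1
    have hv₁P : v₁ ∈ P := by rw [hPV]; exact subset_convexHull ℝ _ hv₁V
    have hv₁att : g' v₁ = G' := by
      have h1 : t * h (v₁ - p) = G - g v₁ := by
        rw [ht, hv₁eq, div_mul_cancel₀ _ (ne_of_gt hv₁pos)]
      have : g' v₁ = g v₁ + t * (h (v₁ - p)) + t * h p := by
        simp [hg', map_sub]; ring
      rw [this, h1, hG']; ring
    -- z still violated
    have hz' : G' < g' z := by
      have hzW : z - p ∈ W := Submodule.mem_sup_right (Submodule.mem_span_singleton_self _)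
      have h1 : h z = h p := by
        have := hhW _ hzW; rw [map_sub] at this; linarith
      have : g' z = g z + t * h p := by simp [hg', h1]
      rw [this, hG']; linarith
    -- rank increase
    refine ⟨g', G', hle', ⟨v₁, hv₁P, hv₁att⟩, hz', ?_⟩
    have hFsub : F ⊆ P ∩ {x | g' x = G'} := by
      rintro x ⟨hxP, hxG⟩
      have h1 : h x = h p := by
        have := hmemF_h x ⟨hxP, hxG⟩; rw [map_sub] at this; linarith
      refine ⟨hxP, ?_⟩
      show g x + t * h x = G'
      rw [h1, hxG, hG']
    have hlt : vectorSpan ℝ F < vectorSpan ℝ (P ∩ {x | g' x = G'}) := by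
      refine lt_of_le_of_ne (vectorSpan_mono ℝ hFsub) fun heq => ?_
      have hv₁mem : v₁ - p ∈ vectorSpan ℝ (P ∩ {x | g' x = G'}) := by
        have hpmem : p ∈ P ∩ {x | g' x = G'} := hFsub hpF
        simpa [vsub_eq_sub] using vsub_mem_vectorSpan ℝ
          (show v₁ ∈ P ∩ {x | g' x = G'} from ⟨hv₁P, hv₁att⟩) hpmem
      rw [← heq] at hv₁mem
      have hcontra := hhW _ (hFW hv₁mem)
      linarith
    exact Submodule.finrank_lt_finrank_of_lt hlt
  rcases lt_or_gt_of_ne hh0v₀ with hneg | hposi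
  · refine key (-h0) (fun w hw => by simp [hh0W w hw]) (by simpa using hneg)
  · exact key h0 hh0W hposi

lemma sb_g_ne_zero {g : (Fin d → ℝ) →ₗ[ℝ] ℝ} {G : ℝ} {P : Set (Fin d → ℝ)} {z : Fin d → ℝ}
    (hatt : ∃ p ∈ P, g p = G) (hz : G < g z) : g ≠ 0 := by
  rintro rfl
  obtain ⟨p, -, hp⟩ := hatt
  simp [← hp] at hz

lemma sb_rank_bound {g : (Fin d → ℝ) →ₗ[ℝ] ℝ} {G : ℝ} {P : Set (Fin d → ℝ)} {z : Fin d → ℝ}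
    (hatt : ∃ p ∈ P, g p = G) (hz : G < g z) :
    finrank ℝ (vectorSpan ℝ (P ∩ {x | g x = G})) + 1 ≤ d := by
  have hg := sb_g_ne_zero hatt hz
  have h1 : vectorSpan ℝ (P ∩ {x | g x = G}) ≤ LinearMap.ker g :=
    sb_vectorSpan_le_ker (fun x hx => hx.2)
  have h3 := Submodule.finrank_mono h1
  have h2 := sb_finrank_ker hg
  omega

lemma sb_grow {V : Finset (Fin d → ℝ)} {P : Set (Fin d → ℝ)}
    (hPV : P = convexHull ℝ (V : Set (Fin d → ℝ)))
    (hfull : affineSpan ℝ P = ⊤) {z : Fin d → ℝ} (n : ℕ) :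
    ∀ (g : (Fin d → ℝ) →ₗ[ℝ] ℝ) (G : ℝ),
      (∀ x ∈ P, g x ≤ G) → (∃ p ∈ P, g p = G) → G < g z →
      d ≤ finrank ℝ (vectorSpan ℝ (P ∩ {x | g x = G})) + 1 + n →
      ∃ (g' : (Fin d → ℝ) →ₗ[ℝ] ℝ) (G' : ℝ),
        (∀ x ∈ P, g' x ≤ G') ∧ (∃ p ∈ P, g' p = G') ∧ G' < g' z ∧
        finrank ℝ (vectorSpan ℝ (P ∩ {x | g' x = G'})) + 1 = d := by
  induction n with
  | zero =>
    intro g G hle hatt hz hn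
    exact ⟨g, G, hle, hatt, hz, le_antisymm (sb_rank_bound hatt hz) (by omega)⟩
  | succ n ih =>
    intro g G hle hatt hz hn
    rcases eq_or_lt_of_le (sb_rank_bound hatt hz) with heq | hlt
    · exact ⟨g, G, hle, hatt, hz, heq⟩
    · obtain ⟨g', G', hle', hatt', hz', hrk⟩ := sb_improve hPV hfull g G hle hatt hz hlt
      exact ih g' G' hle' hatt' hz' (by omega)

lemma sb_facet_exists {V : Finset (Fin d → ℝ)} {P : Set (Fin d → ℝ)}
    (hPV : P = convexHull ℝ (V : Set (Fin d → ℝ)))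
    (hfull : affineSpan ℝ P = ⊤) {z : Fin d → ℝ} (hzP : z ∉ P) (hVne : V.Nonempty) :
    ∃ (g : (Fin d → ℝ) →ₗ[ℝ] ℝ) (G : ℝ),
      (∀ x ∈ P, g x ≤ G) ∧ (∃ p ∈ P, g p = G) ∧ G < g z ∧
      finrank ℝ (vectorSpan ℝ (P ∩ {x | g x = G})) + 1 = d := by
  classical
  have hPcl : IsClosed P := by
    rw [hPV]; exact (V.finite_toSet.isCompact_convexHull ℝ).isClosed
  have hPcx : Convex ℝ P := by rw [hPV]; exact convex_convexHull ℝ _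
  obtain ⟨f, u, hf1, hf2⟩ := geometric_hahn_banach_closed_point hPcx hPcl hzP
  set g : (Fin d → ℝ) →ₗ[ℝ] ℝ := (f : (Fin d → ℝ) →L[ℝ] ℝ).toLinearMap with hg
  obtain ⟨v₁, hv₁V, hv₁eq⟩ := Finset.exists_mem_eq_sup' hVne (fun v => g v)
  set G : ℝ := V.sup' hVne (fun v => g v) with hG
  have hle : ∀ x ∈ P, g x ≤ G := by
    intro x hx
    rw [hPV] at hx
    refine convexHull_min (fun v hv => ?_) (convex_halfSpace_le (LinearMap.isLinear g) G) hx
    exact Finset.le_sup' (fun v => g v) hv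
  have hatt : ∃ p ∈ P, g p = G := by
    refine ⟨v₁, by rw [hPV]; exact subset_convexHull ℝ _ hv₁V, hv₁eq.symm⟩
  have hz : G < g z := by
    have h1 : g v₁ < u := hf1 v₁ (by rw [hPV]; exact subset_convexHull ℝ _ hv₁V)
    have : G = g v₁ := hv₁eq
    rw [this]
    exact lt_trans h1 hf2
  exact sb_grow hPV hfull d g G hle hatt hz (by omega)

lemma sb_interior_lt {P : Set (Fin d → ℝ)} {g : (Fin d → ℝ) →ₗ[ℝ] ℝ} {G : ℝ}
    (hle : ∀ x ∈ P, g x ≤ G) (hg : g ≠ 0) {x₀ : Fin d → ℝ}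
    (hx₀ : x₀ ∈ interior P) : g x₀ < G := by
  obtain ⟨v, hv⟩ : ∃ v, g v ≠ 0 := by
    by_contra hc; push_neg at hc; exact hg (LinearMap.ext hc)
  have hv0 : v ≠ 0 := fun h => hv (by rw [h]; simp)
  obtain ⟨ε, hε, hball⟩ := Metric.mem_nhds_iff.1 (mem_interior_iff_mem_nhds.1 hx₀)
  -- choose sign
  rcases lt_or_gt_of_ne hv with hneg | hpos
  all_goals {
    first
    | (set u : Fin d → ℝ := -v with hu; have hgu : 0 < g u := by simp [hu]; linarith)
    | (set u : Fin d → ℝ := v with hu; have hgu : 0 < g u := hpos)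
    have hu0 : u ≠ 0 := by
      intro h; rw [h] at hgu; simp at hgu
    have hnorm : 0 < ‖u‖ := norm_pos_iff.2 hu0
    set c : ℝ := ε / (2 * ‖u‖) with hc
    have hc0 : 0 < c := by positivity
    have hmem : x₀ + c • u ∈ P := by
      apply hball
      rw [Metric.mem_ball, dist_eq_norm]
      have : x₀ + c • u - x₀ = c • u := by abel
      rw [this, norm_smul, Real.norm_eq_abs, abs_of_pos hc0]
      have hcu : c * ‖u‖ = ε / 2 := by rw [hc]; field_simp
      rw [hcu]; linarith
    have := hle _ hmem
    rw [map_add, map_smul, smul_eq_mul] at this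
    nlinarith
  }

lemma sb_affspan_mem {S : Set (Fin d → ℝ)} {g : (Fin d → ℝ) →ₗ[ℝ] ℝ} {G : ℝ}
    (hS : ∀ x ∈ S, g x = G) (hrank : finrank ℝ (vectorSpan ℝ S) + 1 = d)
    (hg : g ≠ 0) {p : Fin d → ℝ} (hp : p ∈ S) {x : Fin d → ℝ} (hx : g x = G) :
    x ∈ affineSpan ℝ S := by
  have h1 : vectorSpan ℝ S ≤ LinearMap.ker g := sb_vectorSpan_le_ker hS
  have h2 : finrank ℝ (LinearMap.ker g) + 1 = d := sb_finrank_ker hg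
  have h3 : vectorSpan ℝ S = LinearMap.ker g :=
    Submodule.eq_of_le_of_finrank_le h1 (by omega)
  have h4 : x - p ∈ vectorSpan ℝ S := by
    rw [h3, LinearMap.mem_ker, map_sub, hx, hS p hp, sub_self]
  have h5 := AffineSubspace.vadd_mem_of_mem_direction
    (by rw [direction_affineSpan]; exact h4) (mem_affineSpan ℝ hp)
  simpa [vadd_eq_add, sub_add_cancel] using h5

lemma sb_step {S : Set (Fin d → ℝ)} {g : (Fin d → ℝ) →ₗ[ℝ] ℝ} {G : ℝ} {y w : Fin d → ℝ} {ε : ℝ}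
    (hε : 0 < ε) (hball : ∀ x', g x' = G → dist x' y < ε → x' ∈ S)
    (hyG : g y = G) (hw : G < g w) :
    ∃ δ > 0, ∀ x, G ≤ g x → dist x y < δ → x ∈ convexHull ℝ (S ∪ {w}) := by
  obtain ⟨C, hC0, hCb⟩ : ∃ C, 0 ≤ C ∧ ∀ v, |g v| ≤ C * ‖v‖ := by
    refine ⟨‖LinearMap.toContinuousLinearMap g‖, norm_nonneg _, fun v => ?_⟩
    simpa [Real.norm_eq_abs] using (LinearMap.toContinuousLinearMap g).le_opNorm v
  set a : ℝ := g w - G with ha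
  have ha0 : 0 < a := by rw [ha]; linarith
  set M : ℝ := ‖w - y‖ with hM
  have hM0 : 0 ≤ M := norm_nonneg _
  set B : ℝ := 1 + (C / a) * M with hB
  clear_value a M
  have hB1 : 1 ≤ B := by
    rw [hB]
    have : 0 ≤ (C / a) * M := mul_nonneg (div_nonneg hC0 ha0.le) hM0
    linarith
  clear_value B
  refine ⟨min (a / (2 * C + 2)) (ε / (2 * B + 1)), lt_min (div_pos ha0 (by linarith)) (div_pos hε (by linarith)), ?_⟩
  intro x hx hdist
  set t : ℝ := (g x - G) / a with htdef
  clear_value t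
  have ht0 : 0 ≤ t := by rw [htdef]; exact div_nonneg (by linarith) ha0.le
  have hgbound : g x - G ≤ C * dist x y := by
    have hgxy : g x - G = g (x - y) := by simp [map_sub, hyG]
    rw [hgxy, dist_eq_norm]
    calc g (x - y) ≤ |g (x - y)| := le_abs_self _
    _ ≤ C * ‖x - y‖ := hCb _
  have hdist1 : dist x y < a / (2 * C + 2) := lt_of_lt_of_le hdist (min_le_left _ _)
  have hdist2 : dist x y < ε / (2 * B + 1) := lt_of_lt_of_le hdist (min_le_right _ _)
  have ht_half : t ≤ 1 / 2 := by
    rw [htdef, div_le_iff₀ ha0]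
    have h1 : C * dist x y ≤ C * (a / (2 * C + 2)) := by
      apply mul_le_mul_of_nonneg_left hdist1.le hC0
    have h2 : C * (a / (2 * C + 2)) ≤ a / 2 := by
      rw [mul_div_assoc', div_le_div_iff₀ (by positivity) (by norm_num : (0:ℝ) < 2)]
      nlinarith
    nlinarith
  have ht1 : 1 - t ≥ 1 / 2 := by linarith
  have ht1ne : (1 : ℝ) - t ≠ 0 := by linarith
  set s : Fin d → ℝ := (1 - t)⁻¹ • (x - t • w) with hs
  clear_value s
  have hta : t * a = g x - G := by rw [htdef]; exact div_mul_cancel₀ _ (ne_of_gt ha0)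
  have hgs : g s = G := by
    have h1 : g s = (1 - t)⁻¹ * (g x - t * g w) := by
      rw [hs]; simp [map_sub, map_smul, smul_eq_mul]
    rw [h1, inv_mul_eq_div, div_eq_iff ht1ne]
    have hgw : g w = G + a := by rw [ha]; ring
    rw [hgw]
    nlinarith [hta]
  have hsy : s - y = (1 - t)⁻¹ • ((x - y) - t • (w - y)) := by
    rw [hs]
    have h9 : ((1:ℝ) - t)⁻¹ • ((1 - t) • y) = y := by
      rw [smul_smul, inv_mul_cancel₀ ht1ne, one_smul]
    conv_lhs => rw [← h9]
    module
  have hsdist : dist s y < ε := by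
    rw [dist_eq_norm, hsy]
    have h1 : ‖(1 - t)⁻¹ • ((x - y) - t • (w - y))‖ =
        |(1 - t)⁻¹| * ‖(x - y) - t • (w - y)‖ := by
      rw [norm_smul, Real.norm_eq_abs]
    rw [h1]
    have h2 : ‖(x - y) - t • (w - y)‖ ≤ dist x y + t * M := by
      calc ‖(x - y) - t • (w - y)‖ ≤ ‖x - y‖ + ‖t • (w - y)‖ := norm_sub_le _ _
      _ = dist x y + |t| * M := by rw [dist_eq_norm, norm_smul, Real.norm_eq_abs, hM]
      _ = dist x y + t * M := by rw [abs_of_nonneg ht0]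
    have h3 : |(1 - t)⁻¹| ≤ 2 := by
      rw [abs_of_nonneg (by positivity : (0:ℝ) ≤ (1 - t)⁻¹)]
      rw [inv_le_comm₀ (by linarith) (by norm_num)]
      linarith
    have h4 : t * M ≤ (C / a) * (M * dist x y) := by
      have ht4 : t ≤ (C / a) * dist x y := by
        rw [htdef, div_le_iff₀ ha0]
        calc g x - G ≤ C * dist x y := hgbound
        _ = C / a * dist x y * a := by field_simp
      calc t * M ≤ ((C / a) * dist x y) * M :=
        mul_le_mul_of_nonneg_right ht4 hM0
      _ = (C / a) * (M * dist x y) := by ring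
    have h5 : dist x y + t * M ≤ B * dist x y := by
      rw [hB, add_mul, one_mul, mul_assoc]
      linarith [h4]
    have h6 : |(1 - t)⁻¹| * ‖(x - y) - t • (w - y)‖ ≤ 2 * (B * dist x y) := by
      have hn : (0:ℝ) ≤ ‖(x - y) - t • (w - y)‖ := norm_nonneg _
      exact mul_le_mul h3 (h2.trans h5) hn (by norm_num)
    have h7 : 2 * (B * dist x y) < ε := by
      have h8 : dist x y * (2 * B + 1) < ε := by
        rw [← lt_div_iff₀ (by linarith)]; exact hdist2
      nlinarith [dist_nonneg (x := x) (y := y)]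
    linarith
  have hsS : s ∈ S := hball s hgs hsdist
  have hxcomb : x = (1 - t) • s + t • w := by
    rw [hs, smul_smul, mul_inv_cancel₀ ht1ne, one_smul]
    module
  rw [hxcomb]
  exact (convex_convexHull ℝ (S ∪ {w})) (subset_convexHull ℝ _ (Or.inl hsS))
    (subset_convexHull ℝ _ (Or.inr rfl)) (by linarith) ht0 (by ring)

lemma sb_relint_ball {S : Set (Fin d → ℝ)} {y : Fin d → ℝ}
    (hy : y ∈ intrinsicInterior ℝ S) :
    ∃ ε > 0, ∀ x ∈ affineSpan ℝ S, dist x y < ε → x ∈ S := by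
  obtain ⟨y', hy', hyy⟩ := hy
  obtain ⟨ε, hε, hball⟩ := Metric.mem_nhds_iff.1 (mem_interior_iff_mem_nhds.1 hy')
  refine ⟨ε, hε, fun x hx hdist => ?_⟩
  have : (⟨x, hx⟩ : affineSpan ℝ S) ∈ Metric.ball y' ε := by
    rw [Metric.mem_ball, Subtype.dist_eq, hyy]
    exact hdist
  exact hball this

lemma sb_interior_mem {S : Set (Fin d → ℝ)} {g : (Fin d → ℝ) →ₗ[ℝ] ℝ} {G : ℝ}
    {y z u : Fin d → ℝ} {ε : ℝ} (hε : 0 < ε)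
    (hball : ∀ x', g x' = G → dist x' y < ε → x' ∈ S)
    (hyG : g y = G) (hz : G < g z) (hu : g u < G) :
    y ∈ interior (convexHull ℝ (S ∪ {z, u})) := by
  obtain ⟨δ₁, hδ₁, hstep₁⟩ := sb_step hε hball hyG hz
  have hball' : ∀ x', (-g) x' = -G → dist x' y < ε → x' ∈ S := by
    intro x' hx' hd
    apply hball x' _ hd
    simpa [neg_eq_iff_eq_neg] using hx'
  have hyG' : (-g) y = -G := by simp [hyG]
  have hu' : -G < (-g) u := by simp; linarith
  obtain ⟨δ₂, hδ₂, hstep₂⟩ := sb_step hε hball' hyG' hu'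
  rw [mem_interior]
  refine ⟨Metric.ball y (min δ₁ δ₂), fun x hx => ?_, Metric.isOpen_ball,
    Metric.mem_ball_self (lt_min hδ₁ hδ₂)⟩
  rw [Metric.mem_ball] at hx
  have hsub1 : S ∪ {z} ⊆ S ∪ ({z, u} : Set (Fin d → ℝ)) :=
    union_subset_union_right S (by intro w hw; simp only [mem_singleton_iff] at hw; simp [hw])
  have hsub2 : S ∪ {u} ⊆ S ∪ ({z, u} : Set (Fin d → ℝ)) :=
    union_subset_union_right S (by intro w hw; simp only [mem_singleton_iff] at hw; simp [hw])
  rcases le_total G (g x) with hcase | hcase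
  · exact convexHull_mono hsub1 (hstep₁ x hcase (lt_of_lt_of_le hx (min_le_left _ _)))
  · have hcase' : -G ≤ (-g) x := by simp only [LinearMap.neg_apply]; linarith
    exact convexHull_mono hsub2 (hstep₂ x hcase' (lt_of_lt_of_le hx (min_le_right _ _)))

lemma sb_slice_span {g : (Fin d → ℝ) →ₗ[ℝ] ℝ} {G : ℝ} {y : Fin d → ℝ} {ε : ℝ}
    {S : Set (Fin d → ℝ)} (hε : 0 < ε) (hyG : g y = G)
    (hball : ∀ x, g x = G → dist x y < ε → x ∈ S) :
    LinearMap.ker g ≤ vectorSpan ℝ S := by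
  intro w hw
  rcases eq_or_ne w 0 with rfl | hw0
  · exact Submodule.zero_mem _
  have hnorm : 0 < ‖w‖ := norm_pos_iff.2 hw0
  set c : ℝ := ε / (2 * ‖w‖) with hc
  have hc0 : 0 < c := by positivity
  have hyS : y ∈ S := hball y hyG (by simpa using hε)
  have hx'S : y + c • w ∈ S := by
    apply hball
    · rw [map_add, map_smul, smul_eq_mul, LinearMap.mem_ker.1 hw, hyG]; ring
    · rw [dist_eq_norm]
      have h1 : y + c • w - y = c • w := by abel
      rw [h1, norm_smul, Real.norm_eq_abs, abs_of_pos hc0, hc]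
      have : ε / (2 * ‖w‖) * ‖w‖ = ε / 2 := by field_simp
      rw [this]; linarith
  have hmem : c • w ∈ vectorSpan ℝ S := by
    have := vsub_mem_vectorSpan ℝ hx'S hyS
    simpa [vsub_eq_sub, add_sub_cancel_left] using this
  have := (vectorSpan ℝ S).smul_mem c⁻¹ hmem
  rwa [smul_smul, inv_mul_cancel₀ (ne_of_gt hc0), one_smul] at this

lemma sb_prop {g g' : (Fin d → ℝ) →ₗ[ℝ] ℝ} (hg : g ≠ 0) (hg' : g' ≠ 0)
    (hker : LinearMap.ker g' ≤ LinearMap.ker g) :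
    ∃ lam : ℝ, ∀ x, g' x = lam * g x := by
  have hk1 : Module.finrank ℝ (LinearMap.ker g) + 1 = d := sb_finrank_ker hg
  have hk2 : Module.finrank ℝ (LinearMap.ker g') + 1 = d := sb_finrank_ker hg'
  have hkeq : LinearMap.ker g' = LinearMap.ker g :=
    Submodule.eq_of_le_of_finrank_le hker (by omega)
  obtain ⟨v, hv⟩ : ∃ v, g' v ≠ 0 := by
    by_contra hcon; push_neg at hcon; exact hg' (LinearMap.ext hcon)
  have hgv : g v ≠ 0 := by
    intro h
    have h1 : v ∈ LinearMap.ker g := LinearMap.mem_ker.2 h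
    rw [← hkeq, LinearMap.mem_ker] at h1
    exact hv h1
  refine ⟨g' v / g v, fun x => ?_⟩
  have hmem : x - (g x / g v) • v ∈ LinearMap.ker g := by
    rw [LinearMap.mem_ker, map_sub, map_smul, smul_eq_mul, div_mul_cancel₀ _ hgv, sub_self]
  rw [← hkeq, LinearMap.mem_ker, map_sub, map_smul, smul_eq_mul, sub_eq_zero] at hmem
  rw [hmem]; field_simp

lemma sb_package {d : ℕ} {P : Set (Fin d → ℝ)} {V : Finset (Fin d → ℝ)}
    (hPV : P = convexHull ℝ (V : Set (Fin d → ℝ))) (hVne : V.Nonempty)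
    (hfull : affineSpan ℝ P = ⊤) (hsb : IsStronglyBlocked P)
    {z : Fin d → ℝ} (hzP : z ∉ P) :
    ∃ (g : (Fin d → ℝ) →ₗ[ℝ] ℝ) (G : ℝ), g ≠ 0 ∧ (∀ x ∈ P, g x ≤ G) ∧ G < g z ∧
      ∃ y ε, 0 < ε ∧ IsIntegralPoint y ∧ g y = G ∧ y ∈ intHull P ∧
        ∀ x, g x = G → dist x y < ε → x ∈ intHull P := by
  obtain ⟨g, G, hle, hatt, hgz, hrank⟩ := sb_facet_exists hPV hfull hzP hVne
  have hg : g ≠ 0 := sb_g_ne_zero hatt hgz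
  set F := P ∩ {x | g x = G} with hF
  have hPconv : Convex ℝ P := by rw [hPV]; exact convex_convexHull ℝ _
  have hFconv : Convex ℝ F := hPconv.inter (convex_hyperplane (LinearMap.isLinear g) G)
  have hfacet : IsFacet P F := by
    refine ⟨fun _ => ⟨LinearMap.toContinuousLinearMap g, ?_⟩, ?_, hrank⟩
    · ext x
      constructor
      · rintro ⟨hxP, hxG⟩
        refine ⟨hxP, fun y hy => ?_⟩
        show g y ≤ g x
        rw [show g x = G from hxG]
        exact hle y hy
      · rintro ⟨hxP, hxmax⟩
        obtain ⟨p, hpP, hpG⟩ := hatt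
        refine ⟨hxP, le_antisymm (hle x hxP) ?_⟩
        have h1 : g p ≤ g x := hxmax p hpP
        rw [← hpG]; exact h1
    · obtain ⟨p, hpP, hpG⟩ := hatt; exact ⟨p, hpP, hpG⟩
  obtain ⟨-, hrank2, y, hyri, hyint⟩ := hsb F hfacet
  have hIHFF : intHull F ⊆ F := convexHull_min inter_subset_left hFconv
  have hS : ∀ x ∈ intHull F, g x = G := fun x hx => (hIHFF hx).2
  have hyF : y ∈ intHull F := intrinsicInterior_subset hyri
  have hsubP : intHull F ⊆ intHull P :=
    convexHull_mono (inter_subset_inter_left _ inter_subset_left)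
  obtain ⟨ε, hε, hball0⟩ := sb_relint_ball hyri
  refine ⟨g, G, hg, hle, hgz, y, ε, hε, hyint, hS y hyF, hsubP hyF, fun x hgx hd => ?_⟩
  exact hsubP (hball0 x (sb_affspan_mem hS hrank2 hg hyF hgx) hd)

lemma sb_outside {d : ℕ} {P : Set (Fin d → ℝ)} (hd : 0 < d) {r : ℝ}
    (hr : ∀ x ∈ P, ‖x‖ ≤ r) : (fun _ => |r| + 1 : Fin d → ℝ) ∉ P := by
  haveI : Nonempty (Fin d) := ⟨⟨0, hd⟩⟩
  intro hmem
  have h1 := hr _ hmem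
  rw [pi_norm_const, Real.norm_eq_abs, abs_of_nonneg (by positivity)] at h1
  linarith [le_abs_self r]

lemma sb_full {d : ℕ} {P : Set (Fin d → ℝ)} {V : Finset (Fin d → ℝ)} (hd : 0 < d)
    (hPV : P = convexHull ℝ (V : Set (Fin d → ℝ))) (hVne : V.Nonempty)
    (hPint : (interior P).Nonempty) (hsb : IsStronglyBlocked P) :
    (interior (intHull P)).Nonempty := by
  have hPconv : Convex ℝ P := by rw [hPV]; exact convex_convexHull ℝ _
  have hfull : affineSpan ℝ P = ⊤ :=
    (hPconv.interior_nonempty_iff_affineSpan_eq_top).1 hPint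
  obtain ⟨x₀, hx₀⟩ := hPint
  have hcomp : IsCompact P := by rw [hPV]; exact V.finite_toSet.isCompact_convexHull ℝ
  obtain ⟨r, hr⟩ := isBounded_iff_forall_norm_le.1 hcomp.isBounded
  have hzP : (fun _ => |r| + 1 : Fin d → ℝ) ∉ P := sb_outside hd hr
  set z : Fin d → ℝ := (fun _ => |r| + 1) with hzdef
  obtain ⟨g, G, hg, hle, hgz, y, ε, hε, hyint, hyG, hyPI, hball⟩ :=
    sb_package hPV hVne hfull hsb hzP
  have hx₀G : g x₀ < G := sb_interior_lt hle hg hx₀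
  have hx₀z : x₀ - z ≠ 0 := by
    intro h; rw [sub_eq_zero] at h; exact hzP (h ▸ interior_subset hx₀)
  have hnz : 0 < ‖x₀ - z‖ := norm_pos_iff.2 hx₀z
  set t : ℝ := (|r| + 1 + ‖x₀‖) / ‖x₀ - z‖ with ht
  have ht0 : 0 < t := div_pos (by positivity) hnz
  set z' : Fin d → ℝ := x₀ + t • (x₀ - z) with hz'
  have hz'P : z' ∉ P := by
    intro hmem
    have h2 : ‖z' - x₀‖ ≤ ‖z'‖ + ‖x₀‖ := norm_sub_le _ _
    have h3 : z' - x₀ = t • (x₀ - z) := by rw [hz']; abel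
    rw [h3, norm_smul, Real.norm_eq_abs, abs_of_pos ht0, ht,
      div_mul_cancel₀ _ (ne_of_gt hnz)] at h2
    have h4 := hr _ hmem
    have h5 := le_abs_self r
    linarith
  obtain ⟨g', G', hg', hle', hgz', y', ε', hε', hyint', hyG', hyPI', hball'⟩ :=
    sb_package hPV hVne hfull hsb hz'P
  have hq : ∃ q ∈ intHull P, g q ≠ G := by
    by_contra hcon
    push_neg at hcon
    have hker' : LinearMap.ker g' ≤ vectorSpan ℝ (intHull P) :=
      sb_slice_span hε' hyG' hball'
    have hker2 : vectorSpan ℝ (intHull P) ≤ LinearMap.ker g :=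
      sb_vectorSpan_le_ker hcon
    obtain ⟨lam, hlam⟩ := sb_prop hg hg' (le_trans hker' hker2)
    have hG' : G' = lam * G := by rw [← hyG', hlam, hcon y' hyPI']
    have hx₀G' : g' x₀ < G' := sb_interior_lt hle' hg' hx₀
    have hlam0 : 0 < lam := by
      rw [hlam, hG'] at hx₀G'
      nlinarith
    have h5 : g z' = g x₀ + t * (g x₀ - g z) := by
      rw [hz', map_add, map_smul, smul_eq_mul, map_sub]
    have hgz'lt : g z' < G := by nlinarith [mul_pos ht0 (sub_pos.2 (lt_trans hx₀G hgz))]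
    have h6 : g' z' < G' := by
      rw [hlam, hG']
      nlinarith
    linarith
  obtain ⟨q, hqPI, hqG⟩ := hq
  have hker : LinearMap.ker g ≤ vectorSpan ℝ (intHull P) := sb_slice_span hε hyG hball
  have hqy : q - y ∈ vectorSpan ℝ (intHull P) := by
    simpa [vsub_eq_sub] using vsub_mem_vectorSpan ℝ hqPI hyPI
  have hqyk : q - y ∉ LinearMap.ker g := by
    intro h
    rw [LinearMap.mem_ker, map_sub, hyG, sub_eq_zero] at h
    exact hqG h
  have hlt : LinearMap.ker g < vectorSpan ℝ (intHull P) :=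
    lt_of_le_of_ne hker (fun heq => hqyk (by rw [heq]; exact hqy))
  have h1 : finrank ℝ (LinearMap.ker g) + 1 = d := sb_finrank_ker hg
  have h2 := Submodule.finrank_lt_finrank_of_lt hlt
  have h3 : finrank ℝ (vectorSpan ℝ (intHull P)) ≤ d := by
    have h4 := Submodule.finrank_le (vectorSpan ℝ (intHull P))
    simpa using h4
  have htop : vectorSpan ℝ (intHull P) = ⊤ := by
    apply Submodule.eq_top_of_finrank_eq
    have h4 : finrank ℝ (Fin d → ℝ) = d := by simp
    omega
  have hspan : affineSpan ℝ (intHull P) = ⊤ := by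
    have hne : ((affineSpan ℝ (intHull P) : AffineSubspace ℝ (Fin d → ℝ)) :
        Set (Fin d → ℝ)).Nonempty := ⟨y, mem_affineSpan ℝ hyPI⟩
    refine (AffineSubspace.direction_eq_top_iff_of_nonempty hne).1 ?_
    rw [direction_affineSpan]
    exact htop
  exact ((convex_convexHull ℝ _).interior_nonempty_iff_affineSpan_eq_top).2 hspan

end SB

/-- if `P` is a strongly blocked lattice-free polytope, then `P_I ∈ L^d`;
moreover, if `P` is not integral then `P_I ∉ M^d`. -/
theorem statement4 {d : ℕ} (P : Set (Fin d → ℝ)) (hpoly : IsPolytope P)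
    (hlf : IsLatticeFree P) (hsb : IsStronglyBlocked P) :
    MemL (intHull P) ∧ (¬ IsIntegralPolytope P → ¬ MemM (intHull P)) := by
  classical
  obtain ⟨V, hPV⟩ := hpoly
  obtain ⟨hPcl, hPconv, hPint, hPlat⟩ := hlf
  have hd : 0 < d := by
    by_contra hcon
    push_neg at hcon
    obtain ⟨x₀, hx₀⟩ := hPint
    have hx₀L : x₀ ∈ latticePts d := by
      intro i
      exact absurd i.isLt (by omega)
    exact (Set.eq_empty_iff_forall_notMem.1 hPlat x₀) ⟨hx₀, hx₀L⟩
  have hVne : V.Nonempty := by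
    obtain ⟨x₀, hx₀⟩ := hPint
    have hPne : P.Nonempty := ⟨x₀, interior_subset hx₀⟩
    rw [hPV, convexHull_nonempty_iff, Finset.coe_nonempty] at hPne
    exact hPne
  have hIH_sub : intHull P ⊆ P := convexHull_min Set.inter_subset_left hPconv
  have hcomp : IsCompact P := by rw [hPV]; exact V.finite_toSet.isCompact_convexHull ℝ
  have hfin : (P ∩ latticePts d).Finite := sb_lattice_finite hcomp
  have hintfull : (interior (intHull P)).Nonempty := sb_full hd hPV hVne hPint hsb
  have hlfI : IsLatticeFree (intHull P) := by
    refine ⟨?_, convex_convexHull ℝ _, hintfull, ?_⟩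
    · exact (hfin.isCompact_convexHull ℝ).isClosed
    · have hsub : interior (intHull P) ∩ latticePts d ⊆ interior P ∩ latticePts d :=
        Set.inter_subset_inter_left _ (interior_mono hIH_sub)
      rw [hPlat] at hsub
      exact Set.subset_empty_iff.1 hsub
  have hIumm : intHull P ∩ latticePts d = P ∩ latticePts d := by
    apply subset_antisymm
    · exact Set.inter_subset_inter_left _ hIH_sub
    · intro x hx
      exact ⟨subset_convexHull ℝ _ hx, hx.2⟩
  have hIint : IsIntegralPolytope (intHull P) := by
    refine ⟨⟨hfin.toFinset, by rw [hfin.coe_toFinset]; rfl⟩, ?_⟩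
    show intHull P = intHull (intHull P)
    rw [show intHull (intHull P) = convexHull ℝ (intHull P ∩ latticePts d) from rfl, hIumm]; rfl
  refine ⟨⟨hIint, hlfI, ?_⟩, ?_⟩
  · intro Q hQint hQlf hPIQ
    by_contra hne
    have hQconv : Convex ℝ Q := hQlf.2.1
    have hnotsub : ¬ (Q ∩ latticePts d ⊆ intHull P) := by
      intro hsub
      apply hne
      apply subset_antisymm hPIQ
      calc Q = intHull Q := hQint.2
      _ ⊆ intHull P := convexHull_min hsub (convex_convexHull ℝ _)
    obtain ⟨ζ, hζQ, hζPI⟩ := Set.not_subset.1 hnotsub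
    have hζnP : ζ ∉ P := fun h => hζPI (subset_convexHull ℝ _ ⟨h, hζQ.2⟩)
    have hfull : affineSpan ℝ P = ⊤ :=
      (hPconv.interior_nonempty_iff_affineSpan_eq_top).1 hPint
    obtain ⟨g, G, hg, hle, hgz, y, ε, hε, hyint, hyG, hyPI, hball⟩ :=
      sb_package hPV hVne hfull hsb hζnP
    obtain ⟨u₀, hu₀⟩ := hintfull
    have hu₀PI : u₀ ∈ intHull P := interior_subset hu₀
    have hu₀P : u₀ ∈ interior P := (interior_mono hIH_sub) hu₀
    have hu₀G : g u₀ < G := sb_interior_lt hle hg hu₀P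
    have hymem := sb_interior_mem hε hball hyG hgz hu₀G
    have hsubQ : convexHull ℝ ((intHull P) ∪ {ζ, u₀}) ⊆ Q := by
      apply convexHull_min _ hQconv
      rintro w (hw | hw)
      · exact hPIQ hw
      · rcases hw with rfl | hw
        · exact hζQ.1
        · rw [Set.mem_singleton_iff] at hw
          rw [hw]
          exact hPIQ hu₀PI
    have hyintQ : y ∈ interior Q := interior_mono hsubQ hymem
    exact (Set.eq_empty_iff_forall_notMem.1 hQlf.2.2.2 y) ⟨hyintQ, hyint⟩
  · intro hni hM
    apply hni
    have h1 : intHull P = P := hM.2.2 P ⟨hPcl, hPconv, hPint, hPlat⟩ hIH_sub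
    exact ⟨⟨V, hPV⟩, h1.symm⟩
end

section
/- Let P be a strongly blocked lattice-free polytope in ℝ^d and let z ∈ ℤ^d be such that conv(P_I ∪ {z}) is lattice-free, where P_I = conv(P ∩ ℤ^d). Then z ∈ P_I. -/
open scoped BigOperators

namespace S5
open Set Module

variable {d : ℕ}

noncomputable def dotL (c : Fin d → ℝ) : (Fin d → ℝ) →ₗ[ℝ] ℝ :=
  ∑ i, c i • LinearMap.proj i

lemma dotL_apply (c x : Fin d → ℝ) : dotL c x = ∑ i, c i * x i := by
  simp [dotL, smul_eq_mul]

lemma dotL_left_add (c c' x : Fin d → ℝ) : dotL (c + c') x = dotL c x + dotL c' x := by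
  simp [dotL_apply, add_mul, Finset.sum_add_distrib]

lemma dotL_left_smul (t : ℝ) (c x : Fin d → ℝ) : dotL (t • c) x = t * dotL c x := by
  simp [dotL_apply, Finset.mul_sum, mul_assoc]

lemma dotL_self_pos {c : Fin d → ℝ} (hc : c ≠ 0) : 0 < dotL c c := by
  rw [dotL_apply]
  have : ∃ i, c i ≠ 0 := by
    by_contra hno
    push_neg at hno
    exact hc (funext hno)
  obtain ⟨i, hi⟩ := this
  have h1 : 0 < c i * c i := mul_self_pos.2 hi
  exact lt_of_lt_of_le h1
    (Finset.single_le_sum (fun j _ => mul_self_nonneg (c j)) (Finset.mem_univ i))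

lemma apply_eq_dotL (f : (Fin d → ℝ) →ₗ[ℝ] ℝ) (x : Fin d → ℝ) :
    f x = dotL (fun i => f (Pi.single i 1)) x := by
  have hx : x = ∑ i, x i • (Pi.single i (1:ℝ) : Fin d → ℝ) := by
    ext j
    rw [Finset.sum_apply]
    simp [Pi.single_apply]
  conv_lhs => rw [hx]
  rw [map_sum, dotL_apply]
  exact Finset.sum_congr rfl fun i _ => by rw [map_smul, smul_eq_mul, mul_comm]

lemma dotL_surjective {c : Fin d → ℝ} (hc : c ≠ 0) : Function.Surjective (dotL c) := by
  intro r
  refine ⟨(r / dotL c c) • c, ?_⟩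
  rw [map_smul, smul_eq_mul]
  field_simp [(dotL_self_pos hc).ne']

lemma finrank_ker {c : Fin d → ℝ} (hc : c ≠ 0) :
    finrank ℝ (LinearMap.ker (dotL c)) + 1 = d := by
  have h1 := LinearMap.finrank_range_add_finrank_ker (dotL c)
  rw [LinearMap.range_eq_top.2 (dotL_surjective hc)] at h1
  simp only [finrank_top, Module.finrank_self] at h1
  have h2 : finrank ℝ (Fin d → ℝ) = d := by simp
  omega

lemma vectorSpan_le_ker {S : Set (Fin d → ℝ)} {c : Fin d → ℝ} {b : ℝ}
    (hS : ∀ x ∈ S, dotL c x = b) : vectorSpan ℝ S ≤ LinearMap.ker (dotL c) := by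
  rw [vectorSpan_def, Submodule.span_le]
  rintro v ⟨x, hx, y, hy, rfl⟩
  simp only [SetLike.mem_coe, LinearMap.mem_ker, vsub_eq_sub, map_sub]
  rw [hS x hx, hS y hy, sub_self]

lemma vectorSpan_eq_ker {S : Set (Fin d → ℝ)} {c : Fin d → ℝ} {b : ℝ} (hc : c ≠ 0)
    (hS : ∀ x ∈ S, dotL c x = b) (hrank : finrank ℝ (vectorSpan ℝ S) + 1 = d) :
    vectorSpan ℝ S = LinearMap.ker (dotL c) := by
  refine Submodule.eq_of_le_of_finrank_le (vectorSpan_le_ker hS) ?_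
  have := finrank_ker hc
  omega

lemma prop_of_ker_eq {c c₂ : Fin d → ℝ} (hc : c ≠ 0)
    (hker : LinearMap.ker (dotL c) = LinearMap.ker (dotL c₂)) :
    ∀ x, dotL c₂ x = (dotL c₂ c / dotL c c) * dotL c x := by
  intro x
  have hcc := (dotL_self_pos hc).ne'
  have hmem : x - (dotL c x / dotL c c) • c ∈ LinearMap.ker (dotL c) := by
    simp only [LinearMap.mem_ker, map_sub, map_smul, smul_eq_mul]
    field_simp
    ring
  rw [hker, LinearMap.mem_ker, map_sub, map_smul, smul_eq_mul, sub_eq_zero] at hmem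
  rw [hmem]; ring

lemma abs_dotL_le (c x : Fin d → ℝ) : |dotL c x| ≤ (∑ i, |c i|) * ‖x‖ := by
  rw [dotL_apply]
  calc |∑ i, c i * x i| ≤ ∑ i, |c i * x i| := Finset.abs_sum_le_sum_abs _ _
  _ ≤ ∑ i, |c i| * ‖x‖ := by
      refine Finset.sum_le_sum fun i _ => ?_
      rw [abs_mul]
      exact mul_le_mul_of_nonneg_left (by simpa using norm_le_pi_norm x i) (abs_nonneg _)
  _ = (∑ i, |c i|) * ‖x‖ := by rw [Finset.sum_mul]

lemma relint_ball {S : Set (Fin d → ℝ)} {w : Fin d → ℝ} (hw : w ∈ intrinsicInterior ℝ S) :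
    ∃ ε > 0, ∀ x ∈ (affineSpan ℝ S : Set (Fin d → ℝ)), dist x w < ε → x ∈ S := by
  obtain ⟨y, hy, rfl⟩ := hw
  rw [mem_interior_iff_mem_nhds, Metric.mem_nhds_iff] at hy
  obtain ⟨ε, hε, hball⟩ := hy
  refine ⟨ε, hε, fun x hx hdist => ?_⟩
  have : (⟨x, hx⟩ : (affineSpan ℝ S : Set (Fin d → ℝ))) ∈ Metric.ball y ε := by
    rw [Metric.mem_ball, Subtype.dist_eq]
    exact hdist
  exact hball this

set_option maxHeartbeats 1000000 in
lemma mem_interior_of_relint {S Q : Set (Fin d → ℝ)} {c : Fin d → ℝ} {b : ℝ}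
    {w u zz : Fin d → ℝ}
    (hQconv : Convex ℝ Q) (hSQ : S ⊆ Q) (huQ : u ∈ Q) (hzQ : zz ∈ Q)
    (hSb : ∀ x ∈ S, dotL c x = b)
    (hrank : finrank ℝ (vectorSpan ℝ S) + 1 = d) (hc : c ≠ 0)
    (hu : dotL c u < b) (hzz : b < dotL c zz)
    (hw : w ∈ intrinsicInterior ℝ S) : w ∈ interior Q := by
  have hwS : w ∈ S := intrinsicInterior_subset hw
  have hwb : dotL c w = b := hSb w hwS
  have hK : vectorSpan ℝ S = LinearMap.ker (dotL c) := vectorSpan_eq_ker hc hSb hrank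
  obtain ⟨ε, hε, hball⟩ := relint_ball hw
  set C : ℝ := ∑ i, |c i| with hCdef
  have hCpos : 0 < C := by
    have : ∃ i, c i ≠ 0 := by
      by_contra hno; push_neg at hno; exact hc (funext hno)
    obtain ⟨i, hi⟩ := this
    exact Finset.sum_pos' (fun j _ => abs_nonneg _) ⟨i, Finset.mem_univ i, abs_pos.2 hi⟩
  set K₁ : ℝ := dotL c zz - b with hK₁def
  set K₂ : ℝ := b - dotL c u with hK₂def
  have hK₁ : 0 < K₁ := sub_pos.2 hzz
  have hK₂ : 0 < K₂ := sub_pos.2 hu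
  set K0 : ℝ := min K₁ K₂ with hK0def
  have hK0 : 0 < K0 := lt_min hK₁ hK₂
  set R : ℝ := max ‖zz - w‖ ‖u - w‖ with hRdef
  have hR0 : 0 ≤ R := le_max_of_le_left (norm_nonneg _)
  set δ : ℝ := min (K0 / (2 * C)) (min (ε / 5) (ε * K0 / (5 * C * (R + 1)))) with hδdef
  have hδpos : 0 < δ := by
    exact lt_min (by positivity) (lt_min (by positivity) (by positivity))
  have hsub : Metric.ball w δ ⊆ Q := by
    intro x hx
    rw [mem_ball_iff_norm] at hx
    set t : ℝ := dotL c x - b with htdef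
    have ht : t = dotL c (x - w) := by rw [map_sub, hwb]
    have habs : |t| ≤ C * δ := by
      rw [ht]
      exact (abs_dotL_le c (x - w)).trans
        (mul_le_mul_of_nonneg_left hx.le hCpos.le)
    obtain ⟨q, hqQ, hqR, hκge, hl0⟩ :
        ∃ q, q ∈ Q ∧ ‖q - w‖ ≤ R ∧ K0 ≤ |dotL c q - b| ∧ 0 ≤ t / (dotL c q - b) := by
      by_cases h0 : 0 ≤ t
      · exact ⟨zz, hzQ, le_max_left _ _,
          by rw [abs_of_pos hK₁]; exact min_le_left _ _,
          div_nonneg h0 hK₁.le⟩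
      · refine ⟨u, huQ, le_max_right _ _, ?_, ?_⟩
        · rw [abs_of_neg (by linarith : dotL c u - b < 0)]
          have : -(dotL c u - b) = K₂ := by rw [hK₂def]; ring
          rw [this]; exact min_le_right _ _
        · exact div_nonneg_of_nonpos (le_of_lt (not_le.1 h0)) (by linarith)
    have hκne : dotL c q - b ≠ 0 := by
      intro hcontra
      rw [hcontra, abs_zero] at hκge
      linarith
    set lam : ℝ := t / (dotL c q - b) with hlamdef
    have hlam_abs : lam = |t| / |dotL c q - b| := by
      rw [← abs_div, abs_of_nonneg hl0]
    have hlamle : lam ≤ C * δ / K0 := by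
      rw [hlam_abs]
      gcongr
    have h2Cδ : δ * (2 * C) ≤ K0 := by
      have h := min_le_left (K0 / (2 * C)) (min (ε / 5) (ε * K0 / (5 * C * (R + 1))))
      rw [← hδdef, le_div_iff₀ (by positivity)] at h
      exact h
    have hlam_half : lam ≤ 1 / 2 := by
      have : C * δ / K0 ≤ 1 / 2 := by
        rw [div_le_div_iff₀ hK0 (by norm_num : (0:ℝ) < 2)]
        nlinarith
      linarith
    have h1lam : (0:ℝ) < 1 - lam := by linarith
    set y : Fin d → ℝ := (1 - lam)⁻¹ • (x - lam • q) with hydef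
    have hxeq : x = (1 - lam) • y + lam • q := by
      rw [hydef, smul_inv_smul₀ h1lam.ne']
      abel
    have hlk : lam * (dotL c q - b) = t := div_mul_cancel₀ _ hκne
    have hyb : dotL c y = b := by
      rw [hydef, map_smul, map_sub, map_smul, smul_eq_mul, smul_eq_mul]
      rw [inv_mul_eq_div, div_eq_iff h1lam.ne']
      have hxv : dotL c x = b + t := by rw [htdef]; ring
      rw [hxv]
      linarith [hlk]
    have hyA : y ∈ (affineSpan ℝ S : Set (Fin d → ℝ)) := by
      have hdir : y - w ∈ (affineSpan ℝ S).direction := by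
        rw [direction_affineSpan, hK, LinearMap.mem_ker, map_sub, hyb, hwb, sub_self]
      have hwA : w ∈ affineSpan ℝ S := subset_affineSpan ℝ S hwS
      have := AffineSubspace.vadd_mem_of_mem_direction hdir hwA
      simpa [vadd_eq_add, sub_add_cancel] using this
    have h3 : (1 - lam) • (y - w) = (x - w) - lam • (q - w) := by
      rw [hydef, smul_sub, smul_inv_smul₀ h1lam.ne']
      rw [smul_sub, sub_smul, one_smul]
      abel
    have hnorm1 : (1 - lam) * ‖y - w‖ ≤ δ + lam * R := by
      have := congrArg norm h3
      rw [norm_smul, Real.norm_eq_abs, abs_of_pos h1lam] at this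
      rw [this]
      calc ‖(x - w) - lam • (q - w)‖ ≤ ‖x - w‖ + ‖lam • (q - w)‖ := norm_sub_le _ _
      _ ≤ δ + lam * R := by
          rw [norm_smul, Real.norm_eq_abs, abs_of_nonneg hl0]
          have := mul_le_mul_of_nonneg_left hqR hl0
          linarith
    have hlamb : lam ≤ ε / (5 * (R + 1)) := by
      have hδ3 : δ ≤ ε * K0 / (5 * C * (R + 1)) :=
        (min_le_right _ _).trans (min_le_right _ _)
      have h2 : C * δ / K0 ≤ ε / (5 * (R + 1)) := by
        rw [div_le_div_iff₀ hK0 (by positivity)]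
        rw [le_div_iff₀ (by positivity)] at hδ3
        linear_combination hδ3
      linarith
    have hlamR : lam * R ≤ ε / 5 := by
      have h1 := mul_le_mul_of_nonneg_right hlamb hR0
      have h2 : ε / (5 * (R + 1)) * R ≤ ε / 5 := by
        rw [div_mul_eq_mul_div, div_le_div_iff₀ (by positivity) (by norm_num : (0:ℝ) < 5)]
        nlinarith [hε.le]
      linarith
    have hδε : δ ≤ ε / 5 := (min_le_right _ _).trans (min_le_left _ _)
    have hynorm : ‖y - w‖ < ε := by
      have hkey : (1/2) * ‖y - w‖ ≤ (1 - lam) * ‖y - w‖ :=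
        mul_le_mul_of_nonneg_right (by linarith) (norm_nonneg _)
      linarith
    have hyS : y ∈ S := hball y hyA (by rw [dist_eq_norm]; exact hynorm)
    rw [hxeq]
    exact hQconv (hSQ hyS) hqQ (by linarith) hl0 (by ring)
  exact mem_interior.2 ⟨Metric.ball w δ, hsub, Metric.isOpen_ball, Metric.mem_ball_self hδpos⟩

set_option maxHeartbeats 1000000 in
lemma exists_rot (V : Finset (Fin d → ℝ)) (hV : vectorSpan ℝ (V : Set (Fin d → ℝ)) = ⊤)
    (z : Fin d → ℝ) :
    ∀ (k : ℕ) (c : Fin d → ℝ) (v₁ : Fin d → ℝ), v₁ ∈ V →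
      (∀ v ∈ V, dotL c v ≤ dotL c v₁) → dotL c v₁ < dotL c z →
      d ≤ finrank ℝ (vectorSpan ℝ {v : Fin d → ℝ | v ∈ V ∧ dotL c v = dotL c v₁}) + 1 + k →
      ∃ (c' : Fin d → ℝ) (v₁' : Fin d → ℝ), v₁' ∈ V ∧ (∀ v ∈ V, dotL c' v ≤ dotL c' v₁') ∧
        dotL c' v₁' < dotL c' z ∧
        d ≤ finrank ℝ (vectorSpan ℝ {v : Fin d → ℝ | v ∈ V ∧ dotL c' v = dotL c' v₁'}) + 1 := by
  intro k
  induction k with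
  | zero =>
    intro c v₁ h1 h2 h3 h4
    exact ⟨c, v₁, h1, h2, h3, by simpa using h4⟩
  | succ k ih =>
    intro c v₁ hv₁ hub hsep hk
    classical
    by_cases hdone : d ≤ finrank ℝ (vectorSpan ℝ {v : Fin d → ℝ | v ∈ V ∧ dotL c v = dotL c v₁}) + 1
    · exact ⟨c, v₁, hv₁, hub, hsep, hdone⟩
    push_neg at hdone
    set A : Set (Fin d → ℝ) := {v : Fin d → ℝ | v ∈ V ∧ dotL c v = dotL c v₁} with hAdef
    set W := vectorSpan ℝ A with hWdef
    have hv₁A : v₁ ∈ A := ⟨hv₁, rfl⟩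
    set U := W ⊔ (Submodule.span ℝ {z - v₁}) with hUdef
    have hUlt : U < ⊤ := by
      rw [lt_top_iff_ne_top]
      intro hU
      have h1 : finrank ℝ U + finrank ℝ (W ⊓ Submodule.span ℝ {z - v₁} : Submodule ℝ (Fin d → ℝ)) =
          finrank ℝ W + finrank ℝ (Submodule.span ℝ {z - v₁}) :=
        Submodule.finrank_sup_add_finrank_inf_eq _ _
      have h2 : finrank ℝ (Submodule.span ℝ ({z - v₁} : Set (Fin d → ℝ))) ≤ 1 := by
        simpa using finrank_span_le_card ({z - v₁} : Set (Fin d → ℝ))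
      have h3 : finrank ℝ U = d := by
        rw [hU, finrank_top]; simp
      omega
    obtain ⟨f, hf0, hfU⟩ := Submodule.exists_dual_map_eq_bot_of_lt_top hUlt inferInstance
    have hfkill : ∀ x ∈ U, f x = 0 := by
      intro x hx
      have h := Submodule.mem_map_of_mem (f := f) hx
      rw [hfU] at h
      simpa using h
    have hfz : f (z - v₁) = 0 :=
      hfkill _ (Submodule.mem_sup_right (Submodule.mem_span_singleton_self _))
    have hfW : ∀ x ∈ W, f x = 0 := fun x hx => hfkill x (Submodule.mem_sup_left hx)
    have hex : ∃ v₂ ∈ V, f (v₂ - v₁) ≠ 0 := by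
      by_contra hno
      push_neg at hno
      apply hf0
      have hker : vectorSpan ℝ (V : Set (Fin d → ℝ)) ≤ LinearMap.ker f := by
        rw [vectorSpan_def, Submodule.span_le]
        rintro x ⟨a, ha, b_, hb, rfl⟩
        have h1 := hno a ha
        have h2 := hno b_ hb
        simp only [SetLike.mem_coe, LinearMap.mem_ker, vsub_eq_sub]
        have hab : (a : Fin d → ℝ) - b_ = (a - v₁) - (b_ - v₁) := by abel
        rw [hab, map_sub, h1, h2, sub_zero]
      refine LinearMap.ext fun x => ?_
      have hx : x ∈ LinearMap.ker f := hker (by rw [hV]; exact Submodule.mem_top)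
      simpa using hx
    obtain ⟨v₂, hv₂V, hfv₂⟩ := hex
    set g : (Fin d → ℝ) →ₗ[ℝ] ℝ := (if 0 < f (v₂ - v₁) then (1:ℝ) else -1) • f with hgdef
    have hgW : ∀ x ∈ W, g x = 0 := by
      intro x hx
      rw [hgdef]
      simp only [LinearMap.smul_apply, smul_eq_mul, hfW x hx, mul_zero]
    have hgz : g (z - v₁) = 0 := by
      rw [hgdef]
      simp only [LinearMap.smul_apply, smul_eq_mul, hfz, mul_zero]
    have hgv₂ : 0 < g (v₂ - v₁) := by
      rw [hgdef]
      rcases lt_trichotomy (f (v₂ - v₁)) 0 with hlt | heq | hgt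
      · rw [if_neg (by linarith)]; simpa using hlt
      · exact absurd heq hfv₂
      · rw [if_pos hgt]; simpa using hgt
    set V₂ : Finset (Fin d → ℝ) := V.filter (fun v => 0 < g (v - v₁)) with hV₂def
    have hv₂V₂ : v₂ ∈ V₂ := Finset.mem_filter.2 ⟨hv₂V, hgv₂⟩
    obtain ⟨vs, hvsV₂, hmin⟩ := Finset.exists_min_image V₂
      (fun v => (dotL c v₁ - dotL c v) / g (v - v₁)) ⟨v₂, hv₂V₂⟩
    have hvsV : vs ∈ V := (Finset.mem_filter.1 hvsV₂).1
    have hgvs : 0 < g (vs - v₁) := (Finset.mem_filter.1 hvsV₂).2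
    have hvs_lt : dotL c vs < dotL c v₁ := by
      rcases lt_or_eq_of_le (hub vs hvsV) with h | h
      · exact h
      · exfalso
        have hvsA : vs ∈ A := ⟨hvsV, h⟩
        have : vs - v₁ ∈ W := by
          rw [hWdef]
          simpa [vsub_eq_sub] using vsub_mem_vectorSpan ℝ hvsA hv₁A
        have := hgW _ this
        linarith
    set θ := (dotL c v₁ - dotL c vs) / g (vs - v₁) with hθdef
    have hθpos : 0 < θ := div_pos (by linarith) hgvs
    set e : Fin d → ℝ := fun i => g (Pi.single i 1) with hedef
    have he : ∀ x, dotL e x = g x := fun x => (apply_eq_dotL g x).symm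
    set c' := c + θ • e with hc'def
    have hc'app : ∀ x, dotL c' x = dotL c x + θ * g x := by
      intro x
      rw [hc'def, dotL_left_add, dotL_left_smul, he]
    have hgA : ∀ v ∈ A, g v = g v₁ := by
      intro v hv
      have hsub : v - v₁ ∈ W := by
        rw [hWdef]
        simpa [vsub_eq_sub] using vsub_mem_vectorSpan ℝ hv hv₁A
      have := hgW _ hsub
      rw [map_sub] at this
      linarith
    have hub' : ∀ v ∈ V, dotL c' v ≤ dotL c' v₁ := by
      intro v hv
      rw [hc'app, hc'app]
      by_cases hvpos : 0 < g (v - v₁)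
      · have hvV₂ : v ∈ V₂ := Finset.mem_filter.2 ⟨hv, hvpos⟩
        have h1 := hmin v hvV₂
        rw [le_div_iff₀ hvpos] at h1
        rw [map_sub] at h1
        nlinarith
      · push_neg at hvpos
        rw [map_sub] at hvpos
        have h1 : θ * (g v - g v₁) ≤ 0 :=
          mul_nonpos_of_nonneg_of_nonpos hθpos.le (by linarith)
        have h2 := hub v hv
        nlinarith
    have hsep' : dotL c' v₁ < dotL c' z := by
      rw [hc'app, hc'app]
      rw [map_sub] at hgz
      nlinarith
    have hv₁A' : v₁ ∈ {v : Fin d → ℝ | v ∈ V ∧ dotL c' v = dotL c' v₁} := ⟨hv₁, rfl⟩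
    have hAsub : A ⊆ {v : Fin d → ℝ | v ∈ V ∧ dotL c' v = dotL c' v₁} := by
      intro v hv
      refine ⟨hv.1, ?_⟩
      rw [hc'app, hc'app, hv.2, hgA v hv]
    have hvsA' : vs ∈ {v : Fin d → ℝ | v ∈ V ∧ dotL c' v = dotL c' v₁} := by
      refine ⟨hvsV, ?_⟩
      rw [hc'app, hc'app]
      have hcan : θ * g (vs - v₁) = dotL c v₁ - dotL c vs := by
        rw [hθdef]
        exact div_mul_cancel₀ _ hgvs.ne'
      rw [map_sub] at hcan
      nlinarith
    have hWlt : W < vectorSpan ℝ {v : Fin d → ℝ | v ∈ V ∧ dotL c' v = dotL c' v₁} := by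
      refine lt_of_le_of_ne (vectorSpan_mono ℝ hAsub) ?_
      intro hWeq
      have hmem : vs - v₁ ∈ vectorSpan ℝ {v : Fin d → ℝ | v ∈ V ∧ dotL c' v = dotL c' v₁} := by
        simpa [vsub_eq_sub] using vsub_mem_vectorSpan ℝ hvsA' hv₁A'
      rw [← hWeq] at hmem
      have := hgW _ hmem
      linarith
    have hrk := Submodule.finrank_lt_finrank_of_lt hWlt
    refine ih c' v₁ hv₁ hub' hsep' ?_
    omega

set_option maxHeartbeats 1000000 in
lemma exists_sep_facet (V : Finset (Fin d → ℝ)) (hVne : V.Nonempty)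
    (hV : vectorSpan ℝ (V : Set (Fin d → ℝ)) = ⊤) {z : Fin d → ℝ}
    (hz : z ∉ convexHull ℝ (V : Set (Fin d → ℝ))) :
    ∃ (F : Set (Fin d → ℝ)) (c : Fin d → ℝ) (b : ℝ),
      IsFacet (convexHull ℝ (V : Set (Fin d → ℝ))) F ∧ c ≠ 0 ∧
      F ⊆ convexHull ℝ (V : Set (Fin d → ℝ)) ∧
      (∀ x ∈ convexHull ℝ (V : Set (Fin d → ℝ)), dotL c x ≤ b) ∧
      (∀ x ∈ F, dotL c x = b) ∧ b < dotL c z := by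
  classical
  have hclosed : IsClosed (convexHull ℝ (V : Set (Fin d → ℝ))) :=
    (V.finite_toSet.isCompact_convexHull (𝕜 := ℝ)).isClosed
  obtain ⟨f, u, hf1, hf2⟩ :=
    geometric_hahn_banach_closed_point (convex_convexHull ℝ _) hclosed hz
  set c₀ : Fin d → ℝ := fun i => f (Pi.single i 1) with hc₀def
  have hc₀ : ∀ x, dotL c₀ x = f x := by
    intro x
    rw [hc₀def]
    exact (apply_eq_dotL (f : (Fin d → ℝ) →ₗ[ℝ] ℝ) x).symm
  obtain ⟨v₀, hv₀V, hv₀max⟩ := V.exists_max_image (dotL c₀) hVne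
  have hsep0 : dotL c₀ v₀ < dotL c₀ z := by
    rw [hc₀ v₀, hc₀ z]
    have := hf1 v₀ (subset_convexHull ℝ _ hv₀V)
    linarith
  obtain ⟨c, v₁, hv₁V, hub, hsepc, hrank⟩ :=
    exists_rot V hV z d c₀ v₀ hv₀V hv₀max hsep0 (by omega)
  have hc0 : c ≠ 0 := by
    intro hceq
    rw [hceq] at hsepc
    simp [dotL_apply] at hsepc
  set b := dotL c v₁ with hbdef
  have hubP : ∀ x ∈ convexHull ℝ (V : Set (Fin d → ℝ)), dotL c x ≤ b := by
    intro x hx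
    have hhalf : Convex ℝ {y : Fin d → ℝ | dotL c y ≤ b} :=
      convex_halfSpace_le ⟨fun a b_ => (dotL c).map_add a b_, fun r a => (dotL c).map_smul r a⟩ b
    exact convexHull_min (fun v hv => hub v hv) hhalf hx
  set lC : (Fin d → ℝ) →L[ℝ] ℝ := LinearMap.toContinuousLinearMap (dotL c) with hlCdef
  have hlC : ∀ x, lC x = dotL c x := fun x => rfl
  set F : Set (Fin d → ℝ) :=
    {x ∈ convexHull ℝ (V : Set (Fin d → ℝ)) |
      ∀ y ∈ convexHull ℝ (V : Set (Fin d → ℝ)), lC y ≤ lC x} with hFdef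
  have hv₁P : v₁ ∈ convexHull ℝ (V : Set (Fin d → ℝ)) := subset_convexHull ℝ _ hv₁V
  have hv₁F : v₁ ∈ F := by
    refine ⟨hv₁P, fun y hy => ?_⟩
    rw [hlC, hlC]
    exact hubP y hy
  have hFP : F ⊆ convexHull ℝ (V : Set (Fin d → ℝ)) := fun x hx => hx.1
  have hFeq : ∀ x ∈ F, dotL c x = b := by
    intro x hx
    refine le_antisymm (hubP x hx.1) ?_
    have := hx.2 v₁ hv₁P
    rw [hlC, hlC] at this
    exact this
  have hexp : IsExposed ℝ (convexHull ℝ (V : Set (Fin d → ℝ))) F := fun _ => ⟨lC, rfl⟩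
  have hAF : {v : Fin d → ℝ | v ∈ V ∧ dotL c v = b} ⊆ F := by
    rintro v ⟨hvV, hveq⟩
    refine ⟨subset_convexHull ℝ _ hvV, fun y hy => ?_⟩
    rw [hlC, hlC, hveq]
    exact hubP y hy
  have hrankF : finrank ℝ (vectorSpan ℝ F) + 1 = d := by
    have hle1 : vectorSpan ℝ {v : Fin d → ℝ | v ∈ V ∧ dotL c v = b} ≤ vectorSpan ℝ F :=
      vectorSpan_mono ℝ hAF
    have hle2 : vectorSpan ℝ F ≤ LinearMap.ker (dotL c) := vectorSpan_le_ker hFeq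
    have h1 := Submodule.finrank_mono hle1
    have h2 := Submodule.finrank_mono hle2
    have h3 := finrank_ker hc0
    omega
  exact ⟨F, c, b, ⟨hexp, ⟨v₁, hv₁F⟩, hrankF⟩, hc0, hFP, hubP, hFeq, hsepc⟩

end S5

/-- if `P` is a strongly blocked lattice-free polytope, `z ∈ ℤ^d` and
`conv (P_I ∪ {z})` is lattice-free, then `z ∈ P_I`. -/
theorem statement5 {d : ℕ} (P : Set (Fin d → ℝ)) (hpoly : IsPolytope P)
    (hlf : IsLatticeFree P) (hsb : IsStronglyBlocked P) (z : Fin d → ℝ)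
    (hz : IsIntegralPoint z)
    (h : IsLatticeFree (convexHull ℝ (intHull P ∪ {z}))) :
    z ∈ intHull P := by
  classical
  obtain ⟨V, hPV⟩ := hpoly
  subst hPV
  by_cases hzP : z ∈ convexHull ℝ (V : Set (Fin d → ℝ))
  · exact subset_convexHull ℝ _ ⟨hzP, hz⟩
  exfalso
  obtain ⟨hPc, hPconv, hPint, hPlf⟩ := hlf
  have hVtop : vectorSpan ℝ (V : Set (Fin d → ℝ)) = ⊤ := by
    have h1 : affineSpan ℝ (V : Set (Fin d → ℝ)) = ⊤ :=
      affineSpan_eq_top_of_nonempty_interior hPint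
    rw [← direction_affineSpan, h1]
    exact AffineSubspace.direction_top ℝ _ _
  have hVne : V.Nonempty := by
    rw [← Finset.coe_nonempty]
    by_contra hne
    rw [Set.not_nonempty_iff_eq_empty] at hne
    rw [hne, convexHull_empty, interior_empty] at hPint
    exact Set.not_nonempty_empty hPint
  obtain ⟨F, c, b, hFacet, hc0, hFP, hubP, hFeq, hsep⟩ :=
    S5.exists_sep_facet V hVne hVtop hzP
  obtain ⟨hFacet', hrkI, w, hwri, hwint⟩ := hsb F hFacet
  have hFconv : Convex ℝ F := hFacet.1.convex (convex_convexHull ℝ _)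
  have hSF : intHull F ⊆ F := convexHull_min Set.inter_subset_left hFconv
  have hSb : ∀ x ∈ intHull F, S5.dotL c x = b := fun x hx => hFeq x (hSF hx)
  have hwS : w ∈ intHull F := intrinsicInterior_subset hwri
  have hwP : w ∈ convexHull ℝ (V : Set (Fin d → ℝ)) := hFP (hSF hwS)
  -- existence of an integral point of P strictly below the hyperplane of F
  have hu : ∃ u ∈ convexHull ℝ (V : Set (Fin d → ℝ)) ∩ latticePts d, S5.dotL c u < b := by
    by_contra hno
    push_neg at hno
    have hPZhyp : ∀ x ∈ convexHull ℝ (V : Set (Fin d → ℝ)) ∩ latticePts d, S5.dotL c x = b :=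
      fun x hx => le_antisymm (hubP x hx.1) (hno x hx)
    obtain ⟨Rb, hRb0, hRb⟩ :=
      (V.finite_toSet.isCompact_convexHull (𝕜 := ℝ)).isBounded.subset_closedBall_lt 0 0
    have hcn : 0 < ‖c‖ := norm_pos_iff.2 hc0
    set T : ℝ := (Rb + ‖w‖ + 1) / ‖c‖ with hTdef
    have hTpos : 0 < T := by positivity
    set z' : Fin d → ℝ := w - T • c with hz'def
    have hz'P : z' ∉ convexHull ℝ (V : Set (Fin d → ℝ)) := by
      intro hmem
      have h1 : ‖z'‖ ≤ Rb := by
        have := hRb hmem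
        rwa [Metric.mem_closedBall, dist_zero_right] at this
      have h2 : T * ‖c‖ - ‖w‖ ≤ ‖z'‖ := by
        calc T * ‖c‖ - ‖w‖ = ‖T • c‖ - ‖w‖ := by
              rw [norm_smul, Real.norm_eq_abs, abs_of_pos hTpos]
        _ ≤ ‖T • c - w‖ := norm_sub_norm_le _ _
        _ = ‖z'‖ := by rw [hz'def, norm_sub_rev]
      have hT : T * ‖c‖ = Rb + ‖w‖ + 1 := by
        rw [hTdef]
        field_simp
      linarith
    obtain ⟨F₂, c₂, b₂, hFacet₂, hc₂0, hFP₂, hubP₂, hFeq₂, hsep₂⟩ :=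
      S5.exists_sep_facet V hVne hVtop hz'P
    obtain ⟨_, hrkI₂, w₂, hwri₂, hwint₂⟩ := hsb F₂ hFacet₂
    have hF₂conv : Convex ℝ F₂ := hFacet₂.1.convex (convex_convexHull ℝ _)
    have hSF₂ : intHull F₂ ⊆ F₂ := convexHull_min Set.inter_subset_left hF₂conv
    have hS₂b₂ : ∀ x ∈ intHull F₂, S5.dotL c₂ x = b₂ := fun x hx => hFeq₂ x (hSF₂ hx)
    have hS₂b : ∀ x ∈ intHull F₂, S5.dotL c x = b := by
      intro x hx
      have hsubhyp : intHull F₂ ⊆ {y : Fin d → ℝ | S5.dotL c y = b} := by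
        refine convexHull_min ?_ ?_
        · intro y hy
          exact hPZhyp y ⟨hFP₂ hy.1, hy.2⟩
        · exact convex_hyperplane
            ⟨fun a b_ => (S5.dotL c).map_add a b_, fun r a => (S5.dotL c).map_smul r a⟩ b
      exact hsubhyp hx
    have hker2 : LinearMap.ker (S5.dotL c) = LinearMap.ker (S5.dotL c₂) := by
      rw [← S5.vectorSpan_eq_ker hc0 hS₂b hrkI₂, S5.vectorSpan_eq_ker hc₂0 hS₂b₂ hrkI₂]
    have hprop := S5.prop_of_ker_eq hc0 hker2
    set κ : ℝ := S5.dotL c₂ c / S5.dotL c c with hκdef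
    have hwb₂ : S5.dotL c₂ w ≤ b₂ := hubP₂ w hwP
    have hz'c₂ : S5.dotL c₂ z' = S5.dotL c₂ w - T * S5.dotL c₂ c := by
      rw [hz'def, map_sub, map_smul, smul_eq_mul]
    have hc₂c_neg : S5.dotL c₂ c < 0 := by
      have h1 : b₂ < S5.dotL c₂ z' := hsep₂
      rw [hz'c₂] at h1
      nlinarith
    have hκneg : κ < 0 := div_neg_of_neg_of_pos hc₂c_neg (S5.dotL_self_pos hc0)
    have hw₂S₂ : w₂ ∈ intHull F₂ := intrinsicInterior_subset hwri₂
    have hb₂κ : b₂ = κ * b := by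
      rw [← hS₂b₂ w₂ hw₂S₂, hprop w₂, hS₂b w₂ hw₂S₂, hκdef]
    obtain ⟨p, hp⟩ := hPint
    have hpP : p ∈ convexHull ℝ (V : Set (Fin d → ℝ)) := interior_subset hp
    rw [mem_interior_iff_mem_nhds, Metric.mem_nhds_iff] at hp
    obtain ⟨ρ, hρ, hball⟩ := hp
    have hpc : S5.dotL c p < b := by
      set p' : Fin d → ℝ := p + (ρ / (2 * ‖c‖)) • c with hp'def
      have hp'P : p' ∈ convexHull ℝ (V : Set (Fin d → ℝ)) := by
        apply hball
        rw [Metric.mem_ball, dist_eq_norm, hp'def]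
        have : p + (ρ / (2 * ‖c‖)) • c - p = (ρ / (2 * ‖c‖)) • c := by abel
        rw [this, norm_smul, Real.norm_eq_abs, abs_of_pos (by positivity)]
        rw [div_mul_eq_mul_div, mul_comm (2 : ℝ) ‖c‖, ← div_div]
        rw [mul_div_assoc, div_self hcn.ne', mul_one]
        linarith
      have hle := hubP p' hp'P
      rw [hp'def, map_add, map_smul, smul_eq_mul] at hle
      have hpos : 0 < (ρ / (2 * ‖c‖)) * S5.dotL c c := by
        have := S5.dotL_self_pos hc0
        positivity
      linarith
    have h1 : S5.dotL c₂ p ≤ b₂ := hubP₂ p hpP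
    rw [hprop p, hb₂κ] at h1
    nlinarith
  obtain ⟨u, huP, huc⟩ := hu
  obtain ⟨hQc, hQconv, hQint, hQlf⟩ := h
  have hwQ : w ∈ interior (convexHull ℝ
      (intHull (convexHull ℝ (V : Set (Fin d → ℝ))) ∪ {z})) := by
    refine S5.mem_interior_of_relint (convex_convexHull ℝ _) ?_ ?_ ?_ hSb hrkI hc0 huc hsep hwri
    · refine convexHull_min ?_ (convex_convexHull ℝ _)
      intro y hy
      exact subset_convexHull ℝ _ (Or.inl (subset_convexHull ℝ _ ⟨hFP hy.1, hy.2⟩))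
    · exact subset_convexHull ℝ _ (Or.inl (subset_convexHull ℝ _ huP))
    · exact subset_convexHull ℝ _ (Or.inr rfl)
  exact (Set.eq_empty_iff_forall_notMem.1 hQlf) w ⟨hwQ, hwint⟩
end

section
/- For every a ∈ ℝ_{>0}^d, the axis-aligned simplex T(a) = conv{0, a_1 e_1, …, a_d e_d} is a maximal lattice-free set if and only if κ(a) = 1/a_1 + ⋯ + 1/a_d = 1. -/
open scoped BigOperators

section AuxStatement7
variable {d : ℕ}

variable {d : ℕ}

/-- Halfspace description target. -/
def simS (a : Fin d → ℝ) : Set (Fin d → ℝ) :=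
  {x | (∀ i, 0 ≤ x i) ∧ ∑ i, x i / a i ≤ 1}

def simU (a : Fin d → ℝ) : Set (Fin d → ℝ) :=
  {x | (∀ i, 0 < x i) ∧ ∑ i, x i / a i < 1}

lemma convex_simS (a : Fin d → ℝ) : Convex ℝ (simS a) := by
  have h1 : Convex ℝ {x : Fin d → ℝ | ∀ i, 0 ≤ x i} := by
    have : {x : Fin d → ℝ | ∀ i, 0 ≤ x i} = ⋂ i, {x : Fin d → ℝ | 0 ≤ x i} := by
      ext x; simp
    rw [this]
    exact convex_iInter fun i =>
      convex_halfSpace_ge (⟨fun x y => rfl, fun c x => rfl⟩ : IsLinearMap ℝ fun x : Fin d → ℝ => x i) 0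
  have h2 : Convex ℝ {x : Fin d → ℝ | ∑ i, x i / a i ≤ 1} :=
    convex_halfSpace_le
      (⟨fun x y => by simp [add_div, Finset.sum_add_distrib],
        fun c x => by simp [Finset.mul_sum, mul_div_assoc]⟩ :
        IsLinearMap ℝ fun x : Fin d → ℝ => ∑ i, x i / a i) 1
  exact h1.inter h2

lemma isClosed_simS (a : Fin d → ℝ) : IsClosed (simS a) := by
  have h1 : IsClosed {x : Fin d → ℝ | ∀ i, 0 ≤ x i} := by
    have : {x : Fin d → ℝ | ∀ i, 0 ≤ x i} = ⋂ i, {x : Fin d → ℝ | 0 ≤ x i} := by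
      ext x; simp
    rw [this]
    exact isClosed_iInter fun i => isClosed_le continuous_const (continuous_apply i)
  have h2 : IsClosed {x : Fin d → ℝ | ∑ i, x i / a i ≤ 1} :=
    isClosed_le (by continuity) continuous_const
  exact h1.inter h2

lemma isOpen_simU (a : Fin d → ℝ) : IsOpen (simU a) := by
  have h1 : IsOpen {x : Fin d → ℝ | ∀ i, 0 < x i} := by
    have : {x : Fin d → ℝ | ∀ i, 0 < x i} = ⋂ i, {x : Fin d → ℝ | 0 < x i} := by
      ext x; simp
    rw [this]
    exact isOpen_iInter_of_finite fun i => isOpen_lt continuous_const (continuous_apply i)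
  have h2 : IsOpen {x : Fin d → ℝ | ∑ i, x i / a i < 1} :=
    isOpen_lt (by continuity) continuous_const
  exact h1.inter h2

lemma axisSimplex_eq (a : Fin d → ℝ) (ha : ∀ i, 0 < a i) : axisSimplex a = simS a := by
  apply subset_antisymm
  · apply convexHull_min _ (convex_simS a)
    rintro x hx
    rcases hx with rfl | ⟨i, rfl⟩
    · exact ⟨fun i => le_refl 0, by simp⟩
    · constructor
      · intro j
        by_cases h : j = i
        · subst h; simp [(ha j).le]
        · simp [Pi.single_apply, h]
      · have : ∀ j, (a i • (Pi.single i 1 : Fin d → ℝ)) j / a j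
            = if j = i then 1 else 0 := by
          intro j
          by_cases h : j = i
          · subst h; simp [div_self (ha j).ne']
          · simp [Pi.single_apply, h]
        rw [Finset.sum_congr rfl fun j _ => this j]
        simp
  · intro x hx
    obtain ⟨hx0, hx1⟩ := hx
    set C := axisSimplex a with hC
    have hconv : Convex ℝ C := convex_convexHull ℝ _
    have h0 : (0 : Fin d → ℝ) ∈ C := subset_convexHull ℝ _ (Set.mem_insert _ _)
    have hgen : ∀ i, a i • (Pi.single i 1 : Fin d → ℝ) ∈ C := fun i =>
      subset_convexHull ℝ _ (Set.mem_insert_of_mem _ ⟨i, rfl⟩)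
    have key := hconv.sum_mem (t := (Finset.univ : Finset (Option (Fin d))))
      (w := fun o => Option.elim o (1 - ∑ i, x i / a i) (fun i => x i / a i))
      (z := fun o => Option.elim o 0 (fun i => a i • (Pi.single i 1 : Fin d → ℝ)))
      (fun o _ => by
        cases o with
        | none => simpa using sub_nonneg.mpr hx1
        | some i => exact div_nonneg (hx0 i) (ha i).le)
      (by rw [Fintype.sum_option]; simp)
      (fun o _ => by cases o with
        | none => exact h0
        | some i => exact hgen i)
    have : ∑ o : Option (Fin d),
        (Option.elim o (1 - ∑ i, x i / a i) (fun i => x i / a i)) •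
          (Option.elim o 0 (fun i => a i • (Pi.single i 1 : Fin d → ℝ))) = x := by
      rw [Fintype.sum_option]
      simp only [Option.elim, smul_zero, zero_add]
      have : ∀ i, (x i / a i) • (a i • (Pi.single i 1 : Fin d → ℝ))
          = Pi.single i (x i) := by
        intro i
        rw [smul_smul, div_mul_cancel₀ _ (ha i).ne']
        ext j
        by_cases h : j = i
        · subst h; simp
        · simp [Pi.single_apply, h]
      rw [Finset.sum_congr rfl fun i _ => this i]
      exact Finset.univ_sum_single x
    rwa [this] at key



lemma interior_simS (hd : 0 < d) (a : Fin d → ℝ) (ha : ∀ i, 0 < a i) :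
    interior (simS a) = simU a := by
  apply subset_antisymm
  · intro x hx
    have hxS : x ∈ simS a := interior_subset hx
    obtain ⟨ε, hε, hball⟩ := Metric.isOpen_iff.mp isOpen_interior x hx
    have hmem : ∀ v : Fin d → ℝ, ‖v‖ < ε → x + v ∈ simS a := by
      intro v hv
      refine interior_subset (hball ?_)
      rw [Metric.mem_ball, dist_eq_norm, add_sub_cancel_left]
      exact hv
    constructor
    · intro i
      rcases lt_or_eq_of_le (hxS.1 i) with h | h
      · exact h
      exfalso
      have := (hmem (-(Pi.single i (ε/2))) (by
        rw [norm_neg, Pi.norm_single]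
        rw [Real.norm_eq_abs, abs_of_pos (by linarith)]
        linarith)).1 i
      rw [Pi.add_apply, ← h, Pi.neg_apply, Pi.single_eq_same] at this
      linarith
    · rcases lt_or_eq_of_le hxS.2 with h | h
      · exact h
      exfalso
      set i₀ : Fin d := ⟨0, hd⟩
      set v : Fin d → ℝ := Pi.single i₀ (ε/2) with hv
      have hmem2 := (hmem v (by
        rw [hv]
        rw [Pi.norm_single, Real.norm_eq_abs, abs_of_pos (by linarith)]
        linarith)).2
      have hsum : ∑ i, (x + v) i / a i
          = (∑ i, x i / a i) + ε/2 / a i₀ := by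
        have : ∀ i, (x + v) i / a i
            = x i / a i + (if i = i₀ then ε/2 / a i₀ else 0) := by
          intro i
          by_cases hi : i = i₀
          · subst hi; simp [hv, add_div]
          · simp [hv, Pi.single_apply, hi]
        rw [Finset.sum_congr rfl fun i _ => this i, Finset.sum_add_distrib,
          Finset.sum_ite_eq' Finset.univ i₀]
        simp
      rw [hsum, ← h] at hmem2
      have : 0 < ε/2 / a i₀ := div_pos (by linarith) (ha i₀)
      linarith
  · apply interior_maximal _ (isOpen_simU a)
    intro x hx
    exact ⟨fun i => (hx.1 i).le, hx.2.le⟩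


lemma interior_nonempty (hd : 0 < d) (a : Fin d → ℝ) (ha : ∀ i, 0 < a i) :
    (simU a).Nonempty := by
  refine ⟨fun i => a i / (2 * d), fun i => div_pos (ha i) (by
    have hd' : (0:ℝ) < d := by exact_mod_cast hd
    linarith), ?_⟩
  have : ∀ i : Fin d, (a i / (2 * d)) / a i = 1 / (2 * d) := by
    intro i
    field_simp
    have hd' : (0:ℝ) < d := by exact_mod_cast hd
    exact div_self (ha i).ne'
  rw [Finset.sum_congr rfl fun i _ => this i, Finset.sum_const, Finset.card_univ,
    Fintype.card_fin, nsmul_eq_mul]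
  rw [mul_one_div]
  have hd' : (0:ℝ) < d := by exact_mod_cast hd
  rw [div_lt_one (by linarith)]
  nlinarith [Nat.one_le_cast (α := ℝ) |>.mpr hd]

lemma simU_lattice_empty_iff (a : Fin d → ℝ) (ha : ∀ i, 0 < a i) :
    simU a ∩ latticePts d = ∅ ↔ 1 ≤ kappa a := by
  constructor
  · intro h
    by_contra hk
    push_neg at hk
    have h1 : (fun _ : Fin d => (1 : ℝ)) ∈ simU a ∩ latticePts d := by
      refine ⟨⟨fun i => one_pos, ?_⟩, fun i => ⟨1, by norm_num⟩⟩
      calc ∑ i, (1 : ℝ) / a i = kappa a := by simp [kappa, one_div]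
        _ < 1 := hk
    rw [h] at h1
    exact h1
  · intro hk
    ext x
    simp only [Set.mem_inter_iff, Set.mem_empty_iff_false, iff_false]
    rintro ⟨⟨hpos, hsum⟩, hint⟩
    have hone : ∀ i, (1 : ℝ) ≤ x i := by
      intro i
      obtain ⟨n, hn⟩ := hint i
      have : (0 : ℝ) < n := hn ▸ hpos i
      have : (1 : ℤ) ≤ n := by exact_mod_cast this
      rw [hn]
      exact_mod_cast this
    have : kappa a ≤ ∑ i, x i / a i := by
      unfold kappa
      apply Finset.sum_le_sum
      intro i _
      rw [← one_div]
      exact (div_le_div_iff_of_pos_right (ha i)).mpr (hone i) |>.trans_eq rfl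
    linarith

lemma latticeFree_simS (hd : 0 < d) (a : Fin d → ℝ) (ha : ∀ i, 0 < a i) (hk : 1 ≤ kappa a) :
    IsLatticeFree (simS a) := by
  refine ⟨isClosed_simS a, convex_simS a, ?_, ?_⟩
  · rw [interior_simS hd a ha]; exact interior_nonempty hd a ha
  · rw [interior_simS hd a ha]; exact (simU_lattice_empty_iff a ha).mpr hk


lemma sum_comb (a z y : Fin d → ℝ) (s : ℝ) :
    ∑ j, ((1 + s) • z - s • y) j / a j
      = (1 + s) * (∑ j, z j / a j) - s * (∑ j, y j / a j) := by
  rw [Finset.mul_sum, Finset.mul_sum, ← Finset.sum_sub_distrib]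
  refine Finset.sum_congr rfl fun j _ => ?_
  simp only [Pi.sub_apply, Pi.smul_apply, smul_eq_mul]
  ring

lemma key_contra (hd : 0 < d) (a : Fin d → ℝ) (ha : ∀ i, 0 < a i)
    (K : Set (Fin d → ℝ)) (hK : IsLatticeFree K) (hsub : simS a ⊆ K)
    (y : Fin d → ℝ) (hy : y ∈ K) (z : Fin d → ℝ) (hzint : IsIntegralPoint z)
    (s : ℝ) (hs : 0 < s) (hq : (1 + s) • z - s • y ∈ simU a) : False := by
  have h1s : (0:ℝ) < 1 + s := by linarith
  have hqK : (1 + s) • z - s • y ∈ interior K :=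
    interior_mono hsub (by rw [interior_simS hd a ha]; exact hq)
  have hzK : z ∈ interior K := by
    apply hK.2.1.openSegment_self_interior_subset_interior hy hqK
    refine ⟨s / (1 + s), 1 / (1 + s), div_pos hs h1s, one_div_pos.mpr h1s, ?_, ?_⟩
    · rw [← add_div, div_eq_one_iff_eq h1s.ne']; ring
    · ext j
      simp only [Pi.add_apply, Pi.smul_apply, Pi.sub_apply, smul_eq_mul]
      field_simp
      ring
  have hempty := hK.2.2.2
  rw [Set.eq_empty_iff_forall_notMem] at hempty
  exact hempty z ⟨hzK, hzint⟩

/-- choose small positive s with q(s) landing in an open set containing q(0) -/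
lemma exists_small_s {V : Set (Fin d → ℝ)} (hV : IsOpen V) (z y : Fin d → ℝ)
    (hz : z ∈ V) : ∃ s : ℝ, 0 < s ∧ (1 + s) • z - s • y ∈ V := by
  have hcont : Continuous (fun s : ℝ => (1 + s) • z - s • y) := by
    fun_prop
  have hnh : (fun s : ℝ => (1 + s) • z - s • y) ⁻¹' V ∈ nhds (0:ℝ) :=
    hcont.continuousAt.preimage_mem_nhds (hV.mem_nhds (by simpa using hz))
  obtain ⟨ε, hε, hball⟩ := Metric.mem_nhds_iff.mp hnh
  refine ⟨ε / 2, by linarith, hball ?_⟩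
  rw [Metric.mem_ball, dist_zero_right, Real.norm_eq_abs, abs_of_pos (by linarith)]
  linarith

lemma maximal_of_kappa_one (hd : 0 < d) (a : Fin d → ℝ) (ha : ∀ i, 0 < a i)
    (hk : kappa a = 1) (K : Set (Fin d → ℝ)) (hK : IsLatticeFree K)
    (hsub : simS a ⊆ K) : K ⊆ simS a := by
  intro y hy
  by_contra hyS
  by_cases hcase : ∃ i, y i < 0
  · -- case A
    obtain ⟨i, hyi⟩ := hcase
    set z : Fin d → ℝ := fun j => if j = i then 0 else 1 with hzdef
    have hzint : IsIntegralPoint z := fun j => by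
      by_cases h : j = i <;> · exact ⟨if j = i then 0 else 1, by simp [hzdef, h]⟩
    have hzsum : ∑ j, z j / a j = 1 - (a i)⁻¹ := by
      have : ∀ j, z j / a j = (a j)⁻¹ - (if j = i then (a i)⁻¹ else 0) := by
        intro j
        by_cases h : j = i
        · subst h; simp [hzdef]
        · simp [hzdef, h, one_div]
      rw [Finset.sum_congr rfl fun j _ => this j, Finset.sum_sub_distrib,
        Finset.sum_ite_eq' Finset.univ i]
      have hka : ∑ j : Fin d, (a j)⁻¹ = 1 := hk
      rw [hka]
      simp
    set V : Set (Fin d → ℝ) :=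
      {x | ∀ j, j ≠ i → 0 < x j} ∩ {x | ∑ j, x j / a j < 1} with hVdef
    have hVopen : IsOpen V := by
      apply IsOpen.inter
      · have : {x : Fin d → ℝ | ∀ j, j ≠ i → 0 < x j}
            = ⋂ j, {x : Fin d → ℝ | j ≠ i → 0 < x j} := by ext x; simp
        rw [this]
        refine isOpen_iInter_of_finite fun j => ?_
        by_cases h : j = i
        · simp only [h]; simp [isOpen_const]
        · have : {x : Fin d → ℝ | j ≠ i → 0 < x j} = {x : Fin d → ℝ | 0 < x j} := by
            ext x; simp [h]
          rw [this]
          exact isOpen_lt continuous_const (continuous_apply j)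
      · exact isOpen_lt (by continuity) continuous_const
    have hzV : z ∈ V := by
      constructor
      · intro j hj; simp [hzdef, hj]
      · rw [Set.mem_setOf_eq, hzsum]
        have := ha i
        have : 0 < (a i)⁻¹ := by positivity
        linarith
    obtain ⟨s, hs, hsV⟩ := exists_small_s hVopen z y hzV
    refine key_contra hd a ha K hK hsub y hy z hzint s hs ⟨?_, hsV.2⟩
    intro j
    by_cases h : j = i
    · subst h
      have hzj : z j = 0 := by simp [hzdef]
      simp only [Pi.sub_apply, Pi.smul_apply, smul_eq_mul, hzj]
      nlinarith
    · exact hsV.1 j h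
  · -- case B
    push_neg at hcase
    have hysum : 1 < ∑ j, y j / a j := by
      by_contra h
      push_neg at h
      exact hyS ⟨hcase, h⟩
    set z : Fin d → ℝ := fun _ => 1 with hzdef
    have hzint : IsIntegralPoint z := fun j => ⟨1, by simp [hzdef]⟩
    have hzsum : ∑ j, z j / a j = 1 := by
      simp only [hzdef, one_div]
      exact hk
    set V : Set (Fin d → ℝ) := {x | ∀ j, 0 < x j} with hVdef
    have hVopen : IsOpen V := by
      have : V = ⋂ j, {x : Fin d → ℝ | 0 < x j} := by ext x; simp [hVdef]
      rw [this]
      exact isOpen_iInter_of_finite fun j => isOpen_lt continuous_const (continuous_apply j)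
    have hzV : z ∈ V := fun j => one_pos
    obtain ⟨s, hs, hsV⟩ := exists_small_s hVopen z y hzV
    refine key_contra hd a ha K hK hsub y hy z hzint s hs ⟨hsV, ?_⟩
    rw [sum_comb, hzsum]
    nlinarith

end AuxStatement7

/-- for `a ∈ ℝ_{>0}^d`, the simplex `T(a)` is maximal lattice-free iff
`κ(a) = 1`. -/
theorem statement7 {d : ℕ} (hd : 0 < d) (a : Fin d → ℝ) (ha : ∀ i, 0 < a i) :
    IsMaxLatticeFree (axisSimplex a) ↔ kappa a = 1 := by
  rw [axisSimplex_eq a ha]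
  constructor
  · intro hmax
    have hk1 : 1 ≤ kappa a := by
      rw [← simU_lattice_empty_iff a ha, ← interior_simS hd a ha]
      exact hmax.1.2.2.2
    by_contra hne
    have hk : 1 < kappa a := lt_of_le_of_ne hk1 (Ne.symm hne)
    have hk0 : (0:ℝ) < kappa a := by linarith
    set b : Fin d → ℝ := fun i => kappa a * a i with hbdef
    have hb : ∀ i, 0 < b i := fun i => mul_pos hk0 (ha i)
    have hkb : kappa b = 1 := by
      unfold kappa
      have : ∀ i : Fin d, (b i)⁻¹ = (kappa a)⁻¹ * (a i)⁻¹ := fun i => by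
        rw [hbdef]; rw [mul_inv, mul_comm]
      rw [Finset.sum_congr rfl fun i _ => this i, ← Finset.mul_sum]
      exact inv_mul_cancel₀ hk0.ne'
    have hsubset : simS a ⊆ simS b := by
      rintro x ⟨h0, h1⟩
      refine ⟨h0, ?_⟩
      have hkey : ∑ i, x i / b i = (kappa a)⁻¹ * ∑ i, x i / a i := by
        rw [Finset.mul_sum]
        refine Finset.sum_congr rfl fun i _ => ?_
        rw [hbdef]
        field_simp
      rw [hkey]
      have hinv : (kappa a)⁻¹ < 1 := by
        rw [inv_lt_one_iff₀]; right; exact hk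
      have hinv0 : 0 < (kappa a)⁻¹ := by positivity
      nlinarith
    have heq := hmax.2 (simS b) (latticeFree_simS hd b hb (le_of_eq hkb.symm)) hsubset
    set i₀ : Fin d := ⟨0, hd⟩ with hi₀
    set p : Fin d → ℝ := fun j => if j = i₀ then b i₀ else 0 with hpdef
    have hsump : ∀ c : Fin d → ℝ, (∀ i, 0 < c i) →
        ∑ j, p j / c j = b i₀ / c i₀ := by
      intro c hc
      have : ∀ j, p j / c j = if j = i₀ then b i₀ / c i₀ else 0 := by
        intro j
        by_cases h : j = i₀
        · subst h; simp [hpdef]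
        · simp [hpdef, h]
      rw [Finset.sum_congr rfl fun j _ => this j, Finset.sum_ite_eq' Finset.univ i₀]
      simp
    have hpb : p ∈ simS b := by
      refine ⟨fun j => ?_, ?_⟩
      · rw [hpdef]
        by_cases h : j = i₀ <;> simp [h, (hb i₀).le]
      · rw [hsump b hb, div_self (hb i₀).ne']
    have hpa : p ∉ simS a := by
      rintro ⟨-, hsum⟩
      rw [hsump a ha, hbdef] at hsum
      rw [mul_div_assoc, div_self (ha i₀).ne', mul_one] at hsum
      linarith
    rw [← heq] at hpb
    exact hpa hpb
  · intro hk
    refine ⟨latticeFree_simS hd a ha (le_of_eq hk.symm), ?_⟩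
    intro K hK hsub
    exact subset_antisymm hsub (maximal_of_kappa_one hd a ha hk K hK hsub)
end

section
/- Let P and Q be d-dimensional strongly blocked lattice-free polytopes in ℝ^d such that Q_I = A(P_I) for some affine unimodular transformation A ∈ Aff(ℤ^d), where P_I = conv(P ∩ ℤ^d) and Q_I = conv(Q ∩ ℤ^d) are the integer hulls. Then Q = A(P). -/
open scoped BigOperators

open Module Set

namespace Statement9Aux

lemma kills_span {d : ℕ} (f : Module.Dual ℝ (Fin d → ℝ)) {S : Set (Fin d → ℝ)}
    (h : ∀ v ∈ S, f v = 0) : Submodule.span ℝ S ≤ LinearMap.ker f := by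
  rw [Submodule.span_le]; intro v hv; exact h v hv

lemma bfs_aux {d : ℕ} (V : Finset (Fin d → ℝ)) (x : Fin d → ℝ)
    (hspan : Submodule.span ℝ ((fun v => v - x) '' ↑V) = ⊤) :
    ∀ (k : ℕ) (l : Module.Dual ℝ (Fin d → ℝ)), (∀ v ∈ V, l (v - x) ≤ -1) →
    d ≤ k + finrank ℝ (Submodule.span ℝ ((fun v => v - x) '' {v | v ∈ V ∧ l (v - x) = -1})) →
    ∃ l' : Module.Dual ℝ (Fin d → ℝ), (∀ v ∈ V, l' (v - x) ≤ -1) ∧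
      Submodule.span ℝ ((fun v => v - x) '' {v | v ∈ V ∧ l' (v - x) = -1}) = ⊤ := by
  intro k
  induction k with
  | zero =>
    intro l hl hrk
    refine ⟨l, hl, ?_⟩
    have hd : finrank ℝ (Fin d → ℝ) = d := Module.finrank_fin_fun ℝ
    apply Submodule.eq_top_of_finrank_eq
    have h1 := Submodule.finrank_le (Submodule.span ℝ ((fun v => v - x) '' {v | v ∈ V ∧ l (v - x) = -1}))
    omega
  | succ k ih =>
    intro l hl hrk
    by_cases htop : Submodule.span ℝ ((fun v => v - x) '' {v | v ∈ V ∧ l (v - x) = -1}) = ⊤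
    · exact ⟨l, hl, htop⟩
    obtain ⟨f, hf0, hfker⟩ := Submodule.exists_dual_map_eq_bot_of_lt_top
      (lt_top_iff_ne_top.2 htop) inferInstance
    have hfkill : ∀ v ∈ V, l (v - x) = -1 → f (v - x) = 0 := by
      intro v hv hlv
      have : f (v - x) ∈ Submodule.map f (Submodule.span ℝ ((fun v => v - x) '' {v | v ∈ V ∧ l (v - x) = -1})) :=
        Submodule.mem_map_of_mem (Submodule.subset_span ⟨v, ⟨hv, hlv⟩, rfl⟩)
      rw [hfker] at this
      exact this
    have hex : ∃ v ∈ V, f (v - x) ≠ 0 := by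
      by_contra hcon
      push_neg at hcon
      apply hf0
      apply LinearMap.ext
      intro u
      have hu : u ∈ Submodule.span ℝ ((fun v => v - x) '' ↑V) := by rw [hspan]; trivial
      have := kills_span f (fun w hw => by
        obtain ⟨v, hv, rfl⟩ := hw; exact hcon v hv) hu
      simpa using this
    obtain ⟨vb, hvb, hvbf⟩ := hex
    obtain ⟨g, hgkill, hgex⟩ : ∃ g : Module.Dual ℝ (Fin d → ℝ),
        (∀ v ∈ V, l (v - x) = -1 → g (v - x) = 0) ∧ ∃ v ∈ V, 0 < g (v - x) := by
      rcases lt_or_gt_of_ne hvbf with hneg | hpos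
      · exact ⟨-f, fun v hv hlv => by simp [hfkill v hv hlv], vb, hvb, by simpa using hneg⟩
      · exact ⟨f, hfkill, vb, hvb, hpos⟩
    classical
    set S := V.filter (fun v => 0 < g (v - x)) with hS
    have hSne : S.Nonempty := by
      obtain ⟨v, hv, hgv⟩ := hgex
      exact ⟨v, Finset.mem_filter.2 ⟨hv, hgv⟩⟩
    set t := S.inf' hSne (fun v => (-1 - l (v - x)) / g (v - x)) with htdef
    have ht0 : 0 ≤ t := by
      apply Finset.le_inf'
      intro v hv
      rcases Finset.mem_filter.1 hv with ⟨hvV, hgv⟩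
      have := hl v hvV
      apply div_nonneg (by linarith) hgv.le
    set l' := l + t • g with hl'def
    have hfeas : ∀ v ∈ V, l' (v - x) ≤ -1 := by
      intro v hv
      have hval : l' (v - x) = l (v - x) + t * g (v - x) := by simp [hl'def]
      rcases le_or_gt (g (v - x)) 0 with hg | hg
      · have h1 : t * g (v - x) ≤ 0 := mul_nonpos_of_nonneg_of_nonpos ht0 hg
        have h2 := hl v hv
        linarith
      · have hvS : v ∈ S := Finset.mem_filter.2 ⟨hv, hg⟩
        have hle : t ≤ (-1 - l (v - x)) / g (v - x) := Finset.inf'_le _ hvS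
        rw [le_div_iff₀ hg] at hle
        linarith
    have hold : ∀ v ∈ V, l (v - x) = -1 → l' (v - x) = -1 := by
      intro v hv hlv
      have := hgkill v hv hlv
      simp [hl'def, this, hlv]
    obtain ⟨vs, hvsS, hvs⟩ := Finset.exists_mem_eq_inf' hSne (fun v => (-1 - l (v - x)) / g (v - x))
    rcases Finset.mem_filter.1 hvsS with ⟨hvsV, hgvs⟩
    have hnew : l' (vs - x) = -1 := by
      have h1 : l' (vs - x) = l (vs - x) + t * g (vs - x) := by simp [hl'def]
      rw [h1, htdef, hvs, div_mul_cancel₀ _ (ne_of_gt hgvs)]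
      ring
    set M := Submodule.span ℝ ((fun v => v - x) '' {v | v ∈ V ∧ l (v - x) = -1}) with hM
    set M' := Submodule.span ℝ ((fun v => v - x) '' {v | v ∈ V ∧ l' (v - x) = -1}) with hM'
    have hMM' : M ≤ M' := Submodule.span_mono (Set.image_mono (fun v hv => ⟨hv.1, hold v hv.1 hv.2⟩))
    have hvsM' : vs - x ∈ M' := Submodule.subset_span ⟨vs, ⟨hvsV, hnew⟩, rfl⟩
    have hvsM : vs - x ∉ M := by
      intro hmem
      have := kills_span g (fun w hw => by
        obtain ⟨v, hv, rfl⟩ := hw; exact hgkill v hv.1 hv.2) hmem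
      simp only [LinearMap.mem_ker] at this
      exact (ne_of_gt hgvs) this
    have hlt : M < M' := lt_of_le_of_ne hMM' (fun h => hvsM (h ▸ hvsM'))
    have hrk' : finrank ℝ M < finrank ℝ M' := Submodule.finrank_lt_finrank_of_lt hlt
    exact ih l' hfeas (by rw [← hM']; omega)

lemma ker_finrank_of_unit {d : ℕ} (l : Module.Dual ℝ (Fin d → ℝ)) {u : Fin d → ℝ}
    (hu : l u = 1) : finrank ℝ (LinearMap.ker l) + 1 = d := by
  have hr : LinearMap.range l = ⊤ := by
    rw [LinearMap.range_eq_top]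
    intro r
    exact ⟨r • u, by simp [hu]⟩
  have h2 := LinearMap.finrank_range_add_finrank_ker l
  rw [hr] at h2
  simp only [finrank_top, finrank_self] at h2
  have hd : finrank ℝ (Fin d → ℝ) = d := Module.finrank_fin_fun ℝ
  omega

lemma facet_sep {d : ℕ} (hd : 0 < d) (V : Finset (Fin d → ℝ))
    (hspan : affineSpan ℝ (V : Set (Fin d → ℝ)) = ⊤)
    {x : Fin d → ℝ} (hx : x ∉ convexHull ℝ (V : Set (Fin d → ℝ))) :
    ∃ (l : (Fin d → ℝ) →L[ℝ] ℝ) (b : ℝ),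
      (∀ y ∈ convexHull ℝ (V : Set (Fin d → ℝ)), l y ≤ b) ∧ b < l x ∧
      IsFacet (convexHull ℝ (V : Set (Fin d → ℝ)))
        {y | y ∈ convexHull ℝ (V : Set (Fin d → ℝ)) ∧ l y = b} := by
  set P := convexHull ℝ (V : Set (Fin d → ℝ)) with hP
  have hxV : x ∉ (V : Set (Fin d → ℝ)) := fun h => hx (subset_convexHull ℝ _ h)
  have hVspan : Submodule.span ℝ ((fun v => v - x) '' ↑V) = ⊤ := by
    have h1 : affineSpan ℝ (insert x (V : Set (Fin d → ℝ))) = ⊤ :=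
      top_unique (hspan ▸ affineSpan_mono ℝ (Set.subset_insert _ _))
    have h2 : vectorSpan ℝ (insert x (V : Set (Fin d → ℝ))) = ⊤ := by
      rw [← direction_affineSpan, h1, AffineSubspace.direction_top]
    rw [vectorSpan_eq_span_vsub_set_right_ne ℝ (Set.mem_insert x _)] at h2
    have h3 : insert x (V : Set (Fin d → ℝ)) \ {x} = (V : Set (Fin d → ℝ)) := by
      rw [Set.insert_diff_of_mem _ (Set.mem_singleton x), Set.diff_singleton_eq_self hxV]
    rw [h3] at h2
    simpa [vsub_eq_sub] using h2
  obtain ⟨f, s, hfs, hsx⟩ := geometric_hahn_banach_closed_point (convex_convexHull ℝ _)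
    (V.finite_toSet.isCompact_convexHull ℝ).isClosed hx
  have hc : (0:ℝ) < f x - s := by linarith
  set l₀ : Module.Dual ℝ (Fin d → ℝ) := (f x - s)⁻¹ • (f : (Fin d → ℝ) →ₗ[ℝ] ℝ) with hl₀
  have hfeas₀ : ∀ v ∈ V, l₀ (v - x) ≤ -1 := by
    intro v hv
    have h1 : f v < s := hfs v (subset_convexHull ℝ _ hv)
    have h2 : l₀ (v - x) = (f x - s)⁻¹ * (f v - f x) := by simp [hl₀, map_sub]; ring
    rw [h2, inv_mul_le_iff₀ hc]
    linarith
  obtain ⟨l, hfeas, htight⟩ := bfs_aux V x hVspan d l₀ hfeas₀ (by omega)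
  set L := LinearMap.toContinuousLinearMap l with hL
  have hLl : ∀ y, L y = l y := fun y => rfl
  set b : ℝ := l x - 1 with hb
  have hvalid : ∀ y ∈ P, L y ≤ b := by
    have h0 : P ⊆ {y | l y ≤ b} := by
      rw [hP]
      apply convexHull_min _ (convex_halfSpace_le (IsLinearMap.mk l.map_add l.map_smul) b)
      intro v hv
      have := hfeas v hv
      simp only [map_sub] at this
      simp only [Set.mem_setOf_eq, hb]
      linarith
    exact fun y hy => h0 hy
  have hTne : ∃ v, v ∈ V ∧ l (v - x) = -1 := by
    by_contra hcon
    push_neg at hcon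
    have hemp : {v | v ∈ V ∧ l (v - x) = -1} = (∅ : Set (Fin d → ℝ)) := by
      ext v; simp only [Set.mem_setOf_eq, Set.mem_empty_iff_false, iff_false, not_and]
      exact fun hv => hcon v hv
    rw [hemp] at htight
    simp only [Set.image_empty, Submodule.span_empty] at htight
    have h0 : finrank ℝ (⊤ : Submodule ℝ (Fin d → ℝ)) = 0 := by rw [← htight]; simp
    rw [finrank_top, Module.finrank_fin_fun ℝ] at h0
    omega
  obtain ⟨v₀, hv₀V, hv₀t⟩ := hTne
  have hv₀P : v₀ ∈ P := subset_convexHull ℝ _ hv₀V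
  have hv₀b : l v₀ = b := by
    have : l v₀ - l x = -1 := by simpa [map_sub] using hv₀t
    rw [hb]; linarith
  set F := {y | y ∈ P ∧ L y = b} with hF
  have hFne : F.Nonempty := ⟨v₀, hv₀P, by rw [hLl]; exact hv₀b⟩
  refine ⟨L, b, hvalid, by rw [hLl]; rw [hb]; linarith, ?_, hFne, ?_⟩
  · intro _
    refine ⟨L, ?_⟩
    ext y
    constructor
    · rintro ⟨hyP, hyb⟩
      exact ⟨hyP, fun z hz => by rw [hyb]; exact hvalid z hz⟩
    · rintro ⟨hyP, hymax⟩
      refine ⟨hyP, le_antisymm (hvalid y hyP) ?_⟩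
      have := hymax v₀ hv₀P
      rw [hLl v₀, hv₀b] at this
      exact this
  · show finrank ℝ (vectorSpan ℝ F) + 1 = d
    have hu : l (x - v₀) = 1 := by
      rw [map_sub, hv₀b, hb]; ring
    have hupper : vectorSpan ℝ F ≤ LinearMap.ker l := by
      rw [vectorSpan_def, Submodule.span_le]
      rintro w ⟨y₁, hy₁, y₂, hy₂, rfl⟩
      have h1 : l y₁ = b := hy₁.2
      have h2 : l y₂ = b := hy₂.2
      simp only [SetLike.mem_coe, LinearMap.mem_ker, vsub_eq_sub, map_sub, h1, h2, sub_self]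
    have hker : finrank ℝ (LinearMap.ker l) + 1 = d := ker_finrank_of_unit l hu
    have hup : finrank ℝ (vectorSpan ℝ F) ≤ finrank ℝ (LinearMap.ker l) :=
      Submodule.finrank_mono hupper
    have hTF : {v | v ∈ V ∧ l (v - x) = -1} ⊆ F := by
      rintro v ⟨hvV, hvt⟩
      refine ⟨subset_convexHull ℝ _ hvV, ?_⟩
      rw [hLl]
      have : l v - l x = -1 := by simpa [map_sub] using hvt
      rw [hb]; linarith
    have hsub : Submodule.span ℝ ((fun v => v - x) '' {v | v ∈ V ∧ l (v - x) = -1}) ≤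
        vectorSpan ℝ F ⊔ Submodule.span ℝ {v₀ - x} := by
      rw [Submodule.span_le]
      rintro w ⟨v, hv, rfl⟩
      have h1 : v - v₀ ∈ vectorSpan ℝ F := by
        have := vsub_mem_vectorSpan ℝ (hTF hv) (hTF ⟨hv₀V, hv₀t⟩)
        simpa [vsub_eq_sub] using this
      have h2 : v₀ - x ∈ Submodule.span ℝ ({v₀ - x} : Set (Fin d → ℝ)) :=
        Submodule.subset_span rfl
      have heq : v - x = (v - v₀) + (v₀ - x) := by abel
      show v - x ∈ vectorSpan ℝ F ⊔ Submodule.span ℝ {v₀ - x}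
      rw [heq]
      exact Submodule.add_mem _ (Submodule.mem_sup_left h1) (Submodule.mem_sup_right h2)
    have hlow : d ≤ finrank ℝ (vectorSpan ℝ F) + 1 := by
      have h1 : (⊤ : Submodule ℝ (Fin d → ℝ)) ≤ vectorSpan ℝ F ⊔ Submodule.span ℝ {v₀ - x} :=
        htight ▸ hsub
      have h2 : finrank ℝ (⊤ : Submodule ℝ (Fin d → ℝ)) = d := by
        rw [finrank_top]; exact Module.finrank_fin_fun ℝ
      have h3 := Submodule.finrank_mono h1
      have h4 := Submodule.finrank_sup_add_finrank_inf_eq (vectorSpan ℝ F)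
        (Submodule.span ℝ ({v₀ - x} : Set (Fin d → ℝ)))
      have h5 : finrank ℝ (Submodule.span ℝ ({v₀ - x} : Set (Fin d → ℝ))) ≤ 1 := by
        by_cases h : v₀ - x = 0
        · rw [h, Submodule.span_zero_singleton]; simp
        · exact le_of_eq (finrank_span_singleton h)
      omega
    omega

/-- the affine span of a `(d-1)`-dimensional subset of the hyperplane `{l = b}` is
that hyperplane. -/
lemma span_iff_hyper {d : ℕ} (l : (Fin d → ℝ) →L[ℝ] ℝ) (b : ℝ) {u : Fin d → ℝ} (hu : l u = 1)
    (FI : Set (Fin d → ℝ)) (hFIH : ∀ y ∈ FI, l y = b)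
    (hdim : finrank ℝ (vectorSpan ℝ FI) + 1 = d)
    {z : Fin d → ℝ} (hz : z ∈ FI) :
    ∀ y, y ∈ affineSpan ℝ FI ↔ l y = b := by
  have hzb : l z = b := hFIH z hz
  set S := affineSpan ℝ FI with hS
  set H := AffineSubspace.mk' z (LinearMap.ker (l : (Fin d → ℝ) →ₗ[ℝ] ℝ)) with hH
  have hmemH : ∀ y, y ∈ H ↔ l y = b := by
    intro y
    rw [hH, AffineSubspace.mem_mk']
    simp only [vsub_eq_sub, LinearMap.mem_ker, ContinuousLinearMap.coe_coe, map_sub]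
    constructor
    · intro h; have h2 : l y = l z := by linarith
      rw [h2, hzb]
    · intro h; rw [h, hzb]; ring
  have hSH : S ≤ H := by
    rw [hS]
    apply affineSpan_le.2
    intro y hy
    exact (hmemH y).2 (hFIH y hy)
  have hdirS : S.direction = H.direction := by
    apply Submodule.eq_of_le_of_finrank_eq (AffineSubspace.direction_le hSH)
    rw [hH, AffineSubspace.direction_mk', hS, direction_affineSpan]
    have h1 := ker_finrank_of_unit (l : (Fin d → ℝ) →ₗ[ℝ] ℝ) (by simpa using hu)
    omega
  have hSeqH : S = H := AffineSubspace.ext_of_direction_eq hdirS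
    ⟨z, mem_affineSpan ℝ hz, AffineSubspace.self_mem_mk' z _⟩
  intro y
  rw [hS] at hSeqH ⊢
  rw [hSeqH]
  exact hmemH y

lemma relint_ball {d : ℕ} (l : (Fin d → ℝ) →L[ℝ] ℝ) (b : ℝ) {u : Fin d → ℝ} (hu : l u = 1)
    (FI : Set (Fin d → ℝ)) (hFIH : ∀ y ∈ FI, l y = b)
    (hdim : finrank ℝ (vectorSpan ℝ FI) + 1 = d)
    {z : Fin d → ℝ} (hz : z ∈ intrinsicInterior ℝ FI) :
    l z = b ∧ ∃ ε > 0, ∀ y, l y = b → ‖y - z‖ < ε → y ∈ FI := by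
  have hzFI : z ∈ FI := intrinsicInterior_subset hz
  have hzb : l z = b := hFIH z hzFI
  refine ⟨hzb, ?_⟩
  have hiff := span_iff_hyper l b hu FI hFIH hdim hzFI
  obtain ⟨w, hw, hwz⟩ := hz
  rw [mem_interior_iff_mem_nhds, Metric.mem_nhds_iff] at hw
  obtain ⟨ε, hε, hball⟩ := hw
  refine ⟨ε, hε, fun y hyb hyz => ?_⟩
  have hyS : y ∈ affineSpan ℝ FI := (hiff y).2 hyb
  have hmem : (⟨y, hyS⟩ : affineSpan ℝ FI) ∈ Metric.ball w ε := by
    rw [Metric.mem_ball, Subtype.dist_eq]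
    show dist y (w : Fin d → ℝ) < ε
    rw [hwz, dist_eq_norm]
    exact hyz
  exact hball hmem

lemma near_cap {d : ℕ} (l : (Fin d → ℝ) →L[ℝ] ℝ) (b : ℝ) (FI : Set (Fin d → ℝ))
    {z : Fin d → ℝ} (hzb : l z = b) {ε : ℝ} (hε : 0 < ε)
    (hball : ∀ y, l y = b → ‖y - z‖ < ε → y ∈ FI)
    {x : Fin d → ℝ} (hx : b < l x) :
    ∃ δ > 0, ∀ y, b ≤ l y → ‖y - z‖ < δ → y ∈ convexHull ℝ (insert x FI) := by
  set α := l x - b with hα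
  have hα0 : 0 < α := by rw [hα]; linarith
  clear_value α
  set C := ‖l‖ + 1 with hC
  have hC0 : (0:ℝ) < C := by rw [hC]; positivity
  clear_value C
  set D := 1 + C * ‖x - z‖ / α with hD
  have hD0 : (0:ℝ) < D := by rw [hD]; positivity
  clear_value D
  obtain ⟨δ, hδ0, hδε, hδα⟩ : ∃ δ : ℝ, 0 < δ ∧ δ * (2 * D) ≤ ε ∧ δ * (2 * C) ≤ α := by
    refine ⟨min (ε / (2 * D)) (α / (2 * C)), lt_min (by positivity) (by positivity), ?_, ?_⟩
    · rw [← le_div_iff₀ (by positivity : (0:ℝ) < 2 * D)]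
      exact min_le_left _ _
    · rw [← le_div_iff₀ (by positivity : (0:ℝ) < 2 * C)]
      exact min_le_right _ _
  refine ⟨δ, hδ0, fun y hyb hyz => ?_⟩
  set s := l y - b with hs
  clear_value s
  have hs0 : 0 ≤ s := by rw [hs]; linarith
  have hsle : s ≤ C * ‖y - z‖ := by
    have h1 : s = l (y - z) := by rw [hs, map_sub, hzb]
    have h2 : |l (y - z)| ≤ ‖l‖ * ‖y - z‖ := by
      rw [← Real.norm_eq_abs]; exact l.le_opNorm _
    have h3 : ‖l‖ * ‖y - z‖ ≤ C * ‖y - z‖ := by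
      apply mul_le_mul_of_nonneg_right _ (norm_nonneg _)
      rw [hC]; linarith
    calc s = l (y - z) := h1
    _ ≤ |l (y - z)| := le_abs_self _
    _ ≤ ‖l‖ * ‖y - z‖ := h2
    _ ≤ C * ‖y - z‖ := h3
  set lam := s / α with hlam
  clear_value lam
  have hlam0 : 0 ≤ lam := by rw [hlam]; exact div_nonneg hs0 hα0.le
  have hlamle : lam ≤ 1 / 2 := by
    rw [hlam, div_le_div_iff₀ hα0 (by norm_num)]
    have h3 : C * ‖y - z‖ < C * δ := mul_lt_mul_of_pos_left hyz hC0
    nlinarith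
  have h1lam : (0:ℝ) < 1 - lam := by linarith
  set w := (1 - lam)⁻¹ • (y - lam • x) with hw
  clear_value w
  have hlw : l w = b := by
    rw [hw, map_smul, map_sub, map_smul]
    have h1 : l y = b + s := by rw [hs]; ring
    rw [h1]
    have h2 : l x = b + α := by rw [hα]; ring
    rw [h2]
    have hsa : s = lam * α := by rw [hlam]; field_simp
    rw [smul_eq_mul, smul_eq_mul]
    field_simp
    nlinarith [hsa]
  have hwz : ‖w - z‖ < ε := by
    have hkey : (1 - lam) • (w - z) = (y - z) - lam • (x - z) := by
      rw [hw, smul_sub, smul_smul, mul_inv_cancel₀ (ne_of_gt h1lam), one_smul]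
      module
    have hwzeq : w - z = (1 - lam)⁻¹ • ((y - z) - lam • (x - z)) := by
      rw [← hkey, smul_smul, inv_mul_cancel₀ (ne_of_gt h1lam), one_smul]
    have hnorm : ‖w - z‖ ≤ (1 - lam)⁻¹ * (‖y - z‖ + lam * ‖x - z‖) := by
      rw [hwzeq, norm_smul]
      simp only [Real.norm_eq_abs, abs_of_pos (inv_pos.2 h1lam)]
      apply mul_le_mul_of_nonneg_left _ (inv_pos.2 h1lam).le
      calc ‖(y - z) - lam • (x - z)‖ ≤ ‖y - z‖ + ‖lam • (x - z)‖ := norm_sub_le _ _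
      _ = ‖y - z‖ + lam * ‖x - z‖ := by rw [norm_smul, Real.norm_eq_abs, abs_of_nonneg hlam0]
    have hinv2 : (1 - lam)⁻¹ ≤ 2 := by
      rw [inv_le_comm₀ h1lam (by norm_num)]
      linarith
    have hlamy : lam ≤ C * ‖y - z‖ / α := by
      rw [hlam]
      gcongr
    have hsum : ‖y - z‖ + lam * ‖x - z‖ ≤ ‖y - z‖ * D := by
      rw [hD]
      have h1 : lam * ‖x - z‖ ≤ (C * ‖y - z‖ / α) * ‖x - z‖ :=
        mul_le_mul_of_nonneg_right hlamy (norm_nonneg _)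
      have h2 : (C * ‖y - z‖ / α) * ‖x - z‖ = ‖y - z‖ * (C * ‖x - z‖ / α) := by ring
      nlinarith
    calc ‖w - z‖ ≤ (1 - lam)⁻¹ * (‖y - z‖ + lam * ‖x - z‖) := hnorm
    _ ≤ 2 * (‖y - z‖ * D) := by
        apply mul_le_mul hinv2 hsum _ (by norm_num)
        positivity
    _ < 2 * (δ * D) := by
        apply mul_lt_mul_of_pos_left _ (by norm_num)
        exact mul_lt_mul_of_pos_right hyz hD0
    _ ≤ ε := by linarith [hδε]
  have hwFI : w ∈ FI := hball w hlw hwz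
  have hyeq : y = (1 - lam) • w + lam • x := by
    rw [hw, smul_smul, mul_inv_cancel₀ (ne_of_gt h1lam), one_smul]
    abel
  rw [hyeq]
  exact (convex_convexHull ℝ (insert x FI))
    (subset_convexHull ℝ _ (Set.mem_insert_of_mem x hwFI))
    (subset_convexHull ℝ _ (Set.mem_insert x FI))
    h1lam.le hlam0 (by ring)

/-- The region of points `x` such that adding `x` to `R` keeps the interior of the
convex hull free of lattice points. -/
def goodRegion {d : ℕ} (R : Set (Fin d → ℝ)) : Set (Fin d → ℝ) :=
  {x | interior (convexHull ℝ (insert x R)) ∩ latticePts d = ∅}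

lemma subset_good {d : ℕ} {P R : Set (Fin d → ℝ)} (hconv : Convex ℝ P)
    (hfree : interior P ∩ latticePts d = ∅) (hR : R ⊆ P) : P ⊆ goodRegion R := by
  intro x hx
  show interior (convexHull ℝ (insert x R)) ∩ latticePts d = ∅
  have h1 : convexHull ℝ (insert x R) ⊆ P := convexHull_min (Set.insert_subset hx hR) hconv
  have h2 := interior_mono h1
  rw [Set.eq_empty_iff_forall_notMem] at hfree ⊢
  exact fun y hy => hfree y ⟨h2 hy.1, hy.2⟩

lemma intHull_subset {d : ℕ} {K : Set (Fin d → ℝ)} (hK : Convex ℝ K) : intHull K ⊆ K :=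
  convexHull_min Set.inter_subset_left hK

lemma good_subset {d : ℕ} {P : Set (Fin d → ℝ)}
    (hPpoly : IsPolytope P) (hPlf : IsLatticeFree P) (hPsb : IsStronglyBlocked P) :
    goodRegion (intHull P) ⊆ P := by
  obtain ⟨hclosed, hconv, hint, hfree⟩ := hPlf
  rcases Nat.eq_zero_or_pos d with hd0 | hd
  · exfalso
    obtain ⟨q, hq⟩ := hint
    have hmem : q ∈ interior P ∩ latticePts d := ⟨hq, fun i => absurd i.isLt (by omega)⟩
    rw [Set.eq_empty_iff_forall_notMem] at hfree
    exact hfree q hmem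
  obtain ⟨V, hV⟩ := hPpoly
  have hPspan : affineSpan ℝ (V : Set (Fin d → ℝ)) = ⊤ := by
    have h1 : (interior P).Nonempty := hint
    rw [hV] at h1
    have h2 := ((convex_convexHull ℝ (V : Set (Fin d → ℝ))).interior_nonempty_iff_affineSpan_eq_top).1 h1
    rwa [affineSpan_convexHull] at h2
  intro x hx
  by_contra hxP
  rw [hV] at hxP
  obtain ⟨l, b, hvalid, hblx, hfacet⟩ := facet_sep hd V hPspan hxP
  rw [← hV] at hvalid hfacet
  set F := {y | y ∈ P ∧ l y = b} with hF
  obtain ⟨hfacet', hdimI, z, hzrel, hzint⟩ := hPsb F hfacet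
  set FI := intHull F with hFI
  have hFP : F ⊆ P := fun y hy => hy.1
  have hFH : ∀ y ∈ F, l y = b := fun y hy => hy.2
  have hFIF : FI ⊆ F := intHull_subset (by
    rw [hF]
    exact (hconv.inter (convex_hyperplane (IsLinearMap.mk l.map_add l.map_smul) b)))
  have hFIH : ∀ y ∈ FI, l y = b := fun y hy => hFH y (hFIF hy)
  have hFIPI : FI ⊆ intHull P :=
    convexHull_mono (Set.inter_subset_inter hFP (le_refl _))
  obtain ⟨v₀, hv₀⟩ := hfacet.2.1
  have hv₀b : l v₀ = b := hv₀.2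
  set u := (l x - b)⁻¹ • (x - v₀) with hu_def
  have hu : l u = 1 := by
    rw [hu_def, map_smul, map_sub, hv₀b, smul_eq_mul]
    exact inv_mul_cancel₀ (by linarith)
  obtain ⟨hzb, ε, hε, hball⟩ := relint_ball l b hu FI hFIH hdimI hzrel
  -- find a point of the integer hull strictly below the hyperplane
  have hex_p : ∃ p ∈ intHull P, l p < b := by
    by_contra hcon
    push_neg at hcon
    have hPIH : ∀ p ∈ intHull P, l p = b := fun p hp =>
      le_antisymm (hvalid p (intHull_subset hconv hp)) (hcon p hp)
    obtain ⟨q₀, hq₀i⟩ := hint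
    have hq₀P : q₀ ∈ P := interior_subset hq₀i
    have hq₀b : l q₀ < b := by
      rcases lt_or_eq_of_le (hvalid q₀ hq₀P) with hlt | heq
      · exact hlt
      · exfalso
        obtain ⟨r, hr, hballq⟩ := Metric.isOpen_iff.1 isOpen_interior q₀ hq₀i
        set t := r / (2 * (‖u‖ + 1)) with ht
        have ht0 : 0 < t := by rw [ht]; positivity
        have h2 : t * (2 * (‖u‖ + 1)) = r := div_mul_cancel₀ r (by positivity)
        have htu : ‖t • u‖ < r := by
          rw [norm_smul, Real.norm_eq_abs, abs_of_pos ht0]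
          nlinarith [norm_nonneg u]
        have hmemP : q₀ + t • u ∈ P := by
          apply interior_subset
          apply hballq
          rw [Metric.mem_ball, dist_eq_norm, add_sub_cancel_left]
          exact htu
        have hv := hvalid _ hmemP
        rw [map_add, map_smul, hu, smul_eq_mul, mul_one, heq] at hv
        linarith
    have hub : u ≠ 0 := fun h0 => by rw [h0] at hu; simp at hu
    have hun : 0 < ‖u‖ := norm_pos_iff.2 hub
    obtain ⟨R, hR⟩ := (V.finite_toSet.isCompact_convexHull ℝ).isBounded.subset_closedBall 0
    have hRP : P ⊆ Metric.closedBall 0 R := by rw [hV]; exact hR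
    have hR0 : ‖q₀‖ ≤ R := by simpa [Metric.mem_closedBall, dist_zero_right] using hRP hq₀P
    set M := (R + ‖q₀‖ + 1) / ‖u‖ with hM
    have hM0 : 0 < M := by
      rw [hM]
      apply div_pos _ hun
      have := norm_nonneg q₀
      linarith
    set y₂ := q₀ - M • u with hy₂
    have hy₂P : y₂ ∉ P := by
      intro hmem
      have h1 : ‖y₂‖ ≤ R := by simpa [Metric.mem_closedBall, dist_zero_right] using hRP hmem
      have h2 : ‖M • u‖ ≤ ‖q₀‖ + ‖y₂‖ := by
        have he : M • u = q₀ - y₂ := by rw [hy₂]; abel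
        rw [he]
        exact norm_sub_le _ _
      rw [norm_smul, Real.norm_eq_abs, abs_of_pos hM0] at h2
      have h3 : M * ‖u‖ = R + ‖q₀‖ + 1 := by rw [hM]; exact div_mul_cancel₀ _ (ne_of_gt hun)
      linarith
    rw [hV] at hy₂P
    obtain ⟨l₂, b₂, hvalid₂, hbl₂, hfacet₂⟩ := facet_sep hd V hPspan hy₂P
    rw [← hV] at hvalid₂ hfacet₂
    obtain ⟨_, hdim₂, z₂, hz₂rel, hz₂int⟩ := hPsb _ hfacet₂
    set F₂ := {y | y ∈ P ∧ l₂ y = b₂} with hF₂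
    set FI₂ := intHull F₂ with hFI₂
    have hFI₂F₂ : FI₂ ⊆ F₂ := intHull_subset
      (hconv.inter (convex_hyperplane (IsLinearMap.mk l₂.map_add l₂.map_smul) b₂))
    have hFI₂P : FI₂ ⊆ intHull P :=
      convexHull_mono (Set.inter_subset_inter (fun y hy => hy.1) (le_refl _))
    have hFI₂H : ∀ y ∈ FI₂, l y = b := fun y hy => hPIH y (hFI₂P hy)
    have hFI₂H₂ : ∀ y ∈ FI₂, l₂ y = b₂ := fun y hy => (hFI₂F₂ hy).2
    have hz₂ : z₂ ∈ FI₂ := intrinsicInterior_subset hz₂rel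
    obtain ⟨v₂, hv₂⟩ := hfacet₂.2.1
    have hv₂b : l₂ v₂ = b₂ := hv₂.2
    set u₂ := (l₂ y₂ - b₂)⁻¹ • (y₂ - v₂) with hu₂def
    have hne₂ : l₂ y₂ - b₂ ≠ 0 := ne_of_gt (by linarith)
    have hu₂ : l₂ u₂ = 1 := by
      rw [hu₂def]
      simp only [map_smul, map_sub, smul_eq_mul, hv₂b]
      field_simp
    have hiff₁ := span_iff_hyper l b hu FI₂ hFI₂H hdim₂ hz₂
    have hiff₂ := span_iff_hyper l₂ b₂ hu₂ FI₂ hFI₂H₂ hdim₂ hz₂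
    have hset : ∀ w, l w = b ↔ l₂ w = b₂ := fun w =>
      ⟨fun hw => (hiff₂ w).1 ((hiff₁ w).2 hw), fun hw => (hiff₁ w).1 ((hiff₂ w).2 hw)⟩
    have hkey : ∀ w, l₂ w - b₂ = l₂ u * (l w - b) := by
      intro w
      have h1 : l (w - (l w - b) • u) = b := by
        rw [map_sub, map_smul, hu, smul_eq_mul, mul_one]
        ring
      have h2 : l₂ (w - (l w - b) • u) = b₂ := (hset _).1 h1
      rw [map_sub, map_smul, smul_eq_mul] at h2
      linarith
    have ht1 := hkey q₀
    have ht2 := hkey y₂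
    have hly₂ : l y₂ = l q₀ - M := by
      rw [hy₂, map_sub, map_smul, hu, smul_eq_mul, mul_one]
    have hv₂q := hvalid₂ q₀ hq₀P
    have ht1' : 0 ≤ l₂ u := by nlinarith
    have ht2' : l₂ u < 0 := by nlinarith
    linarith
  obtain ⟨p, hpPI, hpb⟩ := hex_p
  obtain ⟨δ₁, hδ₁, hcap₁⟩ := near_cap l b FI hzb hε hball hblx
  have hzb' : (-l) z = -b := by simp [hzb]
  have hball' : ∀ y, (-l) y = -b → ‖y - z‖ < ε → y ∈ FI := by
    intro y hy hnorm
    apply hball y _ hnorm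
    have h1 : -(l y) = -b := by simpa using hy
    linarith
  have hpb' : -b < (-l) p := by
    have : -b < -(l p) := by linarith
    simpa using this
  obtain ⟨δ₂, hδ₂, hcap₂⟩ := near_cap (-l) (-b) FI hzb' hε hball' hpb'
  have hzmem : z ∈ interior (convexHull ℝ (insert x (intHull P))) := by
    rw [mem_interior]
    refine ⟨Metric.ball z (min δ₁ δ₂), ?_, Metric.isOpen_ball, Metric.mem_ball_self (lt_min hδ₁ hδ₂)⟩
    intro y hy
    rw [Metric.mem_ball, dist_eq_norm] at hy
    rcases le_total b (l y) with hc | hc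
    · have h1 := hcap₁ y hc (lt_of_lt_of_le hy (min_le_left _ _))
      exact convexHull_mono (Set.insert_subset_insert hFIPI) h1
    · have h1 : (-b : ℝ) ≤ (-l) y := by
        have : -b ≤ -(l y) := by linarith
        simpa using this
      have h2 := hcap₂ y h1 (lt_of_lt_of_le hy (min_le_right _ _))
      refine convexHull_mono ?_ h2
      apply Set.insert_subset
      · exact Set.mem_insert_of_mem _ hpPI
      · exact fun w hw => Set.mem_insert_of_mem _ (hFIPI hw)
  have hxg : interior (convexHull ℝ (insert x (intHull P))) ∩ latticePts d = ∅ := hx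
  rw [Set.eq_empty_iff_forall_notMem] at hxg
  exact hxg z ⟨hzmem, hzint⟩

noncomputable def affineHomeo {d : ℕ} (A : (Fin d → ℝ) ≃ᵃ[ℝ] (Fin d → ℝ)) :
    (Fin d → ℝ) ≃ₜ (Fin d → ℝ) :=
  { A.toEquiv with
    continuous_toFun := A.toAffineMap.continuous_of_finiteDimensional
    continuous_invFun := A.symm.toAffineMap.continuous_of_finiteDimensional }

lemma goodRegion_image {d : ℕ} (A : (Fin d → ℝ) ≃ᵃ[ℝ] (Fin d → ℝ)) (hA : IsUnimodular A)
    (R : Set (Fin d → ℝ)) : goodRegion (⇑A '' R) = ⇑A '' goodRegion R := by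
  have hAc : ∀ s : Set (Fin d → ℝ), convexHull ℝ (⇑A '' s) = ⇑A '' convexHull ℝ s := by
    intro s
    have h1 := A.toAffineMap.image_convexHull s
    simpa using h1.symm
  have hAi : ∀ s : Set (Fin d → ℝ), interior (⇑A '' s) = ⇑A '' interior s := by
    intro s
    have h1 := (affineHomeo A).image_interior s
    exact h1.symm
  have hAinj : Function.Injective (⇑A) := A.toEquiv.injective
  have key : ∀ x : Fin d → ℝ, A x ∈ goodRegion (⇑A '' R) ↔ x ∈ goodRegion R := by
    intro x
    show interior (convexHull ℝ (insert (A x) (⇑A '' R))) ∩ latticePts d = ∅ ↔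
      interior (convexHull ℝ (insert x R)) ∩ latticePts d = ∅
    rw [← Set.image_insert_eq, hAc, hAi]
    have hL : ⇑A '' latticePts d = latticePts d := hA
    conv_lhs => rw [← hL]
    rw [← Set.image_inter hAinj, Set.image_eq_empty]
  ext w
  constructor
  · intro hw
    obtain ⟨x, rfl⟩ := A.toEquiv.surjective w
    exact ⟨x, (key x).1 hw, rfl⟩
  · rintro ⟨x, hxg, rfl⟩
    exact (key x).2 hxg

end Statement9Aux


/-- if `P, Q` are strongly blocked lattice-free polytopes in `ℝ^d` with
`Q_I = A (P_I)` for a unimodular affine transformation `A`, then `Q = A (P)`. -/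
theorem statement9 {d : ℕ} (P Q : Set (Fin d → ℝ))
    (hPpoly : IsPolytope P) (hPlf : IsLatticeFree P) (hPsb : IsStronglyBlocked P)
    (hQpoly : IsPolytope Q) (hQlf : IsLatticeFree Q) (hQsb : IsStronglyBlocked Q)
    (A : (Fin d → ℝ) ≃ᵃ[ℝ] (Fin d → ℝ)) (hA : IsUnimodular A)
    (h : intHull Q = A '' intHull P) :
    Q = A '' P := by
  have hPI_P : intHull P ⊆ P := Statement9Aux.intHull_subset hPlf.2.1
  have hQI_Q : intHull Q ⊆ Q := Statement9Aux.intHull_subset hQlf.2.1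
  have hPgood : P ⊆ Statement9Aux.goodRegion (intHull P) :=
    Statement9Aux.subset_good hPlf.2.1 hPlf.2.2.2 hPI_P
  have hQgood : Q ⊆ Statement9Aux.goodRegion (intHull Q) :=
    Statement9Aux.subset_good hQlf.2.1 hQlf.2.2.2 hQI_Q
  have hPgood' := Statement9Aux.good_subset hPpoly hPlf hPsb
  have hQgood' := Statement9Aux.good_subset hQpoly hQlf hQsb
  have himg : Statement9Aux.goodRegion (intHull Q) = ⇑A '' Statement9Aux.goodRegion (intHull P) := by
    rw [h]
    exact Statement9Aux.goodRegion_image A hA _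
  apply Set.Subset.antisymm
  · calc Q ⊆ Statement9Aux.goodRegion (intHull Q) := hQgood
    _ = ⇑A '' Statement9Aux.goodRegion (intHull P) := himg
    _ ⊆ ⇑A '' P := Set.image_mono hPgood'
  · calc ⇑A '' P ⊆ ⇑A '' Statement9Aux.goodRegion (intHull P) := Set.image_mono hPgood
    _ = Statement9Aux.goodRegion (intHull Q) := himg.symm
    _ ⊆ Q := hQgood'
end

section
/- Let Q and Q' be d-dimensional strongly blocked lattice-free polytopes in ℝ^d with equal integer hulls, Q_I = Q'_I. Then Q = Q'; that is, a strongly blocked lattice-free polytope is uniquely determined by its integer hull. -/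
open scoped BigOperators

namespace SB10
open Module
open scoped Classical

variable {d : ℕ}

/-- The linear functional `y ↦ ∑ i, c i * y i`. -/
noncomputable def fc (c : Fin d → ℝ) : (Fin d → ℝ) →ₗ[ℝ] ℝ := ∑ i, c i • LinearMap.proj i

lemma fc_apply (c y : Fin d → ℝ) : fc c y = ∑ i, c i * y i := by
  simp [fc, LinearMap.sum_apply]

lemma fc_single (c : Fin d → ℝ) (i : Fin d) : fc c ((Pi.single i 1 : Fin d → ℝ)) = c i := by
  rw [fc_apply]
  rw [Finset.sum_eq_single i]
  · simp
  · intro j _ hj; simp [Pi.single_apply, Ne.symm hj]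
  · simp

lemma fc_repr (g : (Fin d → ℝ) →ₗ[ℝ] ℝ) (y : Fin d → ℝ) :
    g y = fc (fun i => g (Pi.single i 1 : Fin d → ℝ)) y := by
  rw [fc_apply]
  conv_lhs => rw [show y = ∑ i, y i • (Pi.single i 1 : Fin d → ℝ) by
    ext j
    rw [Finset.sum_apply]
    simp [Pi.single_apply]]
  rw [map_sum]
  exact Finset.sum_congr rfl fun i _ => by rw [map_smul]; simp [mul_comm]

lemma fc_eq_zero (c : Fin d → ℝ) (h : ∀ y, fc c y = 0) : c = 0 := by
  funext i
  have := h (Pi.single i 1 : Fin d → ℝ)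
  rw [fc_single] at this
  simpa using this

lemma fc_add_smul (c u y : Fin d → ℝ) (t : ℝ) :
    fc (c + t • u) y = fc c y + t * fc u y := by
  simp only [fc_apply, Finset.mul_sum, ← Finset.sum_add_distrib]
  exact Finset.sum_congr rfl fun i _ => by simp [Pi.add_apply, Pi.smul_apply]; ring

lemma fc_abs_le (c v : Fin d → ℝ) : |fc c v| ≤ (∑ i, |c i|) * ‖v‖ := by
  rw [fc_apply, Finset.sum_mul]
  refine (Finset.abs_sum_le_sum_abs _ _).trans (Finset.sum_le_sum fun i _ => ?_)
  rw [abs_mul]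
  have : |v i| ≤ ‖v‖ := by
    simpa [Real.norm_eq_abs] using norm_le_pi_norm v i
  exact mul_le_mul_of_nonneg_left this (abs_nonneg _)

lemma finrank_ker_fc {c : Fin d → ℝ} (hc : c ≠ 0) :
    finrank ℝ (LinearMap.ker (fc c)) + 1 = d := by
  have hr : LinearMap.range (fc c) = ⊤ := by
    obtain ⟨i, hi⟩ : ∃ i, c i ≠ 0 := by
      by_contra h; push_neg at h; exact hc (funext h)
    rw [LinearMap.range_eq_top]
    intro t
    refine ⟨(t / c i) • (Pi.single i 1 : Fin d → ℝ), ?_⟩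
    rw [map_smul, fc_single, smul_eq_mul]; field_simp
  have h2 := LinearMap.finrank_range_add_finrank_ker (fc c)
  rw [hr] at h2
  have h3 : finrank ℝ (⊤ : Submodule ℝ ℝ) = 1 := by simp
  have h4 : finrank ℝ (Fin d → ℝ) = d := by simp [Module.finrank_pi]
  omega

lemma vectorSpan_le_ker {S : Set (Fin d → ℝ)} {c : Fin d → ℝ} {b : ℝ}
    (hS : ∀ s ∈ S, fc c s = b) : vectorSpan ℝ S ≤ LinearMap.ker (fc c) := by
  rw [vectorSpan_def, Submodule.span_le]
  rintro w ⟨p, hp, q, hq, rfl⟩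
  simp only [SetLike.mem_coe, LinearMap.mem_ker, vsub_eq_sub, map_sub, hS p hp, hS q hq, sub_self]

lemma vectorSpan_eq_ker {S : Set (Fin d → ℝ)} {c : Fin d → ℝ} {b : ℝ}
    (hc : c ≠ 0) (hS : ∀ s ∈ S, fc c s = b)
    (hdim : finrank ℝ (vectorSpan ℝ S) + 1 = d) :
    vectorSpan ℝ S = LinearMap.ker (fc c) := by
  refine Submodule.eq_of_le_of_finrank_le (vectorSpan_le_ker hS) ?_
  have := finrank_ker_fc hc
  omega

lemma fc_proportional {c₁ c₂ : Fin d → ℝ} (hc₁ : c₁ ≠ 0) (hc₂ : c₂ ≠ 0)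
    (h : LinearMap.ker (fc c₁) = LinearMap.ker (fc c₂)) :
    ∃ l : ℝ, l ≠ 0 ∧ ∀ y, fc c₂ y = l * fc c₁ y := by
  obtain ⟨v₀, hv₀⟩ : ∃ v₀, fc c₁ v₀ ≠ 0 := by
    by_contra hv; push_neg at hv; exact hc₁ (fc_eq_zero c₁ hv)
  have key : ∀ y, fc c₂ y = (fc c₂ v₀ / fc c₁ v₀) * fc c₁ y := by
    intro y
    have hky : y - (fc c₁ y / fc c₁ v₀) • v₀ ∈ LinearMap.ker (fc c₁) := by
      simp only [LinearMap.mem_ker, map_sub, map_smul, smul_eq_mul]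
      field_simp; ring
    rw [h] at hky
    have h5 := LinearMap.mem_ker.1 hky
    rw [map_sub, map_smul, sub_eq_zero, smul_eq_mul] at h5
    rw [h5]; field_simp
  refine ⟨fc c₂ v₀ / fc c₁ v₀, ?_, key⟩
  intro h0
  apply hc₂
  apply fc_eq_zero
  intro y
  rw [key y, h0, zero_mul]


lemma hull_le_sup' {V : Finset (Fin d → ℝ)} (hV : V.Nonempty) (c : Fin d → ℝ)
    {y : Fin d → ℝ} (hy : y ∈ convexHull ℝ (V : Set (Fin d → ℝ))) :
    fc c y ≤ V.sup' hV (fun v => fc c v) := by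
  have hsub : (V : Set (Fin d → ℝ)) ⊆ {w | fc c w ≤ V.sup' hV (fun v => fc c v)} := by
    intro v hv; exact Finset.le_sup' (fun v => fc c v) hv
  have hconv : Convex ℝ {w | fc c w ≤ V.sup' hV (fun v => fc c v)} :=
    convex_halfSpace_le (fc c).isLinear _
  exact convexHull_min hsub hconv hy

lemma vectorSpan_top_of_interior {Q : Set (Fin d → ℝ)} (h : (interior Q).Nonempty) :
    vectorSpan ℝ Q = ⊤ := by
  obtain ⟨p, hp⟩ := h
  obtain ⟨ε, hε, hball⟩ := Metric.isOpen_iff.1 isOpen_interior p hp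
  rw [eq_top_iff]
  intro y _
  have hy : y = ∑ i, y i • (Pi.single i 1 : Fin d → ℝ) := by
    ext j; rw [Finset.sum_apply]; simp [Pi.single_apply]
  rw [hy]
  refine Submodule.sum_mem _ fun i _ => Submodule.smul_mem _ _ ?_
  have h1 : p + (ε/2) • (Pi.single i 1 : Fin d → ℝ) ∈ Q := by
    apply interior_subset
    apply hball
    rw [Metric.mem_ball, dist_eq_norm, add_sub_cancel_left, norm_smul]
    have : ‖(Pi.single i 1 : Fin d → ℝ)‖ ≤ 1 := by
      apply pi_norm_le_iff_of_nonneg (by norm_num) |>.2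
      intro j
      rcases eq_or_ne i j with rfl | hj
      · simp
      · simp [Pi.single_apply, Ne.symm hj]
    calc ‖(ε/2 : ℝ)‖ * ‖(Pi.single i 1 : Fin d → ℝ)‖ ≤ ‖(ε/2 : ℝ)‖ * 1 :=
          mul_le_mul_of_nonneg_left this (norm_nonneg _)
      _ < ε := by rw [mul_one, Real.norm_eq_abs, abs_of_pos (by linarith)]; linarith
  have h2 : (p + (ε/2) • (Pi.single i 1 : Fin d → ℝ)) -ᵥ p ∈ vectorSpan ℝ Q :=
    vsub_mem_vectorSpan ℝ h1 (interior_subset hp)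
  have h3 : (ε/2) • (Pi.single i 1 : Fin d → ℝ) ∈ vectorSpan ℝ Q := by
    simpa [vsub_eq_sub] using h2
  have := Submodule.smul_mem (vectorSpan ℝ Q) (2/ε) h3
  rw [smul_smul] at this
  have hne : (2/ε) * (ε/2) = 1 := by field_simp
  rwa [hne, one_smul] at this

lemma fc_vanish_of_const {V : Finset (Fin d → ℝ)} {c : Fin d → ℝ}
    (hfull : vectorSpan ℝ (V : Set (Fin d → ℝ)) = ⊤)
    (h : ∀ v ∈ V, ∀ w ∈ V, fc c v = fc c w) : ∀ y, fc c y = 0 := by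
  intro y
  have hy : y ∈ vectorSpan ℝ (V : Set (Fin d → ℝ)) := by rw [hfull]; trivial
  rw [vectorSpan_def] at hy
  have hker : Submodule.span ℝ ((V : Set (Fin d → ℝ)) -ᵥ (V : Set (Fin d → ℝ))) ≤
      LinearMap.ker (fc c) := by
    rw [Submodule.span_le]
    rintro w ⟨p, hp, q, hq, rfl⟩
    simp only [SetLike.mem_coe, LinearMap.mem_ker, vsub_eq_sub, map_sub]
    rw [h p hp q hq, sub_self]
  exact hker hy

lemma intrinsic_ball {S : Set (Fin d → ℝ)} {z : Fin d → ℝ}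
    (hz : z ∈ intrinsicInterior ℝ S) :
    ∃ ε > 0, ∀ w, w ∈ affineSpan ℝ S → ‖w - z‖ < ε → w ∈ S := by
  obtain ⟨z', hz', hzz⟩ := mem_intrinsicInterior.1 hz
  have hnhds := mem_interior_iff_mem_nhds.1 hz'
  rw [Metric.mem_nhds_iff] at hnhds
  obtain ⟨ε, hε, hball⟩ := hnhds
  refine ⟨ε, hε, fun w hw hlt => ?_⟩
  have : (⟨w, hw⟩ : affineSpan ℝ S) ∈ Metric.ball z' ε := by
    rw [Metric.mem_ball, Subtype.dist_eq, dist_eq_norm, hzz]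
    exact hlt
  exact hball this

lemma core_seg {Q S : Set (Fin d → ℝ)} {c : Fin d → ℝ} {b : ℝ} {z u v : Fin d → ℝ} {ε : ℝ}
    (hQc : Convex ℝ Q) (hSQ : S ⊆ Q) (hu : u ∈ Q) (hzS : z ∈ S)
    (hball : ∀ w, w ∈ affineSpan ℝ S → ‖w - z‖ < ε → w ∈ S)
    (hker : LinearMap.ker (fc c) ≤ vectorSpan ℝ S)
    (hfz : fc c z = b)
    (hg : fc c u ≠ b)
    (ht0 : 0 ≤ fc c v / (fc c u - b)) (ht2 : fc c v / (fc c u - b) ≤ 1/2)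
    (hnorm : 2*(‖v‖ + (fc c v / (fc c u - b)) * ‖u - z‖) < ε) :
    z + v ∈ Q := by
  set t : ℝ := fc c v / (fc c u - b) with htdef
  have hgne : fc c u - b ≠ 0 := sub_ne_zero.2 hg
  have h1t : (1 : ℝ) - t ≠ 0 := by
    intro h; rw [sub_eq_zero] at h; rw [← h] at ht2; norm_num at ht2
  set p' : Fin d → ℝ := v - t • (u - z) with hp'def
  set p : Fin d → ℝ := z + (1 - t)⁻¹ • p' with hpdef
  have hfp : fc c (p - z) = 0 := by
    have : fc c p' = 0 := by
      rw [hp'def, map_sub, map_smul, map_sub, hfz, smul_eq_mul, htdef]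
      field_simp; ring
    rw [hpdef, add_sub_cancel_left, map_smul, this, smul_eq_mul, mul_zero]
  have hpmem : p ∈ affineSpan ℝ S := by
    have hd : p - z ∈ (affineSpan ℝ S).direction := by
      rw [direction_affineSpan]
      exact hker (LinearMap.mem_ker.2 hfp)
    have := AffineSubspace.vadd_mem_of_mem_direction hd (mem_affineSpan ℝ hzS)
    simpa [vadd_eq_add, sub_add_cancel] using this
  have hnormp : ‖p - z‖ < ε := by
    rw [hpdef, add_sub_cancel_left, norm_smul]
    have h12 : (1:ℝ)/2 ≤ 1 - t := by linarith
    have hinv : ‖(1 - t)⁻¹‖ ≤ 2 := by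
      rw [Real.norm_eq_abs, abs_inv, abs_of_pos (by linarith)]
      rw [inv_le_comm₀ (by linarith) (by norm_num)]
      linarith
    have hnp' : ‖p'‖ ≤ ‖v‖ + t * ‖u - z‖ := by
      rw [hp'def]
      refine (norm_sub_le _ _).trans ?_
      rw [norm_smul, Real.norm_eq_abs, abs_of_nonneg ht0]
    calc ‖(1-t)⁻¹‖ * ‖p'‖ ≤ 2 * (‖v‖ + t * ‖u - z‖) := by
          apply mul_le_mul hinv hnp' (norm_nonneg _) (by norm_num)
      _ < ε := hnorm
  have hpS : p ∈ S := hball p hpmem hnormp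
  have hcomb : z + v = (1 - t) • p + t • u := by
    have hsm : (1 - t) • ((1 - t)⁻¹ • p') = p' := smul_inv_smul₀ h1t p'
    rw [hpdef, smul_add, hsm, hp'def]
    module
  rw [hcomb]
  exact hQc (hSQ hpS) hu (by linarith) (by
    exact ht0) (by ring)


lemma arith_bound {C g γ R B δ ε s nv nu : ℝ}
    (hC0 : 0 ≤ C) (hγ0 : 0 < γ) (hγg : γ ≤ g) (hg0 : 0 < g)
    (hR0 : 0 ≤ R) (hnuR : nu ≤ R)
    (hB : B = 1 + C*R/γ) (hε0 : 0 < ε)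
    (hδ1 : δ ≤ γ/(2*C+1)) (hδ2 : δ ≤ ε/(2*B+1)) (hδ0 : 0 < δ)
    (hs0 : 0 ≤ s) (hsC : s ≤ C*nv) (hnv : nv < δ) (hnv0 : 0 ≤ nv) :
    0 ≤ s/g ∧ s/g ≤ 1/2 ∧ 2*(nv + (s/g)*nu) < ε := by
  have hB1 : 1 ≤ B := by
    rw [hB]; have : 0 ≤ C*R/γ := by positivity
    linarith
  set t : ℝ := s / g with htdef
  have ht0 : 0 ≤ t := div_nonneg hs0 hg0.le
  have htg : t * g = s := div_mul_cancel₀ _ hg0.ne'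
  have htγ : t * γ ≤ C * δ := by
    have h1 : t * γ ≤ t * g := mul_le_mul_of_nonneg_left hγg ht0
    have h2 : s ≤ C * δ := hsC.trans (mul_le_mul_of_nonneg_left hnv.le hC0)
    linarith [htg ▸ h1]
  have h2C : δ * (2*C+1) ≤ γ := (le_div_iff₀ (by positivity)).1 hδ1
  have ht12 : t ≤ 1/2 := by
    nlinarith [mul_le_mul_of_nonneg_left h2C ht0, hδ0, ht0]
  have h2B : δ * (2*B+1) ≤ ε := (le_div_iff₀ (by linarith)).1 hδ2
  have hBγ : B * γ = γ + C * R := by rw [hB]; field_simp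
  refine ⟨ht0, ht12, ?_⟩
  have k1 : t*nu*γ ≤ t*R*γ :=
    mul_le_mul_of_nonneg_right (mul_le_mul_of_nonneg_left hnuR ht0) hγ0.le
  have k3 : t*γ*R ≤ C*δ*R := mul_le_mul_of_nonneg_right htγ hR0
  have k4 : C*δ*R = δ*(B*γ) - δ*γ := by rw [hBγ]; ring
  have k5 : nv*γ < δ*γ := mul_lt_mul_of_pos_right hnv hγ0
  have k6 : δ*(2*B+1)*γ ≤ ε*γ := mul_le_mul_of_nonneg_right h2B hγ0.le
  have kfin : 2*(nv + t*nu)*γ < ε*γ := by nlinarith [k1, k3, k4, k5, k6, mul_pos hδ0 hγ0]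
  exact lt_of_mul_lt_mul_right kfin hγ0.le

lemma mem_interior_aux {Q S : Set (Fin d → ℝ)} {c : Fin d → ℝ} {b : ℝ} {z x y : Fin d → ℝ}
    (hQc : Convex ℝ Q) (hSQ : S ⊆ Q)
    (hSp : ∀ s ∈ S, fc c s = b)
    (hker : LinearMap.ker (fc c) ≤ vectorSpan ℝ S)
    (hz : z ∈ intrinsicInterior ℝ S)
    (hx : x ∈ Q) (hy : y ∈ Q) (hxb : b < fc c x) (hyb : fc c y < b) :
    z ∈ interior Q := by
  have hzS : z ∈ S := intrinsicInterior_subset hz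
  have hfz : fc c z = b := hSp z hzS
  obtain ⟨ε, hε, hball⟩ := intrinsic_ball hz
  set C : ℝ := ∑ i, |c i| with hCdef
  have hC0 : 0 ≤ C := Finset.sum_nonneg fun i _ => abs_nonneg _
  have hγ₁0 : 0 < fc c x - b := by linarith
  have hγ₂0 : 0 < b - fc c y := by linarith
  set γ : ℝ := min (fc c x - b) (b - fc c y) with hγdef
  have hγ0 : 0 < γ := lt_min hγ₁0 hγ₂0
  set R : ℝ := max ‖x - z‖ ‖y - z‖ with hRdef
  have hR0 : 0 ≤ R := le_trans (norm_nonneg _) (le_max_left _ _)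
  set B : ℝ := 1 + C * R / γ with hBdef
  set δ : ℝ := min (γ / (2*C+1)) (ε / (2*B+1)) with hδdef
  have hB1 : 1 ≤ B := by
    rw [hBdef]; have : 0 ≤ C * R / γ := by positivity
    linarith
  have hδ0 : 0 < δ := lt_min (by positivity) (by positivity)
  have hδ1 : δ ≤ γ / (2*C+1) := min_le_left _ _
  have hδ2 : δ ≤ ε / (2*B+1) := min_le_right _ _
  clear_value C γ R B δ
  have hkey : Metric.ball z δ ⊆ Q := by
    intro w hw
    rw [Metric.mem_ball, dist_eq_norm] at hw
    have hwzv : w = z + (w - z) := by ring_nf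
    set v : Fin d → ℝ := w - z with hvdef
    clear_value v
    have hvn : ‖v‖ < δ := hw
    have hvn0 : 0 ≤ ‖v‖ := norm_nonneg v
    have habs : |fc c v| ≤ C * ‖v‖ := hCdef ▸ fc_abs_le c v
    rw [hwzv]
    rcases le_or_gt 0 (fc c v) with hs | hs
    · -- use u = x
      obtain ⟨p1, p2, p3⟩ := arith_bound (g := fc c x - b) (nu := ‖x - z‖) hC0 hγ0
        (by rw [hγdef]; exact min_le_left _ _) hγ₁0 hR0 (by rw [hRdef]; exact le_max_left _ _) hBdef hε hδ1 hδ2 hδ0 hs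
        (abs_le.1 habs).2 hvn hvn0
      exact core_seg hQc hSQ hx hzS hball hker hfz (by linarith) p1 p2 p3
    · -- use u = y
      have hrw : fc c v / (fc c y - b) = (- fc c v) / (b - fc c y) := by
        rw [show fc c y - b = -(b - fc c y) by ring, div_neg, neg_div]
      obtain ⟨p1, p2, p3⟩ := arith_bound (g := b - fc c y) (nu := ‖y - z‖) hC0 hγ0
        (by rw [hγdef]; exact min_le_right _ _) hγ₂0 hR0 (by rw [hRdef]; exact le_max_right _ _) hBdef hε hδ1 hδ2 hδ0
        (by linarith : (0:ℝ) ≤ - fc c v)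
        (by have := (abs_le.1 habs).1; linarith) hvn hvn0
      rw [← hrw] at p1 p2 p3
      exact core_seg hQc hSQ hy hzS hball hker hfz (by linarith) p1 p2 p3
  exact mem_interior.2 ⟨Metric.ball z δ, hkey, Metric.isOpen_ball, Metric.mem_ball_self hδ0⟩


lemma climb {V : Finset (Fin d → ℝ)} (hV : V.Nonempty)
    (hfull : vectorSpan ℝ (V : Set (Fin d → ℝ)) = ⊤) (x : Fin d → ℝ) :
    ∀ (n : ℕ) (c : Fin d → ℝ),
      V.card ≤ n + (V.filter (fun v => fc c v = V.sup' hV (fun v => fc c v))).card →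
      V.sup' hV (fun v => fc c v) < fc c x →
      ∃ c', V.sup' hV (fun v => fc c' v) < fc c' x ∧
        vectorSpan ℝ (insert x {y ∈ convexHull ℝ (V : Set (Fin d → ℝ)) |
          fc c' y = V.sup' hV (fun v => fc c' v)}) = ⊤ := by
  intro n
  induction n with
  | zero =>
    intro c hcard hlt
    exfalso
    have hfil : V.filter (fun v => fc c v = V.sup' hV (fun v => fc c v)) = V :=
      Finset.eq_of_subset_of_card_le (Finset.filter_subset _ _) (by omega)
    have hallm : ∀ v ∈ V, fc c v = V.sup' hV (fun v => fc c v) := by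
      intro v hv
      rw [← hfil] at hv
      exact (Finset.mem_filter.1 hv).2
    have hzero : ∀ y, fc c y = 0 :=
      fc_vanish_of_const hfull (fun v hv w hw => by rw [hallm v hv, hallm w hw])
    obtain ⟨v₁, hv₁, hv₁m⟩ := Finset.exists_mem_eq_sup' hV (fun v => fc c v)
    rw [hzero x, hv₁m, hzero v₁] at hlt
    exact lt_irrefl _ hlt
  | succ n ih =>
    intro c hcard hlt
    by_cases hW : vectorSpan ℝ (insert x {y ∈ convexHull ℝ (V : Set (Fin d → ℝ)) |
        fc c y = V.sup' hV (fun v => fc c v)}) = ⊤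
    · exact ⟨c, hlt, hW⟩
    · set m : ℝ := V.sup' hV (fun v => fc c v) with hm
      set Fc : Set (Fin d → ℝ) := {y ∈ convexHull ℝ (V : Set (Fin d → ℝ)) | fc c y = m}
        with hFc
      obtain ⟨φ, hφ0, hφmap⟩ :=
        Submodule.exists_dual_map_eq_bot_of_lt_top (lt_top_iff_ne_top.2 hW) inferInstance
      have hφW : ∀ w ∈ vectorSpan ℝ (insert x Fc), φ w = 0 := by
        intro w hw
        have h1 : φ w ∈ Submodule.map φ (vectorSpan ℝ (insert x Fc)) :=
          Submodule.mem_map_of_mem hw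
        rw [hφmap] at h1
        simpa using h1
      have hconst : ∀ p ∈ Fc, φ p = φ x := by
        intro p hp
        have h2 := hφW (x - p)
          (by simpa [vsub_eq_sub] using
            vsub_mem_vectorSpan ℝ (Set.mem_insert x Fc) (Set.mem_insert_of_mem x hp))
        rw [map_sub, sub_eq_zero] at h2
        exact h2.symm
      -- φ is not constant on V
      have hnc : ∃ v₀ ∈ V, φ v₀ ≠ φ x := by
        by_contra hcon
        push_neg at hcon
        apply hφ0
        have hvan : ∀ y, fc (fun i => φ (Pi.single i 1 : Fin d → ℝ)) y = 0 :=
          fc_vanish_of_const hfull (fun v hv w hw => by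
            rw [← fc_repr, ← fc_repr, hcon v hv, hcon w hw])
        refine LinearMap.ext fun y => ?_
        rw [fc_repr φ y, hvan y]
        simp
      obtain ⟨v₀, hv₀V, hv₀⟩ := hnc
      -- WLOG φ x < φ v₀ by replacing φ with -φ
      obtain ⟨ψ, hψc, v₁, hv₁V, hv₁⟩ :
          ∃ ψ : Module.Dual ℝ (Fin d → ℝ), (∀ p ∈ Fc, ψ p = ψ x) ∧
            ∃ v ∈ V, ψ x < ψ v := by
        rcases lt_or_gt_of_ne hv₀ with h | h
        · exact ⟨-φ, fun p hp => by simp [hconst p hp], v₀, hv₀V, by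
            simpa using neg_lt_neg h⟩
        · exact ⟨φ, hconst, v₀, hv₀V, h⟩
      set β : ℝ := ψ x with hβ
      set T : Finset (Fin d → ℝ) := V.filter (fun v => β < ψ v) with hT
      have hTne : T.Nonempty := ⟨v₁, Finset.mem_filter.2 ⟨hv₁V, hv₁⟩⟩
      have hTsub : ∀ v ∈ T, v ∈ V := fun v hv => (Finset.mem_filter.1 hv).1
      have hTβ : ∀ v ∈ T, β < ψ v := fun v hv => (Finset.mem_filter.1 hv).2
      have hTlt : ∀ v ∈ T, fc c v < m := by
        intro v hv
        rcases lt_or_eq_of_le (Finset.le_sup' (fun v => fc c v) (hTsub v hv)) with h | h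
        · exact h
        · exfalso
          have hvF : v ∈ Fc := ⟨subset_convexHull ℝ _ (hTsub v hv), h⟩
          exact absurd (hψc v hvF) (ne_of_gt (hTβ v hv))
      set t : ℝ := T.inf' hTne (fun v => (m - fc c v) / (ψ v - β)) with ht
      have ht0 : 0 < t := by
        rw [ht, Finset.lt_inf'_iff]
        intro v hv
        exact div_pos (by linarith [hTlt v hv]) (by linarith [hTβ v hv])
      set u : Fin d → ℝ := fun i => ψ (Pi.single i 1 : Fin d → ℝ) with hu
      have huψ : ∀ y, fc u y = ψ y := fun y => (fc_repr ψ y).symm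
      set c' : Fin d → ℝ := c + t • u with hc'
      have hfc' : ∀ y, fc c' y = fc c y + t * ψ y := fun y => by
        rw [hc', fc_add_smul, huψ]
      -- upper bound for the new functional on V
      have hub : ∀ v ∈ V, fc c' v ≤ m + t * β := by
        intro v hv
        rw [hfc' v]
        by_cases hvT : v ∈ T
        · have h3 : t ≤ (m - fc c v) / (ψ v - β) := Finset.inf'_le _ hvT
          have h4 : 0 < ψ v - β := by linarith [hTβ v hvT]
          rw [le_div_iff₀ h4] at h3
          nlinarith
        · have h5 : ψ v ≤ β := by
            by_contra h6
            exact hvT (Finset.mem_filter.2 ⟨hv, by linarith⟩)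
          have h7 : fc c v ≤ m := Finset.le_sup' (fun v => fc c v) hv
          nlinarith
      obtain ⟨w₁, hw₁V, hw₁m⟩ := Finset.exists_mem_eq_sup' hV (fun v => fc c v)
      have hw₁F : w₁ ∈ Fc := ⟨subset_convexHull ℝ _ hw₁V, hw₁m.symm⟩
      have hw₁ψ : ψ w₁ = β := hψc w₁ hw₁F
      have hw₁c' : fc c' w₁ = m + t * β := by rw [hfc' w₁, ← hw₁m, hw₁ψ]
      have hm' : V.sup' hV (fun v => fc c' v) = m + t * β := by
        refine le_antisymm (Finset.sup'_le _ _ hub) ?_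
        rw [← hw₁c']
        exact Finset.le_sup' (fun v => fc c' v) hw₁V
      have hlt' : V.sup' hV (fun v => fc c' v) < fc c' x := by
        rw [hm', hfc' x, ← hβ]
        linarith
      -- the filter strictly grows
      have hsub : V.filter (fun v => fc c v = m) ⊆
          V.filter (fun v => fc c' v = V.sup' hV (fun v => fc c' v)) := by
        intro v hv
        obtain ⟨hvV, hvm⟩ := Finset.mem_filter.1 hv
        have hvF : v ∈ Fc := ⟨subset_convexHull ℝ _ hvV, hvm⟩
        refine Finset.mem_filter.2 ⟨hvV, ?_⟩
        rw [hm', hfc' v, hvm, hψc v hvF]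
      obtain ⟨vs, hvsT, hvs⟩ := Finset.exists_mem_eq_inf' hTne
        (fun v => (m - fc c v) / (ψ v - β))
      have hvsβ : 0 < ψ vs - β := by linarith [hTβ vs hvsT]
      have hvsnew : fc c' vs = V.sup' hV (fun v => fc c' v) := by
        rw [hm', hfc' vs]
        have h7 : t = (m - fc c vs) / (ψ vs - β) := ht.trans hvs
        have h8 : t * (ψ vs - β) = m - fc c vs := by
          rw [h7, div_mul_cancel₀ _ (ne_of_gt hvsβ)]
        nlinarith [h8]
      have hvsmem : vs ∈ V.filter (fun v => fc c' v = V.sup' hV (fun v => fc c' v)) :=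
        Finset.mem_filter.2 ⟨hTsub vs hvsT, hvsnew⟩
      have hvsnot : vs ∉ V.filter (fun v => fc c v = m) := by
        intro h9
        exact absurd (Finset.mem_filter.1 h9).2 (ne_of_lt (hTlt vs hvsT))
      have hcard' : (V.filter (fun v => fc c v = m)).card <
          (V.filter (fun v => fc c' v = V.sup' hV (fun v => fc c' v))).card :=
        Finset.card_lt_card ((Finset.ssubset_iff_of_subset hsub).2 ⟨vs, hvsmem, hvsnot⟩)
      exact ih c' (by omega) hlt'


lemma facet_cut {V : Finset (Fin d → ℝ)}
    (hint : (interior (convexHull ℝ (V : Set (Fin d → ℝ)))).Nonempty)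
    {x : Fin d → ℝ} (hx : x ∉ convexHull ℝ (V : Set (Fin d → ℝ))) :
    ∃ (c : Fin d → ℝ) (b : ℝ), c ≠ 0 ∧
      (∀ y ∈ convexHull ℝ (V : Set (Fin d → ℝ)), fc c y ≤ b) ∧ b < fc c x ∧
      IsFacet (convexHull ℝ (V : Set (Fin d → ℝ)))
        {y ∈ convexHull ℝ (V : Set (Fin d → ℝ)) | fc c y = b} := by
  set Q : Set (Fin d → ℝ) := convexHull ℝ (V : Set (Fin d → ℝ)) with hQ
  have hVne : V.Nonempty := by
    rcases Finset.eq_empty_or_nonempty V with rfl | h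
    · exfalso
      obtain ⟨p, hp⟩ := hint
      have := interior_subset hp
      simp [hQ] at this
    · exact h
  have hQconv : Convex ℝ Q := convex_convexHull ℝ _
  have hQclosed : IsClosed Q := (Set.Finite.isCompact_convexHull (𝕜 := ℝ) (V.finite_toSet)).isClosed
  have hfullV : vectorSpan ℝ (V : Set (Fin d → ℝ)) = ⊤ := by
    have h1 : vectorSpan ℝ Q = ⊤ := vectorSpan_top_of_interior hint
    rw [← direction_affineSpan, ← affineSpan_convexHull, direction_affineSpan, ← hQ, h1]
  obtain ⟨f, uval, hfa, hfx⟩ := geometric_hahn_banach_closed_point hQconv hQclosed hx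
  set c₀ : Fin d → ℝ := fun i => f (Pi.single i 1 : Fin d → ℝ) with hc₀
  have hfc₀ : ∀ y, fc c₀ y = f y := fun y => (fc_repr (f : (Fin d → ℝ) →ₗ[ℝ] ℝ) y).symm
  have hlt₀ : V.sup' hVne (fun v => fc c₀ v) < fc c₀ x := by
    rw [Finset.sup'_lt_iff]
    intro v hv
    rw [hfc₀, hfc₀]
    exact lt_trans (hfa v (subset_convexHull ℝ _ hv)) hfx
  obtain ⟨c, hltc, hWtop⟩ := climb hVne hfullV x V.card c₀ (Nat.le_add_right _ _) hlt₀
  set b : ℝ := V.sup' hVne (fun v => fc c v) with hb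
  obtain ⟨v₁, hv₁V, hv₁m⟩ := Finset.exists_mem_eq_sup' hVne (fun v => fc c v)
  have hv₁Q : v₁ ∈ Q := subset_convexHull ℝ _ hv₁V
  have hv₁F : v₁ ∈ {y ∈ Q | fc c y = b} := ⟨hv₁Q, hv₁m.symm⟩
  have hc0 : c ≠ 0 := by
    intro h
    have h1 : fc c x = 0 := by rw [h, fc_apply]; simp
    have h2 : fc c v₁ = 0 := by rw [h, fc_apply]; simp
    have h3 : b = 0 := hb.trans (hv₁m.trans h2)
    rw [h1, h3] at hltc
    exact lt_irrefl _ hltc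
  have hbound : ∀ y ∈ Q, fc c y ≤ b := fun y hy => hull_le_sup' hVne c hy
  refine ⟨c, b, hc0, hbound, hltc, ?_, ⟨v₁, hv₁F⟩, ?_⟩
  · -- IsExposed
    intro _
    refine ⟨LinearMap.toContinuousLinearMap (fc c), ?_⟩
    have hcoe : ∀ w, (LinearMap.toContinuousLinearMap (fc c)) w = fc c w := fun w => by
      rw [LinearMap.coe_toContinuousLinearMap']
    ext y
    simp only [Set.mem_setOf_eq, hcoe]
    constructor
    · rintro ⟨hyQ, hyb⟩
      exact ⟨hyQ, fun z hz => (hbound z hz).trans hyb.ge⟩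
    · rintro ⟨hyQ, hymax⟩
      refine ⟨hyQ, le_antisymm (hbound y hyQ) ?_⟩
      have := hymax v₁ hv₁Q
      rw [← hv₁m] at this
      exact this
  · -- finrank
    set F : Set (Fin d → ℝ) := {y ∈ Q | fc c y = b} with hF
    have hle : finrank ℝ (vectorSpan ℝ F) + 1 ≤ d := by
      have h1 := Submodule.finrank_mono
        (vectorSpan_le_ker (c := c) (b := b) (fun s (hs : s ∈ F) => hs.2))
      have h2 := finrank_ker_fc hc0
      omega
    have hge : d ≤ finrank ℝ (vectorSpan ℝ F) + 1 := by
      have hsup : vectorSpan ℝ (insert x F) ≤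
          vectorSpan ℝ F ⊔ Submodule.span ℝ {x - v₁} := by
        rw [vectorSpan_def, Submodule.span_le]
        rintro w ⟨p, hp, q, hq, rfl⟩
        simp only [vsub_eq_sub, SetLike.mem_coe]
        rcases Set.mem_insert_iff.1 hp with rfl | hpF <;>
          rcases Set.mem_insert_iff.1 hq with rfl | hqF
        · simp
        · have : p - q = (p - v₁) + (v₁ - q) := by ring
          rw [this]
          exact Submodule.add_mem _
            (Submodule.mem_sup_right (Submodule.mem_span_singleton_self _))
            (Submodule.mem_sup_left (vsub_mem_vectorSpan ℝ hv₁F hqF))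
        · have : p - q = -((q - v₁) + (v₁ - p)) := by ring
          rw [this]
          exact Submodule.neg_mem _ (Submodule.add_mem _
            (Submodule.mem_sup_right (Submodule.mem_span_singleton_self _))
            (Submodule.mem_sup_left (vsub_mem_vectorSpan ℝ hv₁F hpF)))
        · exact Submodule.mem_sup_left (vsub_mem_vectorSpan ℝ hpF hqF)
      have htop : vectorSpan ℝ F ⊔ Submodule.span ℝ {x - v₁} = ⊤ :=
        top_unique (hWtop ▸ hsup)
      have h3 : finrank ℝ (vectorSpan ℝ F ⊔ Submodule.span ℝ {x - v₁} :
          Submodule ℝ (Fin d → ℝ)) ≤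
          finrank ℝ (vectorSpan ℝ F) + finrank ℝ (Submodule.span ℝ {x - v₁}) := by
        have := Submodule.finrank_sup_add_finrank_inf_eq (vectorSpan ℝ F)
          (Submodule.span ℝ {x - v₁})
        omega
      have h4 : finrank ℝ (Submodule.span ℝ ({x - v₁} : Set (Fin d → ℝ))) ≤ 1 := by
        rcases eq_or_ne (x - v₁) 0 with h | h
        · rw [h, Submodule.span_zero_singleton]
          simp
        · rw [finrank_span_singleton h]
      have h5 : finrank ℝ (⊤ : Submodule ℝ (Fin d → ℝ)) = d := by
        rw [finrank_top]
        simp [Module.finrank_pi]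
      rw [htop] at h3
      omega
    omega


lemma main_subset {Q Q' : Set (Fin d → ℝ)}
    (hQpoly : IsPolytope Q) (hQlf : IsLatticeFree Q) (hQsb : IsStronglyBlocked Q)
    (hQ'poly : IsPolytope Q') (hQ'lf : IsLatticeFree Q') (hQ'sb : IsStronglyBlocked Q')
    (h : intHull Q = intHull Q') : Q ⊆ Q' := by
  obtain ⟨V', hQ'V⟩ := hQ'poly
  obtain ⟨VQ, hQV⟩ := hQpoly
  intro x₀ hx₀
  by_contra hx'
  rw [hQ'V] at hx'
  have hint' : (interior (convexHull ℝ (V' : Set (Fin d → ℝ)))).Nonempty := by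
    rw [← hQ'V]; exact hQ'lf.2.2.1
  obtain ⟨c, b, hc0, hbound, hcut, hfacet⟩ := facet_cut hint' hx'
  set F' : Set (Fin d → ℝ) :=
    {y ∈ convexHull ℝ (V' : Set (Fin d → ℝ)) | fc c y = b} with hF'
  obtain ⟨_, hdim, z, hzrel, hzint⟩ := hQ'sb F' (by rw [hQ'V]; exact hfacet)
  set S : Set (Fin d → ℝ) := intHull F' with hS
  have hF'conv : Convex ℝ F' := by
    have : F' = (convexHull ℝ (V' : Set (Fin d → ℝ))) ∩ {y | fc c y = b} := rfl
    rw [this]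
    exact (convex_convexHull ℝ _).inter (convex_hyperplane (fc c).isLinear b)
  have hSF' : S ⊆ F' := convexHull_min Set.inter_subset_left hF'conv
  have hSplane : ∀ s ∈ S, fc c s = b := fun s hs => (hSF' hs).2
  have hIQ'Q' : intHull Q' ⊆ Q' := convexHull_min Set.inter_subset_left hQ'lf.2.1
  have hIQQ : intHull Q ⊆ Q := convexHull_min Set.inter_subset_left hQlf.2.1
  have hSIQ' : S ⊆ intHull Q' := by
    apply convexHull_mono
    intro w hw
    exact ⟨hQ'V ▸ hw.1.1, hw.2⟩
  have hSQ : S ⊆ Q := fun s hs => hIQQ (h ▸ hSIQ' hs)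
  have hzS : z ∈ S := intrinsicInterior_subset hzrel
  have hkerS : vectorSpan ℝ S = LinearMap.ker (fc c) := vectorSpan_eq_ker hc0 hSplane hdim
  have hx₀b : b < fc c x₀ := hcut
  have hx₀Q : x₀ ∈ Q := hx₀
  by_cases hA : ∃ y ∈ Q, fc c y < b
  · obtain ⟨y, hyQ, hyb⟩ := hA
    have hz_int : z ∈ interior Q :=
      mem_interior_aux hQlf.2.1 hSQ hSplane hkerS.ge hzrel hx₀Q hyQ hx₀b hyb
    have hmem : z ∈ interior Q ∩ latticePts d := ⟨hz_int, hzint⟩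
    rw [hQlf.2.2.2] at hmem
    exact hmem
  · push_neg at hA
    have hplane : ∀ w ∈ intHull Q, fc c w = b := by
      intro w hw
      refine convexHull_min (fun u hu => ?_) (convex_hyperplane (fc c).isLinear b) hw
      have hu1 : u ∈ intHull Q' := by
        rw [← h]
        exact subset_convexHull ℝ _ hu
      have hu2 : fc c u ≤ b := hbound u (by rw [← hQ'V]; exact hIQ'Q' hu1)
      exact le_antisymm hu2 (hA u hu.1)
    have hQcomp : IsCompact Q := hQV ▸ Set.Finite.isCompact_convexHull (𝕜 := ℝ) VQ.finite_toSet
    obtain ⟨R, hR⟩ := Bornology.IsBounded.exists_norm_le hQcomp.isBounded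
    have hzQ : z ∈ Q := hSQ hzS
    have hR0 : 0 ≤ R := le_trans (norm_nonneg z) (hR z hzQ)
    set C : ℝ := ∑ i, |c i| with hC
    have hC0 : 0 ≤ C := Finset.sum_nonneg fun i _ => abs_nonneg _
    set sq : ℝ := ∑ i, c i * c i with hsq
    have hsq0 : 0 < sq := by
      obtain ⟨i, hi⟩ : ∃ i, c i ≠ 0 := by
        by_contra hcc; push_neg at hcc; exact hc0 (funext hcc)
      exact Finset.sum_pos' (fun j _ => mul_self_nonneg _)
        ⟨i, Finset.mem_univ i, mul_self_pos.2 hi⟩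
    set M : ℝ := (C * R + |b| + 1) / sq with hM
    have hMsq : M * sq = C * R + |b| + 1 := div_mul_cancel₀ _ hsq0.ne'
    set w : Fin d → ℝ := z + M • c with hw
    have hfcw : fc c w = b + M * sq := by
      rw [hw, map_add, map_smul, hSplane z hzS, smul_eq_mul, fc_apply, ← hsq]
    have hfcwb : b < fc c w := by
      rw [hfcw, hMsq]
      have h0 : 0 ≤ C * R := mul_nonneg hC0 hR0
      have h1 : 0 ≤ |b| := abs_nonneg b
      linarith
    have hwQ : w ∉ Q := by
      intro hwmem
      have h1 : |fc c w| ≤ C * ‖w‖ := fc_abs_le c w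
      have h2 : C * ‖w‖ ≤ C * R := mul_le_mul_of_nonneg_left (hR w hwmem) hC0
      have h3 : fc c w ≤ C * R := le_trans (le_abs_self _) (h1.trans h2)
      rw [hfcw, hMsq] at h3
      have h4 := neg_abs_le b
      linarith
    have hintQ : (interior (convexHull ℝ (VQ : Set (Fin d → ℝ)))).Nonempty := by
      rw [← hQV]; exact hQlf.2.2.1
    obtain ⟨cG, bG, hcG0, hboundG, hcutG, hfacetG⟩ :=
      facet_cut hintQ (show w ∉ convexHull ℝ (VQ : Set (Fin d → ℝ)) by
        rw [← hQV]; exact hwQ)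
    set G : Set (Fin d → ℝ) :=
      {y ∈ convexHull ℝ (VQ : Set (Fin d → ℝ)) | fc cG y = bG} with hG
    obtain ⟨_, hdimG, zG, hzGrel, _⟩ := hQsb G (by rw [hQV]; exact hfacetG)
    set SG : Set (Fin d → ℝ) := intHull G with hSG
    have hGconv : Convex ℝ G := by
      have hsplit : G = (convexHull ℝ (VQ : Set (Fin d → ℝ))) ∩ {y | fc cG y = bG} := rfl
      rw [hsplit]
      exact (convex_convexHull ℝ _).inter (convex_hyperplane (fc cG).isLinear bG)
    have hSGsubG : SG ⊆ G := convexHull_min Set.inter_subset_left hGconv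
    have hSGplaneG : ∀ s ∈ SG, fc cG s = bG := fun s hs => (hSGsubG hs).2
    have hSGIQ : SG ⊆ intHull Q := by
      apply convexHull_mono
      intro u hu
      exact ⟨by rw [hQV]; exact hu.1.1, hu.2⟩
    have hSGplanec : ∀ s ∈ SG, fc c s = b := fun s hs => hplane s (hSGIQ hs)
    have hzGS : zG ∈ SG := intrinsicInterior_subset hzGrel
    have hkerG : vectorSpan ℝ SG = LinearMap.ker (fc cG) :=
      vectorSpan_eq_ker hcG0 hSGplaneG hdimG
    have hkerc : vectorSpan ℝ SG = LinearMap.ker (fc c) :=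
      vectorSpan_eq_ker hc0 hSGplanec hdimG
    obtain ⟨l, hl0, hlprop⟩ := fc_proportional hc0 hcG0 (hkerc.symm.trans hkerG)
    have hbG : bG = l * b := by
      rw [← hSGplaneG zG hzGS, hlprop zG, hSGplanec zG hzGS]
    rcases lt_trichotomy l 0 with hl | hl | hl
    · have h1 : bG < fc cG w := hcutG
      rw [hlprop w, hbG] at h1
      nlinarith [hfcwb]
    · exact hl0 hl
    · have h1 : fc cG x₀ ≤ bG := hboundG x₀ (by rw [← hQV]; exact hx₀Q)
      rw [hlprop x₀, hbG] at h1
      nlinarith [hx₀b]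

end SB10

/-- a strongly blocked lattice-free polytope is uniquely determined by its
integer hull. -/
theorem statement10 {d : ℕ} (Q Q' : Set (Fin d → ℝ))
    (hQpoly : IsPolytope Q) (hQlf : IsLatticeFree Q) (hQsb : IsStronglyBlocked Q)
    (hQ'poly : IsPolytope Q') (hQ'lf : IsLatticeFree Q') (hQ'sb : IsStronglyBlocked Q')
    (h : intHull Q = intHull Q') :
    Q = Q' := by
  
  refine Set.Subset.antisymm ?_ ?_
  · exact SB10.main_subset hQpoly hQlf hQsb hQ'poly hQ'lf hQ'sb h
  · exact SB10.main_subset hQ'poly hQ'lf hQ'sb hQpoly hQlf hQsb h.symm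
end
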